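/- arXiv:2503.16966 — 5 statements merged into one kernel-verified Lean document; each statement's English description precedes it below -/
import Mathlib

section
/- Let S ⊂ ℤ² be a finite set and let Δ := convexHull_ℝ({(x,y) ∈ ℝ² : (x,y) is the image of a point of S}) be the corresponding convex lattice polygon; assume the interior of Δ in ℝ² is nonempty. Then the interior of Δ contains no point of ℤ² if and only if either (a) Δ has lattice width one, i.e. there exist a nonzero n ∈ ℤ² and c ∈ ℤ such that c ≤ n₁x + n₂y ≤ c+1 for every (x,y) ∈ Δ; or (b) Δ is twice a primitive triangle, i.e. there exist v, a, b ∈ ℤ² with |a₁b₂ − a₂b₁| = 1 such that Δ is the convex hull in ℝ² of the three points v, v+2a, v+2b. -/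
open Set

namespace NoIntLat




/-- real 2x2 determinant -/
def rdet (P Q : ℝ × ℝ) : ℝ := P.1 * Q.2 - P.2 * Q.1

lemma hull_le {A : Set (ℝ × ℝ)} {a b c : ℝ} (h : ∀ p ∈ A, a * p.1 + b * p.2 ≤ c) :
    ∀ x ∈ convexHull ℝ A, a * x.1 + b * x.2 ≤ c := by
  intro x hx
  have hconv : Convex ℝ {x : ℝ × ℝ | a * x.1 + b * x.2 ≤ c} := by
    intro u hu v hv s t hs ht hst
    simp only [Set.mem_setOf_eq] at hu hv ⊢
    have h1 : (s • u + t • v).1 = s * u.1 + t * v.1 := rfl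
    have h2 : (s • u + t • v).2 = s * u.2 + t * v.2 := rfl
    rw [h1, h2]
    have h3 := mul_le_mul_of_nonneg_left hu hs
    have h4 := mul_le_mul_of_nonneg_left hv ht
    calc a * (s * u.1 + t * v.1) + b * (s * u.2 + t * v.2)
        = s * (a * u.1 + b * u.2) + t * (a * v.1 + b * v.2) := by ring
      _ ≤ s * c + t * c := add_le_add h3 h4
      _ = c := by rw [← add_mul, hst, one_mul]
  exact convexHull_min h hconv hx

lemma hull_ge {A : Set (ℝ × ℝ)} {a b c : ℝ} (h : ∀ p ∈ A, c ≤ a * p.1 + b * p.2) :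
    ∀ x ∈ convexHull ℝ A, c ≤ a * x.1 + b * x.2 := by
  intro x hx
  have := hull_le (A := A) (a := -a) (b := -b) (c := -c) (fun p hp => by linarith [h p hp]) x hx
  linarith

lemma interior_perturb {Δ : Set (ℝ × ℝ)} {z : ℝ × ℝ} (hz : z ∈ interior Δ) (w : ℝ × ℝ) :
    ∃ ε : ℝ, 0 < ε ∧ z + ε • w ∈ Δ ∧ z - ε • w ∈ Δ := by
  rcases Metric.mem_nhds_iff.1 (mem_interior_iff_mem_nhds.1 hz) with ⟨r, hr, hball⟩
  have hw : (0:ℝ) < ‖w‖ + 1 := by positivity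
  refine ⟨r / (2 * (‖w‖ + 1)), by positivity, ?_, ?_⟩
  · apply hball
    simp only [Metric.mem_ball, dist_eq_norm, add_sub_cancel_left]
    rw [norm_smul]
    have h1 : ‖r / (2 * (‖w‖ + 1))‖ = r / (2 * (‖w‖ + 1)) := by
      rw [Real.norm_eq_abs, abs_of_pos]; positivity
    rw [h1]
    rw [div_mul_eq_mul_div, div_lt_iff₀ (by positivity)]
    nlinarith [norm_nonneg w]
  · apply hball
    simp only [Metric.mem_ball, dist_eq_norm, sub_sub_cancel_left, norm_neg]
    rw [norm_smul]
    have h1 : ‖r / (2 * (‖w‖ + 1))‖ = r / (2 * (‖w‖ + 1)) := by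
      rw [Real.norm_eq_abs, abs_of_pos]; positivity
    rw [h1]
    rw [div_mul_eq_mul_div, div_lt_iff₀ (by positivity)]
    nlinarith [norm_nonneg w]

lemma combo3_mem (A B C : ℝ × ℝ) {a b c : ℝ} (ha : 0 ≤ a) (hb : 0 ≤ b) (hc : 0 ≤ c)
    (habc : a + b + c = 1) :
    a • A + b • B + c • C ∈ convexHull ℝ ({A, B, C} : Set (ℝ × ℝ)) := by
  have h := (convex_convexHull ℝ ({A, B, C} : Set (ℝ × ℝ))).sum_mem
    (t := (Finset.univ : Finset (Fin 3))) (w := ![a, b, c]) (z := ![A, B, C])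
    (fun i _ => by fin_cases i <;> simpa)
    (by simp [Fin.sum_univ_three]; linarith)
    (fun i _ => by
      fin_cases i <;> apply subset_convexHull <;> simp)
  simpa [Fin.sum_univ_three, add_assoc] using h

lemma triangle_interior (A B C z : ℝ × ℝ)
    (h1 : 0 < rdet (z - A) (C - A) * rdet (B - A) (C - A))
    (h2 : 0 < rdet (B - A) (z - A) * rdet (B - A) (C - A))
    (h3 : 0 < (rdet (B - A) (C - A) - rdet (z - A) (C - A) - rdet (B - A) (z - A)) *
        rdet (B - A) (C - A)) :
    z ∈ interior (convexHull ℝ ({A, B, C} : Set (ℝ × ℝ))) := by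
  set dd := rdet (B - A) (C - A) with hdd
  have hdd0 : dd ≠ 0 := by
    intro h; rw [h] at h1; simp at h1
  have hcont1 : Continuous (fun w : ℝ × ℝ => rdet (w - A) (C - A) * dd) := by
    simp only [rdet]; fun_prop
  have hcont2 : Continuous (fun w : ℝ × ℝ => rdet (B - A) (w - A) * dd) := by
    simp only [rdet]; fun_prop
  have hcont3 : Continuous (fun w : ℝ × ℝ =>
      (dd - rdet (w - A) (C - A) - rdet (B - A) (w - A)) * dd) := by
    simp only [rdet]; fun_prop
  set U : Set (ℝ × ℝ) := {w | 0 < rdet (w - A) (C - A) * dd} ∩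
      ({w | 0 < rdet (B - A) (w - A) * dd} ∩
       {w | 0 < (dd - rdet (w - A) (C - A) - rdet (B - A) (w - A)) * dd}) with hU
  have hUopen : IsOpen U := by
    refine IsOpen.inter ?_ (IsOpen.inter ?_ ?_)
    · exact isOpen_lt continuous_const hcont1
    · exact isOpen_lt continuous_const hcont2
    · exact isOpen_lt continuous_const hcont3
  have hdiv : ∀ x : ℝ, 0 < x * dd → 0 < x / dd := by
    intro x hx
    rcases mul_pos_iff.1 hx with ⟨h, h'⟩ | ⟨h, h'⟩
    · exact div_pos h h'
    · exact div_pos_of_neg_of_neg h h'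
  have hUsub : U ⊆ convexHull ℝ ({A, B, C} : Set (ℝ × ℝ)) := by
    rintro w ⟨hw1, hw2, hw3⟩
    simp only [Set.mem_setOf_eq] at hw1 hw2 hw3
    set n1 := rdet (w - A) (C - A) with hn1
    set n2 := rdet (B - A) (w - A) with hn2
    have hb : 0 < n1 / dd := hdiv _ hw1
    have hc : 0 < n2 / dd := hdiv _ hw2
    have ha : 0 < (dd - n1 - n2) / dd := hdiv _ hw3
    have hsum : (dd - n1 - n2) / dd + n1 / dd + n2 / dd = 1 := by
      field_simp
      ring
    have hw : w = ((dd - n1 - n2) / dd) • A + (n1 / dd) • B + (n2 / dd) • C := by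
      have e1 : (((dd - n1 - n2) / dd) • A + (n1 / dd) • B + (n2 / dd) • C).1
          = ((dd - n1 - n2) / dd) * A.1 + (n1 / dd) * B.1 + (n2 / dd) * C.1 := rfl
      have e2 : (((dd - n1 - n2) / dd) • A + (n1 / dd) • B + (n2 / dd) • C).2
          = ((dd - n1 - n2) / dd) * A.2 + (n1 / dd) * B.2 + (n2 / dd) * C.2 := rfl
      have key1 : (dd - n1 - n2) * A.1 + n1 * B.1 + n2 * C.1 = w.1 * dd := by
        simp only [hn1, hn2, hdd, rdet, Prod.fst_sub, Prod.snd_sub, Prod.fst_add, Prod.snd_add, Prod.fst_neg, Prod.snd_neg]; ring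
      have k1 : ((dd - n1 - n2) / dd) * A.1 + (n1 / dd) * B.1 + (n2 / dd) * C.1 = w.1 := by
        field_simp
        linear_combination key1
      have key2 : (dd - n1 - n2) * A.2 + n1 * B.2 + n2 * C.2 = w.2 * dd := by
        simp only [hn1, hn2, hdd, rdet, Prod.fst_sub, Prod.snd_sub, Prod.fst_add, Prod.snd_add, Prod.fst_neg, Prod.snd_neg]; ring
      have k2 : ((dd - n1 - n2) / dd) * A.2 + (n1 / dd) * B.2 + (n2 / dd) * C.2 = w.2 := by
        field_simp
        linear_combination key2
      refine Prod.ext ?_ ?_ <;> simp [e1, e2, k1, k2]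
    rw [hw]
    exact combo3_mem A B C ha.le hb.le hc.le (by linarith [hsum])
  have hzU : z ∈ U := by
    refine ⟨h1, h2, ?_⟩
    simp only [Set.mem_setOf_eq]
    exact h3
  exact interior_maximal hUsub hUopen hzU



def ι (p : ℤ × ℤ) : ℝ × ℝ := ((p.1 : ℝ), (p.2 : ℝ))

lemma rdet_cast (x y x' y' : ℤ × ℤ) :
    rdet (ι x - ι y) (ι x' - ι y') =
      (((x.1 - y.1) * (x'.2 - y'.2) - (x.2 - y.2) * (x'.1 - y'.1) : ℤ) : ℝ) := by
  simp only [rdet, ι, Prod.fst_sub, Prod.snd_sub]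
  push_cast
  ring

lemma lattice_triangle_interior {Δ : Set (ℝ × ℝ)} (hconv : Convex ℝ Δ)
    (A B C z : ℤ × ℤ) (hA : ι A ∈ Δ) (hB : ι B ∈ Δ) (hC : ι C ∈ Δ)
    (h1 : 0 < ((z.1 - A.1) * (C.2 - A.2) - (z.2 - A.2) * (C.1 - A.1)) *
        ((B.1 - A.1) * (C.2 - A.2) - (B.2 - A.2) * (C.1 - A.1)))
    (h2 : 0 < ((B.1 - A.1) * (z.2 - A.2) - (B.2 - A.2) * (z.1 - A.1)) *
        ((B.1 - A.1) * (C.2 - A.2) - (B.2 - A.2) * (C.1 - A.1)))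
    (h3 : 0 < (((B.1 - A.1) * (C.2 - A.2) - (B.2 - A.2) * (C.1 - A.1)) -
        ((z.1 - A.1) * (C.2 - A.2) - (z.2 - A.2) * (C.1 - A.1)) -
        ((B.1 - A.1) * (z.2 - A.2) - (B.2 - A.2) * (z.1 - A.1))) *
        ((B.1 - A.1) * (C.2 - A.2) - (B.2 - A.2) * (C.1 - A.1))) :
    ι z ∈ interior Δ := by
  have hsub : ({ι A, ι B, ι C} : Set (ℝ × ℝ)) ⊆ Δ := by
    rintro x (rfl | rfl | rfl) <;> assumption
  have hmain := triangle_interior (ι A) (ι B) (ι C) (ι z) ?_ ?_ ?_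
  · exact interior_mono (convexHull_min hsub hconv) hmain
  · rw [rdet_cast, rdet_cast]
    exact_mod_cast h1
  · rw [rdet_cast, rdet_cast]
    exact_mod_cast h2
  · rw [rdet_cast, rdet_cast, rdet_cast]
    exact_mod_cast h3

/-- Cramer-type resolution: if `D • (x - p) = s • u + t • v` then the dual determinants of
`x - p` are exactly `s` and `t`. -/
lemma resolve {u v : ℤ × ℤ} (hD0 : u.1 * v.2 - u.2 * v.1 ≠ 0) {p x : ℤ × ℤ} {s t : ℤ}
    (h1 : (u.1 * v.2 - u.2 * v.1) * (x.1 - p.1) = s * u.1 + t * v.1)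
    (h2 : (u.1 * v.2 - u.2 * v.1) * (x.2 - p.2) = s * u.2 + t * v.2) :
    (x.1 - p.1) * v.2 - (x.2 - p.2) * v.1 = s ∧
    u.1 * (x.2 - p.2) - u.2 * (x.1 - p.1) = t := by
  constructor
  · apply mul_left_cancel₀ hD0
    linear_combination v.2 * h1 - v.1 * h2
  · apply mul_left_cancel₀ hD0
    linear_combination u.1 * h2 - u.2 * h1

lemma exists_nonrep (p u v : ℤ × ℤ) (hD2 : 2 ≤ u.1 * v.2 - u.2 * v.1) :
    ∃ z : ℤ × ℤ, ¬∃ k l : ℤ, z.1 - p.1 = k * u.1 + l * v.1 ∧ z.2 - p.2 = k * u.2 + l * v.2 := by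
  by_contra hall
  push_neg at hall
  obtain ⟨k1, l1, h11, h12⟩ := hall (p.1 + 1, p.2)
  obtain ⟨k2, l2, h21, h22⟩ := hall (p.1, p.2 + 1)
  dsimp only at h11 h12 h21 h22
  have e1 : k1 * u.1 + l1 * v.1 = 1 := by linarith [h11]
  have e2 : k1 * u.2 + l1 * v.2 = 0 := by linarith [h12]
  have e3 : k2 * u.1 + l2 * v.1 = 0 := by linarith [h21]
  have e4 : k2 * u.2 + l2 * v.2 = 1 := by linarith [h22]
  have key : (u.1 * v.2 - u.2 * v.1) * (k1 * l2 - l1 * k2) = 1 := by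
    linear_combination (k2 * u.2 + l2 * v.2) * e1 - (k2 * u.1 + l2 * v.1) * e2 + e4
  have hdvd : (u.1 * v.2 - u.2 * v.1) ∣ 1 := ⟨k1 * l2 - l1 * k2, key.symm⟩
  have := Int.le_of_dvd one_pos hdvd
  omega

/-- residues setup: given `z` not representable, extract `w` with
`D*(w - p) = rX * u + rY * v`, `0 ≤ rX < D`, `0 ≤ rY < D`, not both zero. -/
lemma residues (p u v : ℤ × ℤ) (hD2 : 2 ≤ u.1 * v.2 - u.2 * v.1) :
    ∃ (w : ℤ × ℤ) (rX rY : ℤ),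
      0 ≤ rX ∧ rX < u.1 * v.2 - u.2 * v.1 ∧ 0 ≤ rY ∧ rY < u.1 * v.2 - u.2 * v.1 ∧
      ¬(rX = 0 ∧ rY = 0) ∧
      (u.1 * v.2 - u.2 * v.1) * (w.1 - p.1) = rX * u.1 + rY * v.1 ∧
      (u.1 * v.2 - u.2 * v.1) * (w.2 - p.2) = rX * u.2 + rY * v.2 := by
  set D : ℤ := u.1 * v.2 - u.2 * v.1 with hD
  have hD0 : D ≠ 0 := by omega
  have hDpos : 0 < D := by omega
  obtain ⟨z, hz⟩ := exists_nonrep p u v hD2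
  set X : ℤ := (z.1 - p.1) * v.2 - (z.2 - p.2) * v.1 with hX
  set Y : ℤ := u.1 * (z.2 - p.2) - u.2 * (z.1 - p.1) with hY
  have id1 : D * (z.1 - p.1) = X * u.1 + Y * v.1 := by rw [hD, hX, hY]; ring
  have id2 : D * (z.2 - p.2) = X * u.2 + Y * v.2 := by rw [hD, hX, hY]; ring
  have hXd := Int.mul_ediv_add_emod X D
  have hYd := Int.mul_ediv_add_emod Y D
  refine ⟨(z.1 - X / D * u.1 - Y / D * v.1, z.2 - X / D * u.2 - Y / D * v.2),
    X % D, Y % D, Int.emod_nonneg X hD0, Int.emod_lt_of_pos X hDpos,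
    Int.emod_nonneg Y hD0, Int.emod_lt_of_pos Y hDpos, ?_, ?_, ?_⟩
  · rintro ⟨hx0, hy0⟩
    apply hz
    refine ⟨X / D, Y / D, ?_, ?_⟩
    · apply mul_left_cancel₀ hD0
      rw [id1]
      linear_combination (-u.1) * hXd + (-v.1) * hYd + u.1 * hx0 + v.1 * hy0
    · apply mul_left_cancel₀ hD0
      rw [id2]
      linear_combination (-u.2) * hXd + (-v.2) * hYd + u.2 * hx0 + v.2 * hy0
  · dsimp only
    linear_combination id1 - u.1 * hXd - v.1 * hYd
  · dsimp only
    linear_combination id2 - u.2 * hXd - v.2 * hYd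




lemma backward_width (Δ : Set (ℝ × ℝ)) (n : ℤ × ℤ) (hn : n ≠ 0) (c : ℤ)
    (hbound : ∀ x ∈ Δ, (c : ℝ) ≤ (n.1 : ℝ) * x.1 + (n.2 : ℝ) * x.2 ∧
      (n.1 : ℝ) * x.1 + (n.2 : ℝ) * x.2 ≤ (c : ℝ) + 1) :
    ∀ p : ℤ × ℤ, ((p.1 : ℝ), (p.2 : ℝ)) ∉ interior Δ := by
  intro p hp
  obtain ⟨ε, hε, hplus, hminus⟩ := interior_perturb hp ((n.1 : ℝ), (n.2 : ℝ))
  have e1 : (((p.1 : ℝ), (p.2 : ℝ)) + ε • ((n.1 : ℝ), (n.2 : ℝ))).1 = (p.1 : ℝ) + ε * n.1 := rfl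
  have e2 : (((p.1 : ℝ), (p.2 : ℝ)) + ε • ((n.1 : ℝ), (n.2 : ℝ))).2 = (p.2 : ℝ) + ε * n.2 := rfl
  have f1 : (((p.1 : ℝ), (p.2 : ℝ)) - ε • ((n.1 : ℝ), (n.2 : ℝ))).1 = (p.1 : ℝ) - ε * n.1 := rfl
  have f2 : (((p.1 : ℝ), (p.2 : ℝ)) - ε • ((n.1 : ℝ), (n.2 : ℝ))).2 = (p.2 : ℝ) - ε * n.2 := rfl
  have hb1 := hbound _ hplus
  have hb2 := hbound _ hminus
  rw [e1, e2] at hb1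
  rw [f1, f2] at hb2
  have hnormpos : (0 : ℝ) < (n.1 : ℝ) * n.1 + (n.2 : ℝ) * n.2 := by
    have hor : n.1 ≠ 0 ∨ n.2 ≠ 0 := by
      by_contra h
      push_neg at h
      exact hn (Prod.ext h.1 h.2)
    rcases hor with h | h
    · have h' : (n.1 : ℝ) ≠ 0 := Int.cast_ne_zero.2 h
      nlinarith [mul_self_nonneg (n.1 : ℝ), mul_self_nonneg (n.2 : ℝ), mul_self_pos.mpr h']
    · have h' : (n.2 : ℝ) ≠ 0 := Int.cast_ne_zero.2 h
      nlinarith [mul_self_nonneg (n.1 : ℝ), mul_self_nonneg (n.2 : ℝ), mul_self_pos.mpr h']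
  have hlt1 : (c : ℝ) < ((n.1 * p.1 + n.2 * p.2 : ℤ) : ℝ) := by
    push_cast
    nlinarith [hb2.1, mul_pos hε hnormpos]
  have hlt2 : ((n.1 * p.1 + n.2 * p.2 : ℤ) : ℝ) < ((c + 1 : ℤ) : ℝ) := by
    push_cast
    nlinarith [hb1.2, mul_pos hε hnormpos]
  have h1 : c < n.1 * p.1 + n.2 * p.2 := by exact_mod_cast hlt1
  have h2' : n.1 * p.1 + n.2 * p.2 < c + 1 := by exact_mod_cast hlt2
  omega

lemma backward_triangle (Δ : Set (ℝ × ℝ)) (v a b : ℤ × ℤ)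
    (hdet : |a.1 * b.2 - a.2 * b.1| = 1)
    (hΔ : Δ = convexHull ℝ
      {((v.1 : ℝ), (v.2 : ℝ)),
       (((v.1 + 2 * a.1 : ℤ) : ℝ), ((v.2 + 2 * a.2 : ℤ) : ℝ)),
       (((v.1 + 2 * b.1 : ℤ) : ℝ), ((v.2 + 2 * b.2 : ℤ) : ℝ))}) :
    ∀ p : ℤ × ℤ, ((p.1 : ℝ), (p.2 : ℝ)) ∉ interior Δ := by
  intro p hp
  set D : ℤ := a.1 * b.2 - a.2 * b.1 with hD
  have hD2 : D * D = 1 := by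
    rcases (abs_eq (by norm_num : (0:ℤ) ≤ 1)).1 hdet with h | h <;> rw [h] <;> ring
  have hD2R : (D : ℝ) * (D : ℝ) = 1 := by exact_mod_cast congrArg (fun z : ℤ => (z : ℝ)) hD2
  have hDR : (D : ℝ) = (a.1 : ℝ) * b.2 - (a.2 : ℝ) * b.1 := by rw [hD]; push_cast; ring
  have hDD : (D : ℝ) * ((a.1 : ℝ) * b.2 - (a.2 : ℝ) * b.1) = 1 := by rw [← hDR]; exact hD2R
  set P0 : ℝ × ℝ := ((v.1 : ℝ), (v.2 : ℝ)) with hP0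
  set P1 : ℝ × ℝ := (((v.1 + 2 * a.1 : ℤ) : ℝ), ((v.2 + 2 * a.2 : ℤ) : ℝ)) with hP1
  set P2 : ℝ × ℝ := (((v.1 + 2 * b.1 : ℤ) : ℝ), ((v.2 + 2 * b.2 : ℤ) : ℝ)) with hP2
  have hver : ∀ y ∈ ({P0, P1, P2} : Set (ℝ × ℝ)), y = P0 ∨ y = P1 ∨ y = P2 := by
    intro y hy; simpa using hy
  -- φ(x) = (b2 D) x1 + (-(b1 D)) x2 - (v1 b2 - v2 b1) D ; values 0, 2, 0 at P0 P1 P2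
  have keyphi : ∀ x ∈ Δ, (((v.1 * b.2 - v.2 * b.1) * D : ℤ) : ℝ) ≤
      ((b.2 * D : ℤ) : ℝ) * x.1 + ((-(b.1 * D) : ℤ) : ℝ) * x.2 := by
    rw [hΔ]
    apply hull_ge
    intro y hy
    rcases hver y hy with rfl | rfl | rfl <;>
      (simp only [hP0, hP1, hP2]; push_cast; nlinarith [hDD])
  have keypsi : ∀ x ∈ Δ, (((v.2 * a.1 - v.1 * a.2) * D : ℤ) : ℝ) ≤
      ((-(a.2 * D) : ℤ) : ℝ) * x.1 + ((a.1 * D : ℤ) : ℝ) * x.2 := by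
    rw [hΔ]
    apply hull_ge
    intro y hy
    rcases hver y hy with rfl | rfl | rfl <;>
      (simp only [hP0, hP1, hP2]; push_cast; nlinarith [hDD])
  -- φ+ψ ≤ 2 : coefficients
  have keysum : ∀ x ∈ Δ, ((b.2 * D - a.2 * D : ℤ) : ℝ) * x.1 + ((a.1 * D - b.1 * D : ℤ) : ℝ) * x.2
      ≤ (((v.1 * b.2 - v.2 * b.1) * D + (v.2 * a.1 - v.1 * a.2) * D : ℤ) : ℝ) + 2 := by
    rw [hΔ]
    apply hull_le
    intro y hy
    rcases hver y hy with rfl | rfl | rfl <;>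
      (simp only [hP0, hP1, hP2]; push_cast; nlinarith [hDD])
  obtain ⟨ε1, hε1, hA1, hA2⟩ := interior_perturb hp ((a.1 : ℝ), (a.2 : ℝ))
  obtain ⟨ε2, hε2, hB1, hB2⟩ := interior_perturb hp ((b.1 : ℝ), (b.2 : ℝ))
  set s : ℤ := ((p.1 - v.1) * b.2 - (p.2 - v.2) * b.1) * D with hs
  set t : ℤ := (a.1 * (p.2 - v.2) - a.2 * (p.1 - v.1)) * D with ht
  have hs1 : 1 ≤ s := by
    have h := keyphi _ hA2
    have e1 : (((p.1 : ℝ), (p.2 : ℝ)) - ε1 • ((a.1 : ℝ), (a.2 : ℝ))).1 = (p.1 : ℝ) - ε1 * a.1 := rfl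
    have e2 : (((p.1 : ℝ), (p.2 : ℝ)) - ε1 • ((a.1 : ℝ), (a.2 : ℝ))).2 = (p.2 : ℝ) - ε1 * a.2 := rfl
    rw [e1, e2] at h
    push_cast at h
    have hE : ε1 * ((D : ℝ) * ((a.1 : ℝ) * b.2 - (a.2 : ℝ) * b.1)) = ε1 := by
      rw [hDD, mul_one]
    have hsr : ε1 ≤ ((s : ℤ) : ℝ) := by
      push_cast [hs]
      nlinarith [h, hE]
    have h0 : (0 : ℝ) < (s : ℝ) := lt_of_lt_of_le hε1 hsr
    have h0' : (0 : ℤ) < s := by exact_mod_cast h0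
    omega
  have ht1 : 1 ≤ t := by
    have h := keypsi _ hB2
    have e1 : (((p.1 : ℝ), (p.2 : ℝ)) - ε2 • ((b.1 : ℝ), (b.2 : ℝ))).1 = (p.1 : ℝ) - ε2 * b.1 := rfl
    have e2 : (((p.1 : ℝ), (p.2 : ℝ)) - ε2 • ((b.1 : ℝ), (b.2 : ℝ))).2 = (p.2 : ℝ) - ε2 * b.2 := rfl
    rw [e1, e2] at h
    push_cast at h
    have hE : ε2 * ((D : ℝ) * ((a.1 : ℝ) * b.2 - (a.2 : ℝ) * b.1)) = ε2 := by
      rw [hDD, mul_one]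
    have hsr : ε2 ≤ ((t : ℤ) : ℝ) := by
      push_cast [ht]
      nlinarith [h, hE]
    have h0 : (0 : ℝ) < (t : ℝ) := lt_of_lt_of_le hε2 hsr
    have h0' : (0 : ℤ) < t := by exact_mod_cast h0
    omega
  have hsum : (s : ℝ) + ε1 + (t : ℝ) ≤ 2 := by
    have h := keysum _ hA1
    have e1 : (((p.1 : ℝ), (p.2 : ℝ)) + ε1 • ((a.1 : ℝ), (a.2 : ℝ))).1 = (p.1 : ℝ) + ε1 * a.1 := rfl
    have e2 : (((p.1 : ℝ), (p.2 : ℝ)) + ε1 • ((a.1 : ℝ), (a.2 : ℝ))).2 = (p.2 : ℝ) + ε1 * a.2 := rfl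
    rw [e1, e2] at h
    push_cast at h
    have hE : ε1 * ((D : ℝ) * ((a.1 : ℝ) * b.2 - (a.2 : ℝ) * b.1)) = ε1 := by
      rw [hDD, mul_one]
    push_cast [hs, ht]
    nlinarith [h, hE]
  have hs' : (1 : ℝ) ≤ (s : ℝ) := by exact_mod_cast hs1
  have ht' : (1 : ℝ) ≤ (t : ℝ) := by exact_mod_cast ht1
  linarith




/-- interior point of the doubled triangle p, p+2u, p+2v from scaled coordinates. -/
lemma double_triangle_interior {Δ : Set (ℝ × ℝ)} (hconv : Convex ℝ Δ) (p u v z : ℤ × ℤ)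
    (s t : ℤ)
    (hp : ι p ∈ Δ) (hq : ι (p.1 + 2 * u.1, p.2 + 2 * u.2) ∈ Δ)
    (hr : ι (p.1 + 2 * v.1, p.2 + 2 * v.2) ∈ Δ)
    (hD : 0 < u.1 * v.2 - u.2 * v.1)
    (h1 : (u.1 * v.2 - u.2 * v.1) * (z.1 - p.1) = s * u.1 + t * v.1)
    (h2 : (u.1 * v.2 - u.2 * v.1) * (z.2 - p.2) = s * u.2 + t * v.2)
    (hs : 0 < s) (ht : 0 < t) (hst : s + t < 2 * (u.1 * v.2 - u.2 * v.1)) :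
    ι z ∈ interior Δ := by
  have hD0 : u.1 * v.2 - u.2 * v.1 ≠ 0 := ne_of_gt hD
  obtain ⟨e1, e2⟩ := resolve hD0 h1 h2
  apply lattice_triangle_interior hconv p (p.1 + 2 * u.1, p.2 + 2 * u.2)
    (p.1 + 2 * v.1, p.2 + 2 * v.2) z hp hq hr <;> dsimp only
  · have g1 : (z.1 - p.1) * (p.2 + 2 * v.2 - p.2) - (z.2 - p.2) * (p.1 + 2 * v.1 - p.1)
        = 2 * s := by linear_combination 2 * e1
    have g2 : (p.1 + 2 * u.1 - p.1) * (p.2 + 2 * v.2 - p.2) -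
        (p.2 + 2 * u.2 - p.2) * (p.1 + 2 * v.1 - p.1) = 4 * (u.1 * v.2 - u.2 * v.1) := by ring
    rw [g1, g2]
    nlinarith [hs, hD]
  · have g1 : (p.1 + 2 * u.1 - p.1) * (z.2 - p.2) - (p.2 + 2 * u.2 - p.2) * (z.1 - p.1)
        = 2 * t := by linear_combination 2 * e2
    have g2 : (p.1 + 2 * u.1 - p.1) * (p.2 + 2 * v.2 - p.2) -
        (p.2 + 2 * u.2 - p.2) * (p.1 + 2 * v.1 - p.1) = 4 * (u.1 * v.2 - u.2 * v.1) := by ring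
    rw [g1, g2]
    nlinarith [ht, hD]
  · have g1 : (z.1 - p.1) * (p.2 + 2 * v.2 - p.2) - (z.2 - p.2) * (p.1 + 2 * v.1 - p.1)
        = 2 * s := by linear_combination 2 * e1
    have g1' : (p.1 + 2 * u.1 - p.1) * (z.2 - p.2) - (p.2 + 2 * u.2 - p.2) * (z.1 - p.1)
        = 2 * t := by linear_combination 2 * e2
    have g2 : (p.1 + 2 * u.1 - p.1) * (p.2 + 2 * v.2 - p.2) -
        (p.2 + 2 * u.2 - p.2) * (p.1 + 2 * v.1 - p.1) = 4 * (u.1 * v.2 - u.2 * v.1) := by ring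
    rw [g1, g1', g2]
    nlinarith [hs, ht, hst, hD]

/-- interior point of the unit triangle p, p+u, p+v from scaled coordinates. -/
lemma unit_triangle_interior {Δ : Set (ℝ × ℝ)} (hconv : Convex ℝ Δ) (p u v z : ℤ × ℤ)
    (s t : ℤ)
    (hp : ι p ∈ Δ) (hq : ι (p.1 + u.1, p.2 + u.2) ∈ Δ)
    (hr : ι (p.1 + v.1, p.2 + v.2) ∈ Δ)
    (hD : 0 < u.1 * v.2 - u.2 * v.1)
    (h1 : (u.1 * v.2 - u.2 * v.1) * (z.1 - p.1) = s * u.1 + t * v.1)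
    (h2 : (u.1 * v.2 - u.2 * v.1) * (z.2 - p.2) = s * u.2 + t * v.2)
    (hs : 0 < s) (ht : 0 < t) (hst : s + t < u.1 * v.2 - u.2 * v.1) :
    ι z ∈ interior Δ := by
  have hD0 : u.1 * v.2 - u.2 * v.1 ≠ 0 := ne_of_gt hD
  obtain ⟨e1, e2⟩ := resolve hD0 h1 h2
  apply lattice_triangle_interior hconv p (p.1 + u.1, p.2 + u.2)
    (p.1 + v.1, p.2 + v.2) z hp hq hr <;> dsimp only
  · have g1 : (z.1 - p.1) * (p.2 + v.2 - p.2) - (z.2 - p.2) * (p.1 + v.1 - p.1) = s := by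
      linear_combination e1
    have g2 : (p.1 + u.1 - p.1) * (p.2 + v.2 - p.2) -
        (p.2 + u.2 - p.2) * (p.1 + v.1 - p.1) = u.1 * v.2 - u.2 * v.1 := by ring
    rw [g1, g2]
    nlinarith [hs, hD]
  · have g1 : (p.1 + u.1 - p.1) * (z.2 - p.2) - (p.2 + u.2 - p.2) * (z.1 - p.1) = t := by
      linear_combination e2
    have g2 : (p.1 + u.1 - p.1) * (p.2 + v.2 - p.2) -
        (p.2 + u.2 - p.2) * (p.1 + v.1 - p.1) = u.1 * v.2 - u.2 * v.1 := by ring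
    rw [g1, g2]
    nlinarith [ht, hD]
  · have g1 : (z.1 - p.1) * (p.2 + v.2 - p.2) - (z.2 - p.2) * (p.1 + v.1 - p.1) = s := by
      linear_combination e1
    have g1' : (p.1 + u.1 - p.1) * (z.2 - p.2) - (p.2 + u.2 - p.2) * (z.1 - p.1) = t := by
      linear_combination e2
    have g2 : (p.1 + u.1 - p.1) * (p.2 + v.2 - p.2) -
        (p.2 + u.2 - p.2) * (p.1 + v.1 - p.1) = u.1 * v.2 - u.2 * v.1 := by ring
    rw [g1, g1', g2]
    nlinarith [hs, ht, hst, hD]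

/-- det(u,v)=1 for a doubled lattice-point triangle with no interior lattice points. -/
lemma claim_double {Δ : Set (ℝ × ℝ)} (hconv : Convex ℝ Δ)
    (hno : ∀ q : ℤ × ℤ, ι q ∉ interior Δ) (p u v : ℤ × ℤ) (hp : ι p ∈ Δ)
    (hq : ι (p.1 + 2 * u.1, p.2 + 2 * u.2) ∈ Δ) (hr : ι (p.1 + 2 * v.1, p.2 + 2 * v.2) ∈ Δ)
    (hD : 0 < u.1 * v.2 - u.2 * v.1) : u.1 * v.2 - u.2 * v.1 = 1 := by
  by_contra hne
  have hD2 : 2 ≤ u.1 * v.2 - u.2 * v.1 := by omega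
  obtain ⟨w, rX, rY, hX0, hXD, hY0, hYD, hnz, hw1, hw2⟩ := residues p u v hD2
  rcases eq_or_lt_of_le hX0 with hXz | hXpos
  · -- rX = 0, rY > 0 : take w + u
    have hYpos : 0 < rY := by omega
    refine hno (w.1 + u.1, w.2 + u.2) ?_
    apply double_triangle_interior hconv p u v _ (rX + (u.1 * v.2 - u.2 * v.1)) rY
      hp hq hr hD ?_ ?_ (by omega) hYpos (by omega)
    · dsimp only; linear_combination hw1
    · dsimp only; linear_combination hw2
  rcases eq_or_lt_of_le hY0 with hYz | hYpos
  · -- rY = 0, rX > 0 : take w + v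
    refine hno (w.1 + v.1, w.2 + v.2) ?_
    apply double_triangle_interior hconv p u v _ rX (rY + (u.1 * v.2 - u.2 * v.1))
      hp hq hr hD ?_ ?_ hXpos (by omega) (by omega)
    · dsimp only; linear_combination hw1
    · dsimp only; linear_combination hw2
  · -- both positive : take w itself
    refine hno w ?_
    exact double_triangle_interior hconv p u v w rX rY hp hq hr hD hw1 hw2 hXpos hYpos (by omega)




lemma seg_mem {Δ : Set (ℝ × ℝ)} (hconv : Convex ℝ Δ) (x y z : ℤ × ℤ) (k g : ℤ)
    (h0 : 0 ≤ k) (hkg : k ≤ g) (hg : 0 < g)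
    (hx : ι x ∈ Δ) (hy : ι y ∈ Δ)
    (h1 : g * (z.1 - x.1) = k * (y.1 - x.1)) (h2 : g * (z.2 - x.2) = k * (y.2 - x.2)) :
    ι z ∈ Δ := by
  have hgR : (0 : ℝ) < (g : ℝ) := by exact_mod_cast hg
  have hkR : (0 : ℝ) ≤ (k : ℝ) := by exact_mod_cast h0
  have hkgR : (k : ℝ) ≤ (g : ℝ) := by exact_mod_cast hkg
  have ha : (0:ℝ) ≤ 1 - (k : ℝ) / g := by
    rw [sub_nonneg, div_le_one hgR]; exact hkgR
  have hb : (0:ℝ) ≤ (k : ℝ) / g := div_nonneg hkR hgR.le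
  have hmem := hconv hx hy ha hb (by ring)
  have h1R : (g : ℝ) * ((z.1 : ℝ) - (x.1 : ℝ)) = (k : ℝ) * ((y.1 : ℝ) - (x.1 : ℝ)) := by
    exact_mod_cast h1
  have h2R : (g : ℝ) * ((z.2 : ℝ) - (x.2 : ℝ)) = (k : ℝ) * ((y.2 : ℝ) - (x.2 : ℝ)) := by
    exact_mod_cast h2
  have heq : (1 - (k : ℝ) / g) • ι x + ((k : ℝ) / g) • ι y = ι z := by
    have c1 : ((1 - (k : ℝ) / g) • ι x + ((k : ℝ) / g) • ι y).1
        = (1 - (k : ℝ) / g) * (x.1 : ℝ) + ((k : ℝ) / g) * (y.1 : ℝ) := rfl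
    have c2 : ((1 - (k : ℝ) / g) • ι x + ((k : ℝ) / g) • ι y).2
        = (1 - (k : ℝ) / g) * (x.2 : ℝ) + ((k : ℝ) / g) * (y.2 : ℝ) := rfl
    refine Prod.ext ?_ ?_
    · rw [c1]
      show _ = (z.1 : ℝ)
      field_simp
      linear_combination (-1) * h1R
    · rw [c2]
      show _ = (z.2 : ℝ)
      field_simp
      linear_combination (-1) * h2R
  rwa [heq] at hmem

lemma segment_split (cb w b : ℤ × ℤ) (D rY : ℤ) (hD : 0 < D) (hr0 : 0 < rY) (hrD : rY < D)
    (hcb : ¬(cb.1 = 0 ∧ cb.2 = 0))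
    (h1 : D * (w.1 - b.1) = rY * cb.1) (h2 : D * (w.2 - b.2) = rY * cb.2) :
    ∃ h : ℤ × ℤ, ¬(h.1 = 0 ∧ h.2 = 0) ∧ ∃ g : ℤ, 2 ≤ g ∧ cb.1 = g * h.1 ∧ cb.2 = g * h.2 := by
  have hD0 : D ≠ 0 := ne_of_gt hD
  set gn : ℕ := Int.gcd cb.1 cb.2 with hgn
  have hgpos : 0 < gn := by
    rw [hgn, Int.gcd_pos_iff]
    by_contra hcon
    push_neg at hcon
    exact hcb ⟨hcon.1, hcon.2⟩
  set g : ℤ := (gn : ℤ) with hgz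
  have hgposz : 0 < g := by rw [hgz]; exact_mod_cast hgpos
  set h : ℤ × ℤ := (cb.1 / g, cb.2 / g) with hh
  have hc1 : cb.1 = g * h.1 := by
    rw [hh]; dsimp only
    rw [Int.mul_ediv_cancel' (Int.gcd_dvd_left _ _)]
  have hc2 : cb.2 = g * h.2 := by
    rw [hh]; dsimp only
    rw [Int.mul_ediv_cancel' (Int.gcd_dvd_right _ _)]
  have hhne : ¬(h.1 = 0 ∧ h.2 = 0) := by
    rintro ⟨ha, hb'⟩
    apply hcb
    constructor
    · rw [hc1, ha, mul_zero]
    · rw [hc2, hb', mul_zero]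
  -- gcd of h is 1, Bezout
  have hgcdh : Int.gcd h.1 h.2 = 1 := by
    rw [hh]; dsimp only
    exact Int.gcd_div_gcd_div_gcd hgpos
  have hbez : h.1 * Int.gcdA h.1 h.2 + h.2 * Int.gcdB h.1 h.2 = 1 := by
    have := Int.gcd_eq_gcd_ab h.1 h.2
    rw [hgcdh] at this
    exact_mod_cast this.symm
  set e1 : ℤ := -(Int.gcdB h.1 h.2) with he1
  set e2 : ℤ := Int.gcdA h.1 h.2 with he2
  have hdet : h.1 * e2 - h.2 * e1 = 1 := by rw [he1, he2]; linarith [hbez]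
  -- collinearity: h.1*(w.2-b.2) - h.2*(w.1-b.1) = 0
  have hcol : h.1 * (w.2 - b.2) - h.2 * (w.1 - b.1) = 0 := by
    apply mul_left_cancel₀ hD0
    have : D * (h.1 * (w.2 - b.2) - h.2 * (w.1 - b.1))
        = rY * (h.1 * cb.2 - h.2 * cb.1) := by linear_combination h.1 * h2 - h.2 * h1
    rw [this, hc1, hc2]
    ring
  set μ : ℤ := (w.1 - b.1) * e2 - (w.2 - b.2) * e1 with hμ
  have hw1' : w.1 - b.1 = μ * h.1 := by
    rw [hμ]; linear_combination (-(w.1 - b.1)) * hdet + e1 * hcol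
  have hw2' : w.2 - b.2 = μ * h.2 := by
    rw [hμ]; linear_combination (-(w.2 - b.2)) * hdet + e2 * hcol
  have hkey : D * μ = rY * g := by
    rcases (not_and_or.1 hhne) with h1' | h2'
    · apply mul_right_cancel₀ h1'
      linear_combination (-D) * hw1' + h1 + rY * hc1
    · apply mul_right_cancel₀ h2'
      linear_combination (-D) * hw2' + h2 + rY * hc2
  have hμpos : 0 < μ := by nlinarith
  have hμlt : μ < g := by nlinarith
  exact ⟨h, hhne, g, by omega, hc1, hc2⟩




/-- det(u,v)=1 for a unit lattice triangle inside an interior-lattice-free convex set,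
assuming no two lattice points of Δ are congruent mod 2. -/
lemma claim_unit {Δ : Set (ℝ × ℝ)} (hconv : Convex ℝ Δ)
    (hno : ∀ q : ℤ × ℤ, ι q ∉ interior Δ)
    (hK2 : ∀ x w : ℤ × ℤ, ι x ∈ Δ → ι (x.1 + 2 * w.1, x.2 + 2 * w.2) ∈ Δ →
      w.1 = 0 ∧ w.2 = 0)
    (p u v : ℤ × ℤ) (hp : ι p ∈ Δ) (hq : ι (p.1 + u.1, p.2 + u.2) ∈ Δ)
    (hr : ι (p.1 + v.1, p.2 + v.2) ∈ Δ)
    (hD : 0 < u.1 * v.2 - u.2 * v.1) : u.1 * v.2 - u.2 * v.1 = 1 := by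
  by_contra hne
  have hD2 : 2 ≤ u.1 * v.2 - u.2 * v.1 := by omega
  obtain ⟨w, rX, rY, hX0, hXD, hY0, hYD, hnz, hw1, hw2⟩ := residues p u v hD2
  rcases eq_or_lt_of_le hX0 with hXz | hXpos
  · -- rX = 0, rY > 0 : w lies on the open segment from p to p+v
    have hYpos : 0 < rY := by omega
    have hvne : ¬(v.1 = 0 ∧ v.2 = 0) := by
      rintro ⟨e1, e2⟩
      rw [e1, e2] at hD2
      simp at hD2
    obtain ⟨h, hhne, g, hg2, hc1, hc2⟩ := segment_split v w p (u.1 * v.2 - u.2 * v.1) rY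
      hD hYpos hYD hvne
      (by linear_combination hw1 + (-u.1) * hXz) (by linear_combination hw2 + (-u.2) * hXz)
    have hm : ι (p.1 + 2 * h.1, p.2 + 2 * h.2) ∈ Δ := by
      apply seg_mem hconv p (p.1 + v.1, p.2 + v.2) _ 2 g (by omega) (by omega) (by omega) hp hr
      · dsimp only; linear_combination (-2) * hc1
      · dsimp only; linear_combination (-2) * hc2
    exact hhne (hK2 p h hp hm)
  rcases eq_or_lt_of_le hY0 with hYz | hYpos
  · -- rY = 0, rX > 0 : w lies on the open segment from p to p+u
    have hune : ¬(u.1 = 0 ∧ u.2 = 0) := by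
      rintro ⟨e1, e2⟩
      rw [e1, e2] at hD2
      simp at hD2
    obtain ⟨h, hhne, g, hg2, hc1, hc2⟩ := segment_split u w p (u.1 * v.2 - u.2 * v.1) rX
      hD hXpos hXD hune
      (by linear_combination hw1 + (-v.1) * hYz) (by linear_combination hw2 + (-v.2) * hYz)
    have hm : ι (p.1 + 2 * h.1, p.2 + 2 * h.2) ∈ Δ := by
      apply seg_mem hconv p (p.1 + u.1, p.2 + u.2) _ 2 g (by omega) (by omega) (by omega) hp hq
      · dsimp only; linear_combination (-2) * hc1
      · dsimp only; linear_combination (-2) * hc2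
    exact hhne (hK2 p h hp hm)
  rcases lt_trichotomy (rX + rY) (u.1 * v.2 - u.2 * v.1) with hlt | heq | hgt
  · exact hno w (unit_triangle_interior hconv p u v w rX rY hp hq hr hD hw1 hw2 hXpos hYpos hlt)
  · -- on the open segment from p+u to p+v
    have hcbne : ¬(v.1 - u.1 = 0 ∧ v.2 - u.2 = 0) := by
      rintro ⟨e1, e2⟩
      have e1' : v.1 = u.1 := by omega
      have e2' : v.2 = u.2 := by omega
      rw [e1', e2'] at hD2
      ring_nf at hD2
      omega
    obtain ⟨h, hhne, g, hg2, hc1, hc2⟩ := segment_split (v.1 - u.1, v.2 - u.2) w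
      (p.1 + u.1, p.2 + u.2) (u.1 * v.2 - u.2 * v.1) rY hD hYpos hYD hcbne
      (by dsimp only; linear_combination hw1 + u.1 * heq)
      (by dsimp only; linear_combination hw2 + u.2 * heq)
    dsimp only at hc1 hc2
    have hm : ι ((p.1 + u.1) + 2 * h.1, (p.2 + u.2) + 2 * h.2) ∈ Δ := by
      apply seg_mem hconv (p.1 + u.1, p.2 + u.2) (p.1 + v.1, p.2 + v.2) _ 2 g
        (by omega) (by omega) (by omega) hq hr
      · dsimp only; linear_combination (-2) * hc1
      · dsimp only; linear_combination (-2) * hc2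
    exact hhne (hK2 (p.1 + u.1, p.2 + u.2) h hq hm)
  · -- reflected point
    refine hno (2 * p.1 + u.1 + v.1 - w.1, 2 * p.2 + u.2 + v.2 - w.2) ?_
    apply unit_triangle_interior hconv p u v _ (u.1 * v.2 - u.2 * v.1 - rX)
      (u.1 * v.2 - u.2 * v.1 - rY) hp hq hr hD ?_ ?_
      (by omega) (by omega) (by omega)
    · dsimp only; linear_combination (-1) * hw1
    · dsimp only; linear_combination (-1) * hw2




/-- Interior membership from coordinates w.r.t. a unimodular frame (p; u, v). -/
lemma coord_triangle_interior {Δ : Set (ℝ × ℝ)} (hconv : Convex ℝ Δ) (p u v : ℤ × ℤ)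
    (hD : u.1 * v.2 - u.2 * v.1 = 1)
    (A B C z : ℤ × ℤ) (a1 b1 a2 b2 a3 b3 az bz : ℤ)
    (hA : ι A ∈ Δ) (hB : ι B ∈ Δ) (hC : ι C ∈ Δ)
    (eA1 : A.1 - p.1 = a1 * u.1 + b1 * v.1) (eA2 : A.2 - p.2 = a1 * u.2 + b1 * v.2)
    (eB1 : B.1 - p.1 = a2 * u.1 + b2 * v.1) (eB2 : B.2 - p.2 = a2 * u.2 + b2 * v.2)
    (eC1 : C.1 - p.1 = a3 * u.1 + b3 * v.1) (eC2 : C.2 - p.2 = a3 * u.2 + b3 * v.2)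
    (ez1 : z.1 - p.1 = az * u.1 + bz * v.1) (ez2 : z.2 - p.2 = az * u.2 + bz * v.2)
    (h1 : 0 < ((az - a1) * (b3 - b1) - (bz - b1) * (a3 - a1)) *
        ((a2 - a1) * (b3 - b1) - (b2 - b1) * (a3 - a1)))
    (h2 : 0 < ((a2 - a1) * (bz - b1) - (b2 - b1) * (az - a1)) *
        ((a2 - a1) * (b3 - b1) - (b2 - b1) * (a3 - a1)))
    (h3 : 0 < (((a2 - a1) * (b3 - b1) - (b2 - b1) * (a3 - a1)) -
        ((az - a1) * (b3 - b1) - (bz - b1) * (a3 - a1)) -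
        ((a2 - a1) * (bz - b1) - (b2 - b1) * (az - a1))) *
        ((a2 - a1) * (b3 - b1) - (b2 - b1) * (a3 - a1))) :
    ι z ∈ interior Δ := by
  have dz1 : z.1 - A.1 = (az - a1) * u.1 + (bz - b1) * v.1 := by linear_combination ez1 - eA1
  have dz2 : z.2 - A.2 = (az - a1) * u.2 + (bz - b1) * v.2 := by linear_combination ez2 - eA2
  have dB1 : B.1 - A.1 = (a2 - a1) * u.1 + (b2 - b1) * v.1 := by linear_combination eB1 - eA1
  have dB2 : B.2 - A.2 = (a2 - a1) * u.2 + (b2 - b1) * v.2 := by linear_combination eB2 - eA2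
  have dC1 : C.1 - A.1 = (a3 - a1) * u.1 + (b3 - b1) * v.1 := by linear_combination eC1 - eA1
  have dC2 : C.2 - A.2 = (a3 - a1) * u.2 + (b3 - b1) * v.2 := by linear_combination eC2 - eA2
  have g1 : (z.1 - A.1) * (C.2 - A.2) - (z.2 - A.2) * (C.1 - A.1)
      = (az - a1) * (b3 - b1) - (bz - b1) * (a3 - a1) := by
    rw [dz1, dz2, dC1, dC2]
    linear_combination ((az - a1) * (b3 - b1) - (bz - b1) * (a3 - a1)) * hD
  have g2 : (B.1 - A.1) * (z.2 - A.2) - (B.2 - A.2) * (z.1 - A.1)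
      = (a2 - a1) * (bz - b1) - (b2 - b1) * (az - a1) := by
    rw [dz1, dz2, dB1, dB2]
    linear_combination ((a2 - a1) * (bz - b1) - (b2 - b1) * (az - a1)) * hD
  have gd : (B.1 - A.1) * (C.2 - A.2) - (B.2 - A.2) * (C.1 - A.1)
      = (a2 - a1) * (b3 - b1) - (b2 - b1) * (a3 - a1) := by
    rw [dB1, dB2, dC1, dC2]
    linear_combination ((a2 - a1) * (b3 - b1) - (b2 - b1) * (a3 - a1)) * hD
  apply lattice_triangle_interior hconv A B C z hA hB hC
  · rw [g1, gd]; exact h1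
  · rw [g2, gd]; exact h2
  · rw [g1, g2, gd]; exact h3




set_option maxHeartbeats 1000000 in
lemma triangle_case (S : Finset (ℤ × ℤ)) (Δ : Set (ℝ × ℝ))
    (hΔ : Δ = convexHull ℝ ((fun p : ℤ × ℤ => ((p.1 : ℝ), (p.2 : ℝ))) '' ↑S))
    (hconv : Convex ℝ Δ)
    (hno : ∀ q : ℤ × ℤ, ι q ∉ interior Δ)
    (p u v : ℤ × ℤ) (hp : ι p ∈ Δ) (hq : ι (p.1 + 2 * u.1, p.2 + 2 * u.2) ∈ Δ)
    (hr : ι (p.1 + 2 * v.1, p.2 + 2 * v.2) ∈ Δ)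
    (hD : 0 < u.1 * v.2 - u.2 * v.1) :
    ∃ vv a b : ℤ × ℤ, |a.1 * b.2 - a.2 * b.1| = 1 ∧
      Δ = convexHull ℝ
        {((vv.1 : ℝ), (vv.2 : ℝ)),
         (((vv.1 + 2 * a.1 : ℤ) : ℝ), ((vv.2 + 2 * a.2 : ℤ) : ℝ)),
         (((vv.1 + 2 * b.1 : ℤ) : ℝ), ((vv.2 + 2 * b.2 : ℤ) : ℝ))} := by
  have hD1 : u.1 * v.2 - u.2 * v.1 = 1 := claim_double hconv hno p u v hp hq hr hD
  -- midpoints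
  have hmu : ι (p.1 + u.1, p.2 + u.2) ∈ Δ := by
    apply seg_mem hconv p (p.1 + 2 * u.1, p.2 + 2 * u.2) _ 1 2 (by omega) (by omega) (by omega)
      hp hq <;> (dsimp only; ring)
  have hmv : ι (p.1 + v.1, p.2 + v.2) ∈ Δ := by
    apply seg_mem hconv p (p.1 + 2 * v.1, p.2 + 2 * v.2) _ 1 2 (by omega) (by omega) (by omega)
      hp hr <;> (dsimp only; ring)
  -- coordinates of points of S
  have hcoord : ∀ s : ℤ × ℤ,
      s.1 - p.1 = ((s.1 - p.1) * v.2 - (s.2 - p.2) * v.1) * u.1 +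
        (u.1 * (s.2 - p.2) - u.2 * (s.1 - p.1)) * v.1 ∧
      s.2 - p.2 = ((s.1 - p.1) * v.2 - (s.2 - p.2) * v.1) * u.2 +
        (u.1 * (s.2 - p.2) - u.2 * (s.1 - p.1)) * v.2 := by
    intro s
    constructor
    · linear_combination (-(s.1 - p.1)) * hD1
    · linear_combination (-(s.2 - p.2)) * hD1
  -- region bounds
  have key : ∀ s ∈ S, 0 ≤ (s.1 - p.1) * v.2 - (s.2 - p.2) * v.1 ∧
      0 ≤ u.1 * (s.2 - p.2) - u.2 * (s.1 - p.1) ∧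
      ((s.1 - p.1) * v.2 - (s.2 - p.2) * v.1) + (u.1 * (s.2 - p.2) - u.2 * (s.1 - p.1)) ≤ 2 := by
    intro s hs
    have hsΔ : ι s ∈ Δ := by
      rw [hΔ]
      exact subset_convexHull _ _ ⟨s, hs, rfl⟩
    set σ : ℤ := (s.1 - p.1) * v.2 - (s.2 - p.2) * v.1 with hσ
    set τ : ℤ := u.1 * (s.2 - p.2) - u.2 * (s.1 - p.1) with hτ
    obtain ⟨es1, es2⟩ := hcoord s
    rw [← hσ, ← hτ] at es1 es2
    by_contra hcon
    push_neg at hcon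
    -- six cases
    have hcase : σ ≤ -1 ∨ (τ ≤ -1) ∨ (σ + τ ≥ 3) := by omega
    have eq1 : (p.1 + u.1) - p.1 = 1 * u.1 + 0 * v.1 := by ring
    have eq2 : (p.2 + u.2) - p.2 = 1 * u.2 + 0 * v.2 := by ring
    have eq3 : (p.1 + 2 * u.1) - p.1 = 2 * u.1 + 0 * v.1 := by ring
    have eq4 : (p.2 + 2 * u.2) - p.2 = 2 * u.2 + 0 * v.2 := by ring
    have eq5 : (p.1 + v.1) - p.1 = 0 * u.1 + 1 * v.1 := by ring
    have eq6 : (p.2 + v.2) - p.2 = 0 * u.2 + 1 * v.2 := by ring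
    have eq7 : (p.1 + 2 * v.1) - p.1 = 0 * u.1 + 2 * v.1 := by ring
    have eq8 : (p.2 + 2 * v.2) - p.2 = 0 * u.2 + 2 * v.2 := by ring
    have eq9 : p.1 - p.1 = 0 * u.1 + 0 * v.1 := by ring
    have eq10 : p.2 - p.2 = 0 * u.2 + 0 * v.2 := by ring
    have eq11 : (p.1 + u.1 + v.1) - p.1 = 1 * u.1 + 1 * v.1 := by ring
    have eq12 : (p.2 + u.2 + v.2) - p.2 = 1 * u.2 + 1 * v.2 := by ring
    rcases hcase with hc | hc | hc
    · rcases le_or_gt τ (-σ) with hc2 | hc2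
      · -- C1 : triangle (s, p+u, p+2v), z = p+v
        exact hno (p.1 + v.1, p.2 + v.2)
          (coord_triangle_interior hconv p u v hD1 s (p.1 + u.1, p.2 + u.2)
            (p.1 + 2 * v.1, p.2 + 2 * v.2) (p.1 + v.1, p.2 + v.2)
            σ τ 1 0 0 2 0 1 hsΔ hmu hr es1 es2 eq1 eq2 eq7 eq8 eq5 eq6
            (by have fa : (0:ℤ) < -σ := by omega
                have fd : (0:ℤ) < 2 - τ - 2*σ := by omega
                nlinarith [mul_pos fa fd])
            (by have fa : (0:ℤ) < 1 - σ - τ := by omega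
                have fd : (0:ℤ) < 2 - τ - 2*σ := by omega
                nlinarith [mul_pos fa fd])
            (by have fd : (0:ℤ) < 2 - τ - 2*σ := by omega
                nlinarith [fd]))
      · -- C2 : triangle (s, p+2u, p), z = p+v
        exact hno (p.1 + v.1, p.2 + v.2)
          (coord_triangle_interior hconv p u v hD1 s (p.1 + 2 * u.1, p.2 + 2 * u.2)
            p (p.1 + v.1, p.2 + v.2)
            σ τ 2 0 0 0 0 1 hsΔ hq hp es1 es2 eq3 eq4 eq9 eq10 eq5 eq6
            (by have fa : (0:ℤ) < -σ := by omega
                have fd : (0:ℤ) < 2*τ := by omega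
                nlinarith [mul_pos fa fd])
            (by have fa : (0:ℤ) < 2*τ + σ - 2 := by omega
                have fd : (0:ℤ) < 2*τ := by omega
                nlinarith [mul_pos fa fd])
            (by have fd : (0:ℤ) < 2*τ := by omega
                nlinarith [fd]))
    · rcases le_or_gt σ (-τ) with hc2 | hc2
      · -- C3 : triangle (s, p+v, p+2u), z = p+u
        exact hno (p.1 + u.1, p.2 + u.2)
          (coord_triangle_interior hconv p u v hD1 s (p.1 + v.1, p.2 + v.2)
            (p.1 + 2 * u.1, p.2 + 2 * u.2) (p.1 + u.1, p.2 + u.2)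
            σ τ 0 1 2 0 1 0 hsΔ hmv hq es1 es2 eq5 eq6 eq3 eq4 eq1 eq2
            (by have fa : (0:ℤ) < -τ := by omega
                have fd : (0:ℤ) < 2 - σ - 2*τ := by omega
                nlinarith [mul_pos fa fd])
            (by have fa : (0:ℤ) < 1 - σ - τ := by omega
                have fd : (0:ℤ) < 2 - σ - 2*τ := by omega
                nlinarith [mul_pos fa fd])
            (by have fd : (0:ℤ) < 2 - σ - 2*τ := by omega
                nlinarith [fd]))
      · -- C4 : triangle (s, p+2v, p), z = p+u
        exact hno (p.1 + u.1, p.2 + u.2)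
          (coord_triangle_interior hconv p u v hD1 s (p.1 + 2 * v.1, p.2 + 2 * v.2)
            p (p.1 + u.1, p.2 + u.2)
            σ τ 0 2 0 0 1 0 hsΔ hr hp es1 es2 eq7 eq8 eq9 eq10 eq1 eq2
            (by have fa : (0:ℤ) < -τ := by omega
                have fd : (0:ℤ) < 2*σ := by omega
                nlinarith [mul_pos fa fd])
            (by have fa : (0:ℤ) < 2*σ + τ - 2 := by omega
                have fd : (0:ℤ) < 2*σ := by omega
                nlinarith [mul_pos fa fd])
            (by have fd : (0:ℤ) < 2*σ := by omega
                nlinarith [fd]))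
    · rcases le_or_gt 2 σ with hc2 | hc2
      · -- C5 : triangle (s, p+u, p+2v), z = p+u+v
        exact hno (p.1 + u.1 + v.1, p.2 + u.2 + v.2)
          (coord_triangle_interior hconv p u v hD1 s (p.1 + u.1, p.2 + u.2)
            (p.1 + 2 * v.1, p.2 + 2 * v.2) (p.1 + u.1 + v.1, p.2 + u.2 + v.2)
            σ τ 1 0 0 2 1 1 hsΔ hmu hr es1 es2 eq1 eq2 eq7 eq8 eq11 eq12
            (by have fa : (0:ℤ) < σ + τ - 2 := by omega
                have fd : (0:ℤ) < 2*σ + τ - 2 := by omega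
                nlinarith [mul_pos fa fd])
            (by have fa : (0:ℤ) < σ - 1 := by omega
                have fd : (0:ℤ) < 2*σ + τ - 2 := by omega
                nlinarith [mul_pos fa fd])
            (by have fd : (0:ℤ) < 2*σ + τ - 2 := by omega
                nlinarith [fd]))
      · -- C6 : triangle (s, p+2u, p), z = p+u+v
        exact hno (p.1 + u.1 + v.1, p.2 + u.2 + v.2)
          (coord_triangle_interior hconv p u v hD1 s (p.1 + 2 * u.1, p.2 + 2 * u.2)
            p (p.1 + u.1 + v.1, p.2 + u.2 + v.2)
            σ τ 2 0 0 0 1 1 hsΔ hq hp es1 es2 eq3 eq4 eq9 eq10 eq11 eq12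
            (by have fa : (0:ℤ) < τ - σ := by omega
                have fd : (0:ℤ) < 2*τ := by omega
                nlinarith [mul_pos fa fd])
            (by have fa : (0:ℤ) < σ + τ - 2 := by omega
                have fd : (0:ℤ) < 2*τ := by omega
                nlinarith [mul_pos fa fd])
            (by have fd : (0:ℤ) < 2*τ := by omega
                nlinarith [fd]))
  -- now the hull equality
  refine ⟨p, u, v, by rw [hD1]; norm_num, ?_⟩
  apply Set.Subset.antisymm
  · rw [hΔ]
    apply convexHull_min ?_ (convex_convexHull ℝ _)
    rintro x ⟨s, hs, rfl⟩
    obtain ⟨h0, h1, h2⟩ := key s hs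
    obtain ⟨es1, es2⟩ := hcoord s
    set σ : ℤ := (s.1 - p.1) * v.2 - (s.2 - p.2) * v.1 with hσ
    set τ : ℤ := u.1 * (s.2 - p.2) - u.2 * (s.1 - p.1) with hτ
    have es1R : (s.1 : ℝ) - (p.1 : ℝ) = (σ : ℝ) * (u.1 : ℝ) + (τ : ℝ) * (v.1 : ℝ) := by
      exact_mod_cast es1
    have es2R : (s.2 : ℝ) - (p.2 : ℝ) = (σ : ℝ) * (u.2 : ℝ) + (τ : ℝ) * (v.2 : ℝ) := by
      exact_mod_cast es2
    have h0R : (0 : ℝ) ≤ (σ : ℝ) := by exact_mod_cast h0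
    have h1R : (0 : ℝ) ≤ (τ : ℝ) := by exact_mod_cast h1
    have h2R : (σ : ℝ) + (τ : ℝ) ≤ 2 := by exact_mod_cast h2
    have hcmb := combo3_mem ((p.1 : ℝ), (p.2 : ℝ))
      (((p.1 + 2 * u.1 : ℤ) : ℝ), ((p.2 + 2 * u.2 : ℤ) : ℝ))
      (((p.1 + 2 * v.1 : ℤ) : ℝ), ((p.2 + 2 * v.2 : ℤ) : ℝ))
      (a := (2 - (σ : ℝ) - (τ : ℝ)) / 2) (b := (σ : ℝ) / 2) (c := (τ : ℝ) / 2)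
      (by linarith) (by linarith) (by linarith) (by ring)
    have heq : ((2 - (σ : ℝ) - (τ : ℝ)) / 2) • ((p.1 : ℝ), (p.2 : ℝ))
        + ((σ : ℝ) / 2) • (((p.1 + 2 * u.1 : ℤ) : ℝ), ((p.2 + 2 * u.2 : ℤ) : ℝ))
        + ((τ : ℝ) / 2) • (((p.1 + 2 * v.1 : ℤ) : ℝ), ((p.2 + 2 * v.2 : ℤ) : ℝ))
        = ((s.1 : ℝ), (s.2 : ℝ)) := by
      have c1 : (((2 - (σ : ℝ) - (τ : ℝ)) / 2) • ((p.1 : ℝ), (p.2 : ℝ))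
          + ((σ : ℝ) / 2) • (((p.1 + 2 * u.1 : ℤ) : ℝ), ((p.2 + 2 * u.2 : ℤ) : ℝ))
          + ((τ : ℝ) / 2) • (((p.1 + 2 * v.1 : ℤ) : ℝ), ((p.2 + 2 * v.2 : ℤ) : ℝ))).1
          = ((2 - (σ : ℝ) - (τ : ℝ)) / 2) * (p.1 : ℝ)
          + ((σ : ℝ) / 2) * ((p.1 + 2 * u.1 : ℤ) : ℝ)
          + ((τ : ℝ) / 2) * ((p.1 + 2 * v.1 : ℤ) : ℝ) := rfl
      have c2 : (((2 - (σ : ℝ) - (τ : ℝ)) / 2) • ((p.1 : ℝ), (p.2 : ℝ))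
          + ((σ : ℝ) / 2) • (((p.1 + 2 * u.1 : ℤ) : ℝ), ((p.2 + 2 * u.2 : ℤ) : ℝ))
          + ((τ : ℝ) / 2) • (((p.1 + 2 * v.1 : ℤ) : ℝ), ((p.2 + 2 * v.2 : ℤ) : ℝ))).2
          = ((2 - (σ : ℝ) - (τ : ℝ)) / 2) * (p.2 : ℝ)
          + ((σ : ℝ) / 2) * ((p.2 + 2 * u.2 : ℤ) : ℝ)
          + ((τ : ℝ) / 2) * ((p.2 + 2 * v.2 : ℤ) : ℝ) := rfl
      refine Prod.ext ?_ ?_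
      · rw [c1]
        push_cast
        linear_combination -es1R
      · rw [c2]
        push_cast
        linear_combination -es2R
    rw [heq] at hcmb
    exact hcmb
  · apply convexHull_min ?_ hconv
    rintro x (rfl | rfl | rfl)
    · exact hp
    · exact hq
    · exact hr




set_option maxHeartbeats 2000000 in
lemma case1_main (S : Finset (ℤ × ℤ)) (Δ : Set (ℝ × ℝ))
    (hΔ : Δ = convexHull ℝ ((fun p : ℤ × ℤ => ((p.1 : ℝ), (p.2 : ℝ))) '' ↑S))
    (hconv : Convex ℝ Δ)
    (hno : ∀ q : ℤ × ℤ, ι q ∉ interior Δ)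
    (hS : S.Nonempty)
    (p d e : ℤ × ℤ) (g : ℤ) (hg : 1 ≤ g)
    (hdet : d.1 * e.2 - d.2 * e.1 = 1)
    (hp : ι p ∈ Δ) (hq : ι (p.1 + 2 * g * d.1, p.2 + 2 * g * d.2) ∈ Δ)
    (htau : ∀ x ∈ Δ, 0 ≤ (d.1 : ℝ) * (x.2 - (p.2 : ℝ)) - (d.2 : ℝ) * (x.1 - (p.1 : ℝ))) :
    (∃ n : ℤ × ℤ, n ≠ 0 ∧ ∃ c : ℤ, ∀ x ∈ Δ,
        (c : ℝ) ≤ (n.1 : ℝ) * x.1 + (n.2 : ℝ) * x.2 ∧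
        (n.1 : ℝ) * x.1 + (n.2 : ℝ) * x.2 ≤ (c : ℝ) + 1) ∨
      (∃ v a b : ℤ × ℤ, |a.1 * b.2 - a.2 * b.1| = 1 ∧
        Δ = convexHull ℝ
          {((v.1 : ℝ), (v.2 : ℝ)),
           (((v.1 + 2 * a.1 : ℤ) : ℝ), ((v.2 + 2 * a.2 : ℤ) : ℝ)),
           (((v.1 + 2 * b.1 : ℤ) : ℝ), ((v.2 + 2 * b.2 : ℤ) : ℝ))}) := by
  set T : ℤ := S.sup' hS (fun s => d.1 * (s.2 - p.2) - d.2 * (s.1 - p.1)) with hTdef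
  have hub : ∀ s ∈ S, d.1 * (s.2 - p.2) - d.2 * (s.1 - p.1) ≤ T := by
    intro s hs
    rw [hTdef]
    exact Finset.le_sup' (fun s => d.1 * (s.2 - p.2) - d.2 * (s.1 - p.1)) hs
  obtain ⟨s₀, hs₀S, hs₀⟩ := Finset.exists_mem_eq_sup' hS
    (fun s => d.1 * (s.2 - p.2) - d.2 * (s.1 - p.1))
  have hs₀' : d.1 * (s₀.2 - p.2) - d.2 * (s₀.1 - p.1) = T := by
    rw [hTdef]
    exact hs₀.symm
  have hs₀Δ : ι s₀ ∈ Δ := by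
    rw [hΔ]; exact subset_convexHull _ _ ⟨s₀, hs₀S, rfl⟩
  by_cases hT : T ≤ 1
  · -- width one in the direction dual to d
    left
    refine ⟨(-d.2, d.1), ?_, -d.2 * p.1 + d.1 * p.2, ?_⟩
    · intro h0
      have h1 : -d.2 = 0 := congrArg Prod.fst h0
      have h2 : d.1 = 0 := congrArg Prod.snd h0
      rw [h2] at hdet
      have : d.2 = 0 := by omega
      rw [this] at hdet
      simp at hdet
    · intro x hx
      constructor
      · have := htau x hx
        push_cast
        linarith
      · have hb : ∀ y ∈ ((fun p : ℤ × ℤ => ((p.1 : ℝ), (p.2 : ℝ))) '' ↑S),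
            ((-d.2 : ℤ) : ℝ) * y.1 + ((d.1 : ℤ) : ℝ) * y.2
              ≤ ((-d.2 * p.1 + d.1 * p.2 : ℤ) : ℝ) + 1 := by
          rintro y ⟨s, hs, rfl⟩
          have h1 := hub s hs
          have h2 : d.1 * (s.2 - p.2) - d.2 * (s.1 - p.1) ≤ 1 := le_trans h1 hT
          dsimp only
          push_cast
          have h2R : ((d.1 : ℝ)) * ((s.2 : ℝ) - p.2) - (d.2 : ℝ) * ((s.1 : ℝ) - p.1) ≤ 1 := by
            exact_mod_cast h2
          linarith
        have := hull_le hb x (by rw [← hΔ]; exact hx)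
        push_cast at this ⊢
        linarith
  · -- T ≥ 2
    have hT2 : 2 ≤ T := by omega
    have hTpos : (0 : ℤ) < T := by omega
    have hT0 : T ≠ 0 := by omega
    set σ0 : ℤ := (s₀.1 - p.1) * e.2 - (s₀.2 - p.2) * e.1 with hσ0
    have ec1 : s₀.1 - p.1 = σ0 * d.1 + T * e.1 := by
      rw [hσ0]
      linear_combination (-(s₀.1 - p.1)) * hdet + e.1 * hs₀'
    have ec2 : s₀.2 - p.2 = σ0 * d.2 + T * e.2 := by
      rw [hσ0]
      linear_combination (-(s₀.2 - p.2)) * hdet + e.2 * hs₀'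
    have hdiv := Int.mul_ediv_add_emod σ0 T
    have hr0 := Int.emod_nonneg σ0 hT0
    have hrT := Int.emod_lt_of_pos σ0 hTpos
    by_cases hexc : g = 1 ∧ T = 2 ∧ σ0 % T = 0
    · -- exceptional case: twice a primitive triangle
      obtain ⟨hg1, hT2', hrz⟩ := hexc
      right
      have heven : σ0 = 2 * (σ0 / 2) := by
        rw [hT2'] at hdiv hrz
        omega
      rw [hT2'] at ec1 ec2
      have hq' : ι (p.1 + 2 * d.1, p.2 + 2 * d.2) ∈ Δ := by
        have e1 : p.1 + 2 * d.1 = p.1 + 2 * g * d.1 := by rw [hg1]; ring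
        have e2 : p.2 + 2 * d.2 = p.2 + 2 * g * d.2 := by rw [hg1]; ring
        rw [e1, e2]
        exact hq
      have hr' : ι (p.1 + 2 * (σ0 / 2 * d.1 + e.1), p.2 + 2 * (σ0 / 2 * d.2 + e.2)) ∈ Δ := by
        have e1 : p.1 + 2 * (σ0 / 2 * d.1 + e.1) = s₀.1 := by linear_combination -ec1 - d.1 * heven
        have e2 : p.2 + 2 * (σ0 / 2 * d.2 + e.2) = s₀.2 := by linear_combination -ec2 - d.2 * heven
        rw [e1, e2]
        exact hs₀Δ
      have hDpos : 0 < d.1 * (σ0 / 2 * d.2 + e.2) - d.2 * (σ0 / 2 * d.1 + e.1) := by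
        have : d.1 * (σ0 / 2 * d.2 + e.2) - d.2 * (σ0 / 2 * d.1 + e.1)
            = d.1 * e.2 - d.2 * e.1 := by ring
        rw [this, hdet]
        omega
      exact triangle_case S Δ hΔ hconv hno p d (σ0 / 2 * d.1 + e.1, σ0 / 2 * d.2 + e.2)
        hp hq' hr' hDpos
    · -- non-exceptional: interior lattice point, contradiction
      exfalso
      set M : ℤ := σ0 / T + 1 with hM
      have hMT : M * T = σ0 - σ0 % T + T := by
        rw [hM]
        linear_combination hdiv
      have f1 : 0 < M * T - σ0 := by
        have : M * T - σ0 = T - σ0 % T := by linear_combination hMT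
        omega
      have fd : 0 < 2 * g * T := by positivity
      have f3 : 0 < 2 * g * T - (M * T - σ0) - 2 * g := by
        have e0 : M * T - σ0 = T - σ0 % T := by linear_combination hMT
        rcases eq_or_lt_of_le hg with hg1 | hg2
        · -- g = 1
          rw [e0, ← hg1]
          have : ¬(T = 2 ∧ σ0 % T = 0) := by
            intro ⟨a, b⟩; exact hexc ⟨hg1.symm, a, b⟩
          omega
        · -- g ≥ 2
          rw [e0]
          have hprod : 0 ≤ (g - 2) * (T - 1) := mul_nonneg (by omega) (by omega)
          have hexp : (g - 2) * (T - 1) = g * T - g - 2 * T + 2 := by ring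
          linarith [hprod, hr0, hT2, hexp]
      refine hno (p.1 + M * d.1 + e.1, p.2 + M * d.2 + e.2) ?_
      apply coord_triangle_interior hconv p d e hdet
        p (p.1 + 2 * g * d.1, p.2 + 2 * g * d.2) s₀
        (p.1 + M * d.1 + e.1, p.2 + M * d.2 + e.2)
        0 0 (2 * g) 0 σ0 T M 1
        hp hq hs₀Δ
        (by ring) (by ring) (by dsimp only; ring) (by dsimp only; ring)
        (by linear_combination ec1) (by linear_combination ec2)
        (by dsimp only; ring) (by dsimp only; ring)
      · have fa : 0 < M * T - σ0 := f1
        nlinarith [mul_pos fa fd]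
      · nlinarith [fd]
      · nlinarith [mul_pos f3 fd]




/-- width-one conclusion from integer bounds on the generating set -/
lemma width_from_S (S : Finset (ℤ × ℤ)) (Δ : Set (ℝ × ℝ))
    (hΔ : Δ = convexHull ℝ ((fun p : ℤ × ℤ => ((p.1 : ℝ), (p.2 : ℝ))) '' ↑S))
    (n : ℤ × ℤ) (hn : n ≠ 0) (c : ℤ)
    (hb : ∀ s ∈ S, c ≤ n.1 * s.1 + n.2 * s.2 ∧ n.1 * s.1 + n.2 * s.2 ≤ c + 1) :
    ∃ n : ℤ × ℤ, n ≠ 0 ∧ ∃ c : ℤ, ∀ x ∈ Δ,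
        (c : ℝ) ≤ (n.1 : ℝ) * x.1 + (n.2 : ℝ) * x.2 ∧
        (n.1 : ℝ) * x.1 + (n.2 : ℝ) * x.2 ≤ (c : ℝ) + 1 := by
  refine ⟨n, hn, c, ?_⟩
  intro x hx
  rw [hΔ] at hx
  constructor
  · refine hull_ge ?_ x hx
    rintro y ⟨s, hs, rfl⟩
    dsimp only
    have := (hb s hs).1
    have : ((c : ℤ) : ℝ) ≤ ((n.1 * s.1 + n.2 * s.2 : ℤ) : ℝ) := by exact_mod_cast this
    push_cast at this ⊢
    linarith
  · refine hull_le ?_ x hx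
    rintro y ⟨s, hs, rfl⟩
    dsimp only
    have := (hb s hs).2
    have : ((n.1 * s.1 + n.2 * s.2 : ℤ) : ℝ) ≤ ((c + 1 : ℤ) : ℝ) := by exact_mod_cast this
    push_cast at this ⊢
    linarith

lemma claim_unit_abs {Δ : Set (ℝ × ℝ)} (hconv : Convex ℝ Δ)
    (hno : ∀ q : ℤ × ℤ, ι q ∉ interior Δ)
    (hK2 : ∀ x w : ℤ × ℤ, ι x ∈ Δ → ι (x.1 + 2 * w.1, x.2 + 2 * w.2) ∈ Δ →
      w.1 = 0 ∧ w.2 = 0)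
    (p u v : ℤ × ℤ) (hp : ι p ∈ Δ) (hq : ι (p.1 + u.1, p.2 + u.2) ∈ Δ)
    (hr : ι (p.1 + v.1, p.2 + v.2) ∈ Δ)
    (hD : u.1 * v.2 - u.2 * v.1 ≠ 0) :
    u.1 * v.2 - u.2 * v.1 = 1 ∨ u.1 * v.2 - u.2 * v.1 = -1 := by
  rcases lt_or_gt_of_ne hD with hlt | hgt
  · right
    have he : v.1 * u.2 - v.2 * u.1 = -(u.1 * v.2 - u.2 * v.1) := by ring
    have hpos : 0 < v.1 * u.2 - v.2 * u.1 := by omega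
    have := claim_unit hconv hno hK2 p v u hp hr hq hpos
    omega
  · left
    exact claim_unit hconv hno hK2 p u v hp hq hr hgt

set_option maxHeartbeats 2000000 in
lemma case2_pos (S : Finset (ℤ × ℤ)) (Δ : Set (ℝ × ℝ))
    (hΔ : Δ = convexHull ℝ ((fun p : ℤ × ℤ => ((p.1 : ℝ), (p.2 : ℝ))) '' ↑S))
    (hconv : Convex ℝ Δ)
    (hno : ∀ q : ℤ × ℤ, ι q ∉ interior Δ)
    (hK2 : ∀ x w : ℤ × ℤ, ι x ∈ Δ → ι (x.1 + 2 * w.1, x.2 + 2 * w.2) ∈ Δ →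
      w.1 = 0 ∧ w.2 = 0)
    (A B C : ℤ × ℤ) (hA : A ∈ S) (hB : B ∈ S) (hC : C ∈ S)
    (hdet : (B.1 - A.1) * (C.2 - A.2) - (B.2 - A.2) * (C.1 - A.1) = 1) :
    ∃ n : ℤ × ℤ, n ≠ 0 ∧ ∃ c : ℤ, ∀ x ∈ Δ,
        (c : ℝ) ≤ (n.1 : ℝ) * x.1 + (n.2 : ℝ) * x.2 ∧
        (n.1 : ℝ) * x.1 + (n.2 : ℝ) * x.2 ≤ (c : ℝ) + 1 := by
  have hAΔ : ι A ∈ Δ := by rw [hΔ]; exact subset_convexHull _ _ ⟨A, hA, rfl⟩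
  have hBΔ : ι B ∈ Δ := by rw [hΔ]; exact subset_convexHull _ _ ⟨B, hB, rfl⟩
  have hCΔ : ι C ∈ Δ := by rw [hΔ]; exact subset_convexHull _ _ ⟨C, hC, rfl⟩
  have hmemS : ∀ s ∈ S, ι s ∈ Δ := by
    intro s hs; rw [hΔ]; exact subset_convexHull _ _ ⟨s, hs, rfl⟩
  -- coordinates
  have hcoord : ∀ s : ℤ × ℤ,
      s.1 - A.1 = ((s.1 - A.1) * (C.2 - A.2) - (s.2 - A.2) * (C.1 - A.1)) * (B.1 - A.1)
        + ((B.1 - A.1) * (s.2 - A.2) - (B.2 - A.2) * (s.1 - A.1)) * (C.1 - A.1) ∧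
      s.2 - A.2 = ((s.1 - A.1) * (C.2 - A.2) - (s.2 - A.2) * (C.1 - A.1)) * (B.2 - A.2)
        + ((B.1 - A.1) * (s.2 - A.2) - (B.2 - A.2) * (s.1 - A.1)) * (C.2 - A.2) := by
    intro s
    constructor
    · linear_combination (-(s.1 - A.1)) * hdet
    · linear_combination (-(s.2 - A.2)) * hdet
  -- classification of points of S
  have hclassify : ∀ s ∈ S, s = A ∨ s = B ∨ s = C ∨
      (Odd ((s.1 - A.1) * (C.2 - A.2) - (s.2 - A.2) * (C.1 - A.1)) ∧
       Odd ((B.1 - A.1) * (s.2 - A.2) - (B.2 - A.2) * (s.1 - A.1))) := by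
    intro s hs
    have hsΔ := hmemS s hs
    obtain ⟨hc1, hc2⟩ := hcoord s
    rcases Int.even_or_odd ((s.1 - A.1) * (C.2 - A.2) - (s.2 - A.2) * (C.1 - A.1)) with
      ⟨k, hk⟩ | ⟨k, hk⟩
    · rcases Int.even_or_odd ((B.1 - A.1) * (s.2 - A.2) - (B.2 - A.2) * (s.1 - A.1)) with
        ⟨l, hl⟩ | ⟨l, hl⟩
      · -- even, even : s = A
        left
        have e1 : s.1 = A.1 + 2 * (k * (B.1 - A.1) + l * (C.1 - A.1)) := by
          linear_combination hc1 + (B.1 - A.1) * hk + (C.1 - A.1) * hl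
        have e2 : s.2 = A.2 + 2 * (k * (B.2 - A.2) + l * (C.2 - A.2)) := by
          linear_combination hc2 + (B.2 - A.2) * hk + (C.2 - A.2) * hl
        have hm : ι (A.1 + 2 * (k * (B.1 - A.1) + l * (C.1 - A.1)),
            A.2 + 2 * (k * (B.2 - A.2) + l * (C.2 - A.2))) ∈ Δ := by
          have hpair : ((A.1 + 2 * (k * (B.1 - A.1) + l * (C.1 - A.1)),
              A.2 + 2 * (k * (B.2 - A.2) + l * (C.2 - A.2))) : ℤ × ℤ) = s :=
            Prod.ext e1.symm e2.symm
          rw [hpair]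
          exact hsΔ
        obtain ⟨hz1, hz2⟩ := hK2 A (k * (B.1 - A.1) + l * (C.1 - A.1),
          k * (B.2 - A.2) + l * (C.2 - A.2)) hAΔ hm
        dsimp only at hz1 hz2
        exact Prod.ext (by omega) (by omega)
      · -- even, odd : s = C
        right; right; left
        have e1 : s.1 = C.1 + 2 * (k * (B.1 - A.1) + l * (C.1 - A.1)) := by
          linear_combination hc1 + (B.1 - A.1) * hk + (C.1 - A.1) * hl
        have e2 : s.2 = C.2 + 2 * (k * (B.2 - A.2) + l * (C.2 - A.2)) := by
          linear_combination hc2 + (B.2 - A.2) * hk + (C.2 - A.2) * hl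
        have hm : ι (C.1 + 2 * (k * (B.1 - A.1) + l * (C.1 - A.1)),
            C.2 + 2 * (k * (B.2 - A.2) + l * (C.2 - A.2))) ∈ Δ := by
          have hpair : ((C.1 + 2 * (k * (B.1 - A.1) + l * (C.1 - A.1)),
              C.2 + 2 * (k * (B.2 - A.2) + l * (C.2 - A.2))) : ℤ × ℤ) = s :=
            Prod.ext e1.symm e2.symm
          rw [hpair]
          exact hsΔ
        obtain ⟨hz1, hz2⟩ := hK2 C (k * (B.1 - A.1) + l * (C.1 - A.1),
          k * (B.2 - A.2) + l * (C.2 - A.2)) hCΔ hm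
        dsimp only at hz1 hz2
        exact Prod.ext (by omega) (by omega)
    · rcases Int.even_or_odd ((B.1 - A.1) * (s.2 - A.2) - (B.2 - A.2) * (s.1 - A.1)) with
        ⟨l, hl⟩ | ⟨l, hl⟩
      · -- odd, even : s = B
        right; left
        have e1 : s.1 = B.1 + 2 * (k * (B.1 - A.1) + l * (C.1 - A.1)) := by
          linear_combination hc1 + (B.1 - A.1) * hk + (C.1 - A.1) * hl
        have e2 : s.2 = B.2 + 2 * (k * (B.2 - A.2) + l * (C.2 - A.2)) := by
          linear_combination hc2 + (B.2 - A.2) * hk + (C.2 - A.2) * hl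
        have hm : ι (B.1 + 2 * (k * (B.1 - A.1) + l * (C.1 - A.1)),
            B.2 + 2 * (k * (B.2 - A.2) + l * (C.2 - A.2))) ∈ Δ := by
          have hpair : ((B.1 + 2 * (k * (B.1 - A.1) + l * (C.1 - A.1)),
              B.2 + 2 * (k * (B.2 - A.2) + l * (C.2 - A.2))) : ℤ × ℤ) = s :=
            Prod.ext e1.symm e2.symm
          rw [hpair]
          exact hsΔ
        obtain ⟨hz1, hz2⟩ := hK2 B (k * (B.1 - A.1) + l * (C.1 - A.1),
          k * (B.2 - A.2) + l * (C.2 - A.2)) hBΔ hm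
        dsimp only at hz1 hz2
        exact Prod.ext (by omega) (by omega)
      · right; right; right
        exact ⟨⟨k, hk⟩, ⟨l, hl⟩⟩
  have hBne : B.1 - A.1 ≠ 0 ∨ B.2 - A.2 ≠ 0 := by
    by_contra hcon
    push_neg at hcon
    obtain ⟨e1, e2⟩ := hcon
    rw [e1, e2] at hdet
    simp at hdet
  have hCne : C.1 - A.1 ≠ 0 ∨ C.2 - A.2 ≠ 0 := by
    by_contra hcon
    push_neg at hcon
    obtain ⟨e1, e2⟩ := hcon
    rw [e1, e2] at hdet
    simp at hdet
  have hτA : (B.1 - A.1) * (A.2 - A.2) - (B.2 - A.2) * (A.1 - A.1) = 0 := by ring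
  have hτB : (B.1 - A.1) * (B.2 - A.2) - (B.2 - A.2) * (B.1 - A.1) = 0 := by ring
  have hτC : (B.1 - A.1) * (C.2 - A.2) - (B.2 - A.2) * (C.1 - A.1) = 1 := hdet
  -- generic bound helpers
  have hbndτ : ∀ s : ℤ × ℤ, ∀ t : ℤ,
      (B.1 - A.1) * (s.2 - A.2) - (B.2 - A.2) * (s.1 - A.1) = t → 0 ≤ t → t ≤ 1 →
      (-(B.2 - A.2) * A.1 + (B.1 - A.1) * A.2 ≤ (-(B.2 - A.2)) * s.1 + (B.1 - A.1) * s.2 ∧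
       (-(B.2 - A.2)) * s.1 + (B.1 - A.1) * s.2 ≤ -(B.2 - A.2) * A.1 + (B.1 - A.1) * A.2 + 1) := by
    intro s t ht h0 h1
    have hid : (-(B.2 - A.2)) * s.1 + (B.1 - A.1) * s.2
        = -(B.2 - A.2) * A.1 + (B.1 - A.1) * A.2
          + ((B.1 - A.1) * (s.2 - A.2) - (B.2 - A.2) * (s.1 - A.1)) := by ring
    constructor <;> linarith [hid, ht]
  have hbndσ : ∀ s : ℤ × ℤ, ∀ t : ℤ,
      (s.1 - A.1) * (C.2 - A.2) - (s.2 - A.2) * (C.1 - A.1) = t → 0 ≤ t → t ≤ 1 →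
      ((C.2 - A.2) * A.1 + (-(C.1 - A.1)) * A.2 ≤ (C.2 - A.2) * s.1 + (-(C.1 - A.1)) * s.2 ∧
       (C.2 - A.2) * s.1 + (-(C.1 - A.1)) * s.2 ≤ (C.2 - A.2) * A.1 + (-(C.1 - A.1)) * A.2 + 1) := by
    intro s t ht h0 h1
    have hid : (C.2 - A.2) * s.1 + (-(C.1 - A.1)) * s.2
        = (C.2 - A.2) * A.1 + (-(C.1 - A.1)) * A.2
          + ((s.1 - A.1) * (C.2 - A.2) - (s.2 - A.2) * (C.1 - A.1)) := by ring
    constructor <;> linarith [hid, ht]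
  have hnτ : ((-(B.2 - A.2), B.1 - A.1) : ℤ × ℤ) ≠ 0 := by
    intro h0
    have h1 := congrArg Prod.fst h0
    have h2 := congrArg Prod.snd h0
    simp only [Prod.fst_zero, Prod.snd_zero] at h1 h2
    rcases hBne with h | h <;> omega
  have hnσ : (((C.2 - A.2), -(C.1 - A.1)) : ℤ × ℤ) ≠ 0 := by
    intro h0
    have h1 := congrArg Prod.fst h0
    have h2 := congrArg Prod.snd h0
    simp only [Prod.fst_zero, Prod.snd_zero] at h1 h2
    rcases hCne with h | h <;> omega
  by_cases hD0ex : ∃ s₀ ∈ S,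
      Odd ((s₀.1 - A.1) * (C.2 - A.2) - (s₀.2 - A.2) * (C.1 - A.1)) ∧
      Odd ((B.1 - A.1) * (s₀.2 - A.2) - (B.2 - A.2) * (s₀.1 - A.1))
  · obtain ⟨D₀, hD₀S, hσOdd, hτOdd⟩ := hD0ex
    have hD₀Δ := hmemS D₀ hD₀S
    obtain ⟨hcD1, hcD2⟩ := hcoord D₀
    -- uniqueness of the odd-odd point
    have huniq : ∀ s ∈ S, s = A ∨ s = B ∨ s = C ∨ s = D₀ := by
      intro s hs
      rcases hclassify s hs with h | h | h | ⟨⟨k, hk⟩, ⟨l, hl⟩⟩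
      · exact Or.inl h
      · exact Or.inr (Or.inl h)
      · exact Or.inr (Or.inr (Or.inl h))
      · right; right; right
        obtain ⟨k', hk'⟩ := hσOdd
        obtain ⟨l', hl'⟩ := hτOdd
        obtain ⟨hc1, hc2⟩ := hcoord s
        have e1 : s.1 = D₀.1 + 2 * ((k - k') * (B.1 - A.1) + (l - l') * (C.1 - A.1)) := by
          linear_combination hc1 - hcD1 + (B.1 - A.1) * hk - (B.1 - A.1) * hk'
            + (C.1 - A.1) * hl - (C.1 - A.1) * hl'
        have e2 : s.2 = D₀.2 + 2 * ((k - k') * (B.2 - A.2) + (l - l') * (C.2 - A.2)) := by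
          linear_combination hc2 - hcD2 + (B.2 - A.2) * hk - (B.2 - A.2) * hk'
            + (C.2 - A.2) * hl - (C.2 - A.2) * hl'
        have hm : ι (D₀.1 + 2 * ((k - k') * (B.1 - A.1) + (l - l') * (C.1 - A.1)),
            D₀.2 + 2 * ((k - k') * (B.2 - A.2) + (l - l') * (C.2 - A.2))) ∈ Δ := by
          have hpair : ((D₀.1 + 2 * ((k - k') * (B.1 - A.1) + (l - l') * (C.1 - A.1)),
              D₀.2 + 2 * ((k - k') * (B.2 - A.2) + (l - l') * (C.2 - A.2))) : ℤ × ℤ) = s :=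
            Prod.ext e1.symm e2.symm
          rw [hpair]
          exact hmemS s hs
        obtain ⟨hz1, hz2⟩ := hK2 D₀ ((k - k') * (B.1 - A.1) + (l - l') * (C.1 - A.1),
          (k - k') * (B.2 - A.2) + (l - l') * (C.2 - A.2)) hD₀Δ hm
        dsimp only at hz1 hz2
        exact Prod.ext (by omega) (by omega)
    -- memberships in translated form
    have hqB : ι (A.1 + (B.1 - A.1), A.2 + (B.2 - A.2)) ∈ Δ := by
      have he : ((A.1 + (B.1 - A.1), A.2 + (B.2 - A.2)) : ℤ × ℤ) = B :=
        Prod.ext (by dsimp only; omega) (by dsimp only; omega)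
      rw [he]; exact hBΔ
    have hqC : ι (A.1 + (C.1 - A.1), A.2 + (C.2 - A.2)) ∈ Δ := by
      have he : ((A.1 + (C.1 - A.1), A.2 + (C.2 - A.2)) : ℤ × ℤ) = C :=
        Prod.ext (by dsimp only; omega) (by dsimp only; omega)
      rw [he]; exact hCΔ
    have hqD : ι (A.1 + (D₀.1 - A.1), A.2 + (D₀.2 - A.2)) ∈ Δ := by
      have he : ((A.1 + (D₀.1 - A.1), A.2 + (D₀.2 - A.2)) : ℤ × ℤ) = D₀ :=
        Prod.ext (by dsimp only; omega) (by dsimp only; omega)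
      rw [he]; exact hD₀Δ
    have hτne : (B.1 - A.1) * (D₀.2 - A.2) - (B.2 - A.2) * (D₀.1 - A.1) ≠ 0 := by
      obtain ⟨l', hl'⟩ := hτOdd
      omega
    have hτ1 := claim_unit_abs hconv hno hK2 A (B.1 - A.1, B.2 - A.2) (D₀.1 - A.1, D₀.2 - A.2)
      hAΔ hqB hqD hτne
    dsimp only at hτ1
    rcases hτ1 with hτ1 | hτ1
    · -- τ(D₀) = 1 : width in the τ direction
      apply width_from_S S Δ hΔ (-(B.2 - A.2), B.1 - A.1) hnτ
        (-(B.2 - A.2) * A.1 + (B.1 - A.1) * A.2)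
      intro s hs
      rcases huniq s hs with rfl | rfl | rfl | rfl
      · exact hbndτ _ 0 (by ring) (by omega) (by omega)
      · exact hbndτ _ 0 (by ring) (by omega) (by omega)
      · exact hbndτ _ 1 hdet (by omega) (by omega)
      · exact hbndτ _ 1 hτ1 (by omega) (by omega)
    · -- τ(D₀) = -1
      have hσne : (C.1 - A.1) * (D₀.2 - A.2) - (C.2 - A.2) * (D₀.1 - A.1) ≠ 0 := by
        obtain ⟨k', hk'⟩ := hσOdd
        intro h0
        have he : (C.1 - A.1) * (D₀.2 - A.2) - (C.2 - A.2) * (D₀.1 - A.1)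
            = -((D₀.1 - A.1) * (C.2 - A.2) - (D₀.2 - A.2) * (C.1 - A.1)) := by ring
        omega
      have hσ1 := claim_unit_abs hconv hno hK2 A (C.1 - A.1, C.2 - A.2) (D₀.1 - A.1, D₀.2 - A.2)
        hAΔ hqC hqD hσne
      dsimp only at hσ1
      have hσval : (D₀.1 - A.1) * (C.2 - A.2) - (D₀.2 - A.2) * (C.1 - A.1) = 1 ∨
          (D₀.1 - A.1) * (C.2 - A.2) - (D₀.2 - A.2) * (C.1 - A.1) = -1 := by
        have he : (C.1 - A.1) * (D₀.2 - A.2) - (C.2 - A.2) * (D₀.1 - A.1)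
            = -((D₀.1 - A.1) * (C.2 - A.2) - (D₀.2 - A.2) * (C.1 - A.1)) := by ring
        rcases hσ1 with h | h
        · right; omega
        · left; omega
      rcases hσval with hσv | hσv
      · -- σ(D₀) = 1 : width in the σ direction
        apply width_from_S S Δ hΔ ((C.2 - A.2), -(C.1 - A.1)) hnσ
          ((C.2 - A.2) * A.1 + (-(C.1 - A.1)) * A.2)
        intro s hs
        rcases huniq s hs with rfl | rfl | rfl | rfl
        · exact hbndσ _ 0 (by ring) (by omega) (by omega)
        · exact hbndσ _ 1 (by linear_combination hdet) (by omega) (by omega)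
        · exact hbndσ _ 0 (by ring) (by omega) (by omega)
        · exact hbndσ _ 1 hσv (by omega) (by omega)
      · -- σ(D₀) = -1, τ(D₀) = -1 : A is an interior point, contradiction
        exfalso
        refine hno A ?_
        apply coord_triangle_interior hconv A (B.1 - A.1, B.2 - A.2) (C.1 - A.1, C.2 - A.2)
          (by dsimp only; linear_combination hdet)
          B C D₀ A 1 0 0 1 (-1) (-1) 0 0
          hBΔ hCΔ hD₀Δ
          (by dsimp only; ring) (by dsimp only; ring)
          (by dsimp only; ring) (by dsimp only; ring)
          (by dsimp only; linear_combination hcD1 + (B.1 - A.1) * hσv + (C.1 - A.1) * hτ1)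
          (by dsimp only; linear_combination hcD2 + (B.2 - A.2) * hσv + (C.2 - A.2) * hτ1)
          (by dsimp only; ring) (by dsimp only; ring)
          (by norm_num) (by norm_num) (by norm_num)
  · -- no odd-odd point : width in the τ direction
    push_neg at hD0ex
    apply width_from_S S Δ hΔ (-(B.2 - A.2), B.1 - A.1) hnτ
      (-(B.2 - A.2) * A.1 + (B.1 - A.1) * A.2)
    intro s hs
    rcases hclassify s hs with rfl | rfl | rfl | ⟨ho1, ho2⟩
    · exact hbndτ _ 0 (by ring) (by omega) (by omega)
    · exact hbndτ _ 0 (by ring) (by omega) (by omega)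
    · exact hbndτ _ 1 hdet (by omega) (by omega)
    · exact absurd ho2 ((hD0ex s hs) ho1)




lemma tau_nonneg {Δ : Set (ℝ × ℝ)} (f : (ℝ × ℝ) →L[ℝ] ℝ) (m : ℤ × ℤ)
    (hfle : ∀ x ∈ Δ, f x ≤ f (ι m))
    (d e p₂ : ℤ × ℤ)
    (hfd : f ((d.1 : ℝ), (d.2 : ℝ)) = 0)
    (hfe : f ((e.1 : ℝ), (e.2 : ℝ)) < 0)
    (hdet : d.1 * e.2 - d.2 * e.1 = 1)
    (hcol : (d.1 : ℝ) * ((m.2 : ℝ) - (p₂.2 : ℝ)) - (d.2 : ℝ) * ((m.1 : ℝ) - (p₂.1 : ℝ)) = 0) :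
    ∀ x ∈ Δ, 0 ≤ (d.1 : ℝ) * (x.2 - (p₂.2 : ℝ)) - (d.2 : ℝ) * (x.1 - (p₂.1 : ℝ)) := by
  intro x hx
  have hdetR : (d.1 : ℝ) * (e.2 : ℝ) - (d.2 : ℝ) * (e.1 : ℝ) = 1 := by exact_mod_cast hdet
  set α : ℝ := (x.1 - (m.1 : ℝ)) * e.2 - (x.2 - (m.2 : ℝ)) * e.1 with hα
  set β : ℝ := (d.1 : ℝ) * (x.2 - (m.2 : ℝ)) - (d.2 : ℝ) * (x.1 - (m.1 : ℝ)) with hβ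
  have c1 : x.1 - (m.1 : ℝ) = α * d.1 + β * e.1 := by
    rw [hα, hβ]
    linear_combination (-(x.1 - (m.1 : ℝ))) * hdetR
  have c2 : x.2 - (m.2 : ℝ) = α * d.2 + β * e.2 := by
    rw [hα, hβ]
    linear_combination (-(x.2 - (m.2 : ℝ))) * hdetR
  have hxm : x - ι m = α • ((d.1 : ℝ), (d.2 : ℝ)) + β • ((e.1 : ℝ), (e.2 : ℝ)) := by
    have r1 : (α • ((d.1 : ℝ), (d.2 : ℝ)) + β • ((e.1 : ℝ), (e.2 : ℝ))).1
        = α * d.1 + β * e.1 := rfl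
    have r2 : (α • ((d.1 : ℝ), (d.2 : ℝ)) + β • ((e.1 : ℝ), (e.2 : ℝ))).2
        = α * d.2 + β * e.2 := rfl
    refine Prod.ext ?_ ?_
    · rw [r1]; exact c1
    · rw [r2]; exact c2
  have hf1 : f x - f (ι m) = β * f ((e.1 : ℝ), (e.2 : ℝ)) := by
    have := congrArg f hxm
    rw [map_sub] at this
    rw [this, map_add, map_smul, map_smul, hfd]
    simp [smul_eq_mul]
  have hβ0 : 0 ≤ β := by
    by_contra hneg
    push_neg at hneg
    have h1 : 0 < β * f ((e.1 : ℝ), (e.2 : ℝ)) := mul_pos_of_neg_of_neg hneg hfe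
    have h2 := hfle x hx
    linarith [hf1]
  have hid : (d.1 : ℝ) * (x.2 - (p₂.2 : ℝ)) - (d.2 : ℝ) * (x.1 - (p₂.1 : ℝ))
      = β + ((d.1 : ℝ) * ((m.2 : ℝ) - (p₂.2 : ℝ)) - (d.2 : ℝ) * ((m.1 : ℝ) - (p₂.1 : ℝ))) := by
    rw [hβ]; ring
  linarith [hid, hcol, hβ0]

theorem main_thm (S : Finset (ℤ × ℤ)) (Δ : Set (ℝ × ℝ))
    (hΔ : Δ = convexHull ℝ ((fun p : ℤ × ℤ => ((p.1 : ℝ), (p.2 : ℝ))) '' ↑S))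
    (hint : (interior Δ).Nonempty) :
    (∀ p : ℤ × ℤ, ((p.1 : ℝ), (p.2 : ℝ)) ∉ interior Δ) ↔
      ((∃ n : ℤ × ℤ, n ≠ 0 ∧ ∃ c : ℤ, ∀ x ∈ Δ,
          (c : ℝ) ≤ (n.1 : ℝ) * x.1 + (n.2 : ℝ) * x.2 ∧
          (n.1 : ℝ) * x.1 + (n.2 : ℝ) * x.2 ≤ (c : ℝ) + 1) ∨
        (∃ v a b : ℤ × ℤ, |a.1 * b.2 - a.2 * b.1| = 1 ∧
          Δ = convexHull ℝ
            {((v.1 : ℝ), (v.2 : ℝ)),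
             (((v.1 + 2 * a.1 : ℤ) : ℝ), ((v.2 + 2 * a.2 : ℤ) : ℝ)),
             (((v.1 + 2 * b.1 : ℤ) : ℝ), ((v.2 + 2 * b.2 : ℤ) : ℝ))})) := by
  constructor
  · intro hno
    have hno' : ∀ q : ℤ × ℤ, ι q ∉ interior Δ := hno
    have hconv : Convex ℝ Δ := by rw [hΔ]; exact convex_convexHull ℝ _
    have hSne : S.Nonempty := by
      by_contra hS
      rw [Finset.not_nonempty_iff_eq_empty] at hS
      subst hS
      simp only [Finset.coe_empty, Set.image_empty, convexHull_empty] at hΔ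
      rw [hΔ] at hint
      simp at hint
    by_cases hpair : ∃ p w : ℤ × ℤ, ι p ∈ Δ ∧ ι (p.1 + 2 * w.1, p.2 + 2 * w.2) ∈ Δ ∧
        ¬(w.1 = 0 ∧ w.2 = 0)
    · obtain ⟨p, w, hp, hq, hw⟩ := hpair
      have hm : ι (p.1 + w.1, p.2 + w.2) ∈ Δ := by
        apply seg_mem hconv p (p.1 + 2 * w.1, p.2 + 2 * w.2) _ 1 2 (by omega) (by omega)
          (by omega) hp hq <;> (dsimp only; ring)
      obtain ⟨f, hf⟩ := geometric_hahn_banach_open_point hconv.interior isOpen_interior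
        (hno' (p.1 + w.1, p.2 + w.2))
      obtain ⟨x₀, hx₀⟩ := hint
      have hfle : ∀ x ∈ Δ, f x ≤ f (ι (p.1 + w.1, p.2 + w.2)) := by
        intro x hx
        by_contra hgt
        push_neg at hgt
        have h0 := hf _ hx₀
        set fm := f (ι (p.1 + w.1, p.2 + w.2)) with hfm
        have hne : f x - f x₀ ≠ 0 := by intro h; simp only [sub_eq_zero] at h; linarith
        set a : ℝ := (f x - fm) / (f x - f x₀) with haa
        have ha1 : 0 < a := by apply div_pos <;> linarith
        have ha2 : a < 1 := by
          rw [haa, div_lt_one (by linarith)]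
          linarith
        have hmem : a • x₀ + (1 - a) • x ∈ interior Δ :=
          hconv.combo_interior_self_mem_interior hx₀ hx ha1 (by linarith) (by ring)
        have hlt := hf _ hmem
        rw [map_add, map_smul, map_smul] at hlt
        simp only [smul_eq_mul] at hlt
        have hmul : a * (f x - f x₀) = f x - fm := by
          rw [haa]
          field_simp
        nlinarith [hlt, hmul]
      have hadd : ι p + ι (p.1 + 2 * w.1, p.2 + 2 * w.2)
          = (2 : ℝ) • ι (p.1 + w.1, p.2 + w.2) := by
        simp only [ι, Prod.mk_add_mk, Prod.smul_mk, smul_eq_mul, Prod.mk.injEq]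
        constructor <;> (push_cast; ring)
      have hsum : f (ι p) + f (ι (p.1 + 2 * w.1, p.2 + 2 * w.2))
          = 2 * f (ι (p.1 + w.1, p.2 + w.2)) := by
        calc f (ι p) + f (ι (p.1 + 2 * w.1, p.2 + 2 * w.2))
            = f (ι p + ι (p.1 + 2 * w.1, p.2 + 2 * w.2)) := (map_add f _ _).symm
          _ = f ((2 : ℝ) • ι (p.1 + w.1, p.2 + w.2)) := by rw [hadd]
          _ = 2 * f (ι (p.1 + w.1, p.2 + w.2)) := by rw [map_smul]; simp [smul_eq_mul]
      have hfp : f (ι p) = f (ι (p.1 + w.1, p.2 + w.2)) := by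
        have h1 := hfle _ hp
        have h2 := hfle _ hq
        linarith
      have hfq : f (ι (p.1 + 2 * w.1, p.2 + 2 * w.2)) = f (ι (p.1 + w.1, p.2 + w.2)) := by
        have h1 := hfle _ hp
        have h2 := hfle _ hq
        linarith
      -- gcd and Bezout with opaque variables
      set gn : ℕ := Int.gcd w.1 w.2 with hgn
      have hgpos : 0 < gn := by
        rw [hgn, Int.gcd_pos_iff]
        by_contra hcon
        push_neg at hcon
        exact hw ⟨hcon.1, hcon.2⟩
      obtain ⟨g, hgz⟩ : ∃ g : ℤ, g = (gn : ℤ) := ⟨_, rfl⟩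
      have hgposz : 0 < g := by rw [hgz]; exact_mod_cast hgpos
      obtain ⟨d, hd⟩ : ∃ d : ℤ × ℤ, d = (w.1 / g, w.2 / g) := ⟨_, rfl⟩
      have hw1 : w.1 = g * d.1 := by
        rw [hd]; dsimp only
        rw [hgz, hgn]
        rw [Int.mul_ediv_cancel' (Int.gcd_dvd_left _ _)]
      have hw2 : w.2 = g * d.2 := by
        rw [hd]; dsimp only
        rw [hgz, hgn]
        rw [Int.mul_ediv_cancel' (Int.gcd_dvd_right _ _)]
      have hdgcd : Int.gcd d.1 d.2 = 1 := by
        rw [hd]; dsimp only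
        rw [hgz, hgn]
        exact Int.gcd_div_gcd_div_gcd hgpos
      have hbez : d.1 * Int.gcdA d.1 d.2 + d.2 * Int.gcdB d.1 d.2 = 1 := by
        have h := Int.gcd_eq_gcd_ab d.1 d.2
        rw [hdgcd] at h
        exact_mod_cast h.symm
      obtain ⟨e, he⟩ : ∃ e : ℤ × ℤ, e = (-(Int.gcdB d.1 d.2), Int.gcdA d.1 d.2) := ⟨_, rfl⟩
      have hdet : d.1 * e.2 - d.2 * e.1 = 1 := by
        rw [he]; dsimp only; linarith [hbez]
      have hfd : f ((d.1 : ℝ), (d.2 : ℝ)) = 0 := by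
        have hsub : ι (p.1 + 2 * w.1, p.2 + 2 * w.2) - ι p
            = ((2 * g : ℤ) : ℝ) • ((d.1 : ℝ), (d.2 : ℝ)) := by
          simp only [ι, Prod.mk_sub_mk, Prod.smul_mk, smul_eq_mul, Prod.mk.injEq]
          constructor
          · push_cast [hw1]; ring
          · push_cast [hw2]; ring
        have h1 : f (ι (p.1 + 2 * w.1, p.2 + 2 * w.2)) - f (ι p)
            = ((2 * g : ℤ) : ℝ) * f ((d.1 : ℝ), (d.2 : ℝ)) := by
          rw [← map_sub, hsub, map_smul]; simp [smul_eq_mul]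
        have h2 : f (ι (p.1 + 2 * w.1, p.2 + 2 * w.2)) - f (ι p) = 0 := by
          rw [hfp, hfq]; ring
        have h3 : ((2 * g : ℤ) : ℝ) * f ((d.1 : ℝ), (d.2 : ℝ)) = 0 := by
          rw [← h1]; exact h2
        have hg0 : ((2 * g : ℤ) : ℝ) ≠ 0 := by
          simp only [ne_eq, Int.cast_eq_zero]
          omega
        exact (mul_eq_zero.1 h3).resolve_left hg0
      have hfe0 : f ((e.1 : ℝ), (e.2 : ℝ)) ≠ 0 := by
        intro h0
        have hdetR : (d.1 : ℝ) * (e.2 : ℝ) - (d.2 : ℝ) * (e.1 : ℝ) = 1 := by exact_mod_cast hdet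
        set m1 : ℝ := ((p.1 + w.1 : ℤ) : ℝ) with hm1
        set m2 : ℝ := ((p.2 + w.2 : ℤ) : ℝ) with hm2
        set α : ℝ := (x₀.1 - m1) * e.2 - (x₀.2 - m2) * e.1 with hα
        set β : ℝ := (d.1 : ℝ) * (x₀.2 - m2) - (d.2 : ℝ) * (x₀.1 - m1) with hβ
        have c1 : x₀.1 - m1 = α * d.1 + β * e.1 := by
          rw [hα, hβ]
          linear_combination (-(x₀.1 - m1)) * hdetR
        have c2 : x₀.2 - m2 = α * d.2 + β * e.2 := by
          rw [hα, hβ]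
          linear_combination (-(x₀.2 - m2)) * hdetR
        have hxm : x₀ - ι (p.1 + w.1, p.2 + w.2)
            = α • ((d.1 : ℝ), (d.2 : ℝ)) + β • ((e.1 : ℝ), (e.2 : ℝ)) := by
          refine Prod.ext ?_ ?_
          · show x₀.1 - m1 = α * d.1 + β * e.1
            exact c1
          · show x₀.2 - m2 = α * d.2 + β * e.2
            exact c2
        have hfx := congrArg f hxm
        rw [map_sub, map_add, map_smul, map_smul, hfd, h0] at hfx
        simp only [smul_eq_mul, mul_zero, add_zero] at hfx
        have hlt := hf _ hx₀
        linarith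
      rcases lt_or_gt_of_ne hfe0 with hfe | hfe
      · have htau := tau_nonneg f (p.1 + w.1, p.2 + w.2) hfle d e p hfd hfe hdet
          (by
            show (d.1 : ℝ) * (((p.2 + w.2 : ℤ) : ℝ) - (p.2 : ℝ))
              - (d.2 : ℝ) * (((p.1 + w.1 : ℤ) : ℝ) - (p.1 : ℝ)) = 0
            push_cast [hw1, hw2]
            ring)
        have hq' : ι (p.1 + 2 * g * d.1, p.2 + 2 * g * d.2) ∈ Δ := by
          have hpe : ((p.1 + 2 * g * d.1, p.2 + 2 * g * d.2) : ℤ × ℤ)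
              = (p.1 + 2 * w.1, p.2 + 2 * w.2) := by
            refine Prod.ext ?_ ?_ <;> dsimp only
            · rw [hw1]; ring
            · rw [hw2]; ring
          rw [hpe]
          exact hq
        exact case1_main S Δ hΔ hconv hno' hSne p d e g (by omega) hdet hp hq' htau
      · obtain ⟨p₂, hp₂⟩ : ∃ p₂ : ℤ × ℤ, p₂ = ((p.1 + 2 * w.1, p.2 + 2 * w.2) : ℤ × ℤ) :=
          ⟨_, rfl⟩
        obtain ⟨d₂, hd₂⟩ : ∃ d₂ : ℤ × ℤ, d₂ = ((-d.1, -d.2) : ℤ × ℤ) := ⟨_, rfl⟩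
        obtain ⟨e₂, he₂⟩ : ∃ e₂ : ℤ × ℤ, e₂ = ((-e.1, -e.2) : ℤ × ℤ) := ⟨_, rfl⟩
        have hd₂1 : d₂.1 = -d.1 := by rw [hd₂]
        have hd₂2 : d₂.2 = -d.2 := by rw [hd₂]
        have he₂1 : e₂.1 = -e.1 := by rw [he₂]
        have he₂2 : e₂.2 = -e.2 := by rw [he₂]
        have hp₂1 : p₂.1 = p.1 + 2 * w.1 := by rw [hp₂]
        have hp₂2 : p₂.2 = p.2 + 2 * w.2 := by rw [hp₂]
        have hdet₂ : d₂.1 * e₂.2 - d₂.2 * e₂.1 = 1 := by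
          rw [hd₂1, hd₂2, he₂1, he₂2]; linarith [hdet]
        have hfd₂ : f ((d₂.1 : ℝ), (d₂.2 : ℝ)) = 0 := by
          have hv : ((d₂.1 : ℝ), (d₂.2 : ℝ)) = -((d.1 : ℝ), (d.2 : ℝ)) := by
            rw [Prod.neg_mk]
            refine Prod.ext ?_ ?_ <;> dsimp only
            · rw [hd₂1]; push_cast; ring
            · rw [hd₂2]; push_cast; ring
          rw [hv, map_neg, hfd, neg_zero]
        have hfe₂ : f ((e₂.1 : ℝ), (e₂.2 : ℝ)) < 0 := by
          have hv : ((e₂.1 : ℝ), (e₂.2 : ℝ)) = -((e.1 : ℝ), (e.2 : ℝ)) := by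
            rw [Prod.neg_mk]
            refine Prod.ext ?_ ?_ <;> dsimp only
            · rw [he₂1]; push_cast; ring
            · rw [he₂2]; push_cast; ring
          rw [hv, map_neg]
          linarith
        have htau := tau_nonneg f (p.1 + w.1, p.2 + w.2) hfle d₂ e₂ p₂ hfd₂ hfe₂ hdet₂
          (by
            show (d₂.1 : ℝ) * (((p.2 + w.2 : ℤ) : ℝ) - ((p₂.2 : ℤ) : ℝ))
              - (d₂.2 : ℝ) * (((p.1 + w.1 : ℤ) : ℝ) - ((p₂.1 : ℤ) : ℝ)) = 0
            rw [hd₂1, hd₂2, hp₂1, hp₂2]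
            push_cast [hw1, hw2]
            ring)
        have hp' : ι p₂ ∈ Δ := by rw [hp₂]; exact hq
        have hq' : ι (p₂.1 + 2 * g * d₂.1, p₂.2 + 2 * g * d₂.2) ∈ Δ := by
          have hpe : ((p₂.1 + 2 * g * d₂.1, p₂.2 + 2 * g * d₂.2) : ℤ × ℤ) = p := by
            refine Prod.ext ?_ ?_ <;> dsimp only
            · rw [hp₂1, hd₂1, hw1]; ring
            · rw [hp₂2, hd₂2, hw2]; ring
          rw [hpe]
          exact hp
        exact case1_main S Δ hΔ hconv hno' hSne p₂ d₂ e₂ g (by omega) hdet₂ hp' hq' htau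
    · -- case 2 : no congruent pair
      push_neg at hpair
      have hK2 : ∀ x w : ℤ × ℤ, ι x ∈ Δ → ι (x.1 + 2 * w.1, x.2 + 2 * w.2) ∈ Δ →
          w.1 = 0 ∧ w.2 = 0 := fun x w hx hxw => hpair x w hx hxw
      -- three affinely independent points of S
      have htriple : ∃ A ∈ S, ∃ B ∈ S, ∃ C ∈ S,
          (B.1 - A.1) * (C.2 - A.2) - (B.2 - A.2) * (C.1 - A.1) ≠ 0 := by
        by_contra hall
        push_neg at hall
        obtain ⟨p₀, hp₀⟩ := hSne
        obtain ⟨z, hz⟩ := hint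
        by_cases hex : ∃ p₁ ∈ S, p₁ ≠ p₀
        · obtain ⟨p₁, hp₁S, hp₁ne⟩ := hex
          have hnn : ¬(p₁.1 - p₀.1 = 0 ∧ p₁.2 - p₀.2 = 0) := by
            rintro ⟨e1, e2⟩
            exact hp₁ne (Prod.ext (by omega) (by omega))
          -- all points on a line
          have hline : ∀ s ∈ S,
              (-(p₁.2 - p₀.2)) * (s.1 : ℝ) + ((p₁.1 - p₀.1) : ℝ) * (s.2 : ℝ)
              = (-(p₁.2 - p₀.2)) * (p₀.1 : ℝ) + ((p₁.1 - p₀.1) : ℝ) * (p₀.2 : ℝ) := by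
            intro s hs
            have h0 := hall p₀ hp₀ p₁ hp₁S s hs
            have h0R : ((p₁.1 - p₀.1 : ℤ) : ℝ) * ((s.2 - p₀.2 : ℤ) : ℝ)
                - ((p₁.2 - p₀.2 : ℤ) : ℝ) * ((s.1 - p₀.1 : ℤ) : ℝ) = 0 := by
              exact_mod_cast congrArg (fun z : ℤ => (z : ℝ)) h0
            push_cast at h0R ⊢
            linarith [h0R]
          have hub : ∀ x ∈ Δ,
              (-(p₁.2 - p₀.2) : ℝ) * x.1 + ((p₁.1 - p₀.1) : ℝ) * x.2
              ≤ (-(p₁.2 - p₀.2)) * (p₀.1 : ℝ) + ((p₁.1 - p₀.1) : ℝ) * (p₀.2 : ℝ) := by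
            intro x hx
            rw [hΔ] at hx
            refine hull_le ?_ x hx
            rintro y ⟨s, hs, rfl⟩
            dsimp only
            have := hline s hs
            push_cast at this ⊢
            linarith
          have hlb : ∀ x ∈ Δ,
              (-(p₁.2 - p₀.2)) * (p₀.1 : ℝ) + ((p₁.1 - p₀.1) : ℝ) * (p₀.2 : ℝ)
              ≤ (-(p₁.2 - p₀.2) : ℝ) * x.1 + ((p₁.1 - p₀.1) : ℝ) * x.2 := by
            intro x hx
            rw [hΔ] at hx
            refine hull_ge ?_ x hx
            rintro y ⟨s, hs, rfl⟩
            dsimp only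
            have := hline s hs
            push_cast at this ⊢
            linarith
          obtain ⟨ε, hε, hzp, hzm⟩ := interior_perturb hz
            ((-(p₁.2 - p₀.2) : ℝ), ((p₁.1 - p₀.1) : ℝ))
          have h1 := hub _ hzp
          have h2 := hlb _ hzm
          have e1 : ((z + ε • ((-(p₁.2 - p₀.2) : ℝ), ((p₁.1 - p₀.1) : ℝ)))).1
              = z.1 + ε * (-(p₁.2 - p₀.2)) := rfl
          have e2 : ((z + ε • ((-(p₁.2 - p₀.2) : ℝ), ((p₁.1 - p₀.1) : ℝ)))).2
              = z.2 + ε * ((p₁.1 - p₀.1)) := rfl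
          have f1 : ((z - ε • ((-(p₁.2 - p₀.2) : ℝ), ((p₁.1 - p₀.1) : ℝ)))).1
              = z.1 - ε * (-(p₁.2 - p₀.2)) := rfl
          have f2 : ((z - ε • ((-(p₁.2 - p₀.2) : ℝ), ((p₁.1 - p₀.1) : ℝ)))).2
              = z.2 - ε * ((p₁.1 - p₀.1)) := rfl
          rw [e1, e2] at h1
          rw [f1, f2] at h2
          have hnpos : (0 : ℝ) < (-(p₁.2 - p₀.2) : ℝ) * (-(p₁.2 - p₀.2) : ℝ)
              + ((p₁.1 - p₀.1) : ℝ) * ((p₁.1 - p₀.1) : ℝ) := by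
            rcases not_and_or.1 hnn with h | h
            · have : ((p₁.1 - p₀.1 : ℤ) : ℝ) ≠ 0 := Int.cast_ne_zero.2 h
              push_cast at this ⊢
              nlinarith [mul_self_nonneg ((p₁.2 : ℝ) - p₀.2), mul_self_pos.mpr this]
            · have : ((p₁.2 - p₀.2 : ℤ) : ℝ) ≠ 0 := Int.cast_ne_zero.2 h
              push_cast at this ⊢
              nlinarith [mul_self_nonneg ((p₁.1 : ℝ) - p₀.1), mul_self_pos.mpr this]
          nlinarith [h1, h2, mul_pos hε hnpos]
        · push_neg at hex
          have himg : ((fun p : ℤ × ℤ => ((p.1 : ℝ), (p.2 : ℝ))) '' ↑S) = {ι p₀} := by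
            apply Set.eq_singleton_iff_nonempty_unique_mem.2
            constructor
            · exact ⟨ι p₀, ⟨p₀, hp₀, rfl⟩⟩
            · rintro y ⟨s, hs, rfl⟩
              rw [hex s hs]
              rfl
          rw [himg, convexHull_singleton] at hΔ
          obtain ⟨ε, hε, hzp, hzm⟩ := interior_perturb hz ((1 : ℝ), (0 : ℝ))
          rw [hΔ] at hzp hzm
          have g1 : z.1 + ε * 1 = (p₀.1 : ℝ) := congrArg Prod.fst hzp
          have g2 : z.1 - ε * 1 = (p₀.1 : ℝ) := congrArg Prod.fst hzm
          linarith
      obtain ⟨A, hA, B, hB, C, hC, hdet0⟩ := htriple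
      have hAΔ : ι A ∈ Δ := by rw [hΔ]; exact subset_convexHull _ _ ⟨A, hA, rfl⟩
      have hBΔ : ι B ∈ Δ := by rw [hΔ]; exact subset_convexHull _ _ ⟨B, hB, rfl⟩
      have hCΔ : ι C ∈ Δ := by rw [hΔ]; exact subset_convexHull _ _ ⟨C, hC, rfl⟩
      have hqB : ι (A.1 + (B.1 - A.1), A.2 + (B.2 - A.2)) ∈ Δ := by
        have he : ((A.1 + (B.1 - A.1), A.2 + (B.2 - A.2)) : ℤ × ℤ) = B :=
          Prod.ext (by dsimp only; omega) (by dsimp only; omega)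
        rw [he]; exact hBΔ
      have hqC : ι (A.1 + (C.1 - A.1), A.2 + (C.2 - A.2)) ∈ Δ := by
        have he : ((A.1 + (C.1 - A.1), A.2 + (C.2 - A.2)) : ℤ × ℤ) = C :=
          Prod.ext (by dsimp only; omega) (by dsimp only; omega)
        rw [he]; exact hCΔ
      have habs := claim_unit_abs hconv hno' hK2 A (B.1 - A.1, B.2 - A.2)
        (C.1 - A.1, C.2 - A.2) hAΔ hqB hqC (by dsimp only; exact hdet0)
      dsimp only at habs
      rcases habs with h1 | h1
      · exact Or.inl (case2_pos S Δ hΔ hconv hno' hK2 A B C hA hB hC h1)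
      · have h2 : (C.1 - A.1) * (B.2 - A.2) - (C.2 - A.2) * (B.1 - A.1) = 1 := by
          linarith [h1]
        exact Or.inl (case2_pos S Δ hΔ hconv hno' hK2 A C B hA hC hB h2)
  · rintro (⟨n, hn, c, hbound⟩ | ⟨v, a, b, hdet, hΔ'⟩)
    · exact backward_width Δ n hn c hbound
    · exact backward_triangle Δ v a b hdet hΔ'


end NoIntLat

/-- A convex lattice polygon `Δ` (with nonempty interior) has no interior lattice points if
and only if it has lattice width one or it is twice a primitive triangle. -/
theorem no_interior_lattice_points_iff (S : Finset (ℤ × ℤ)) (Δ : Set (ℝ × ℝ))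
    (hΔ : Δ = convexHull ℝ ((fun p : ℤ × ℤ => ((p.1 : ℝ), (p.2 : ℝ))) '' ↑S))
    (hint : (interior Δ).Nonempty) :
    (∀ p : ℤ × ℤ, ((p.1 : ℝ), (p.2 : ℝ)) ∉ interior Δ) ↔
      ((∃ n : ℤ × ℤ, n ≠ 0 ∧ ∃ c : ℤ, ∀ x ∈ Δ,
          (c : ℝ) ≤ (n.1 : ℝ) * x.1 + (n.2 : ℝ) * x.2 ∧
          (n.1 : ℝ) * x.1 + (n.2 : ℝ) * x.2 ≤ (c : ℝ) + 1) ∨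
        (∃ v a b : ℤ × ℤ, |a.1 * b.2 - a.2 * b.1| = 1 ∧
          Δ = convexHull ℝ
            {((v.1 : ℝ), (v.2 : ℝ)),
             (((v.1 + 2 * a.1 : ℤ) : ℝ), ((v.2 + 2 * a.2 : ℤ) : ℝ)),
             (((v.1 + 2 * b.1 : ℤ) : ℝ), ((v.2 + 2 * b.2 : ℤ) : ℝ))})) :=
  NoIntLat.main_thm S Δ hΔ hint
end

section
/- Let S ⊂ ℤ² be a finite set and let Δ := convexHull_ℝ(S) ⊂ ℝ² be the corresponding convex lattice polygon, with nonempty interior. Let M_0 be the affine sublattice of ℤ² generated by the lattice points on the boundary of Δ, i.e. the affine span over ℤ of { p ∈ ℤ² : p ∈ ∂Δ }, where ∂Δ denotes the frontier of Δ in ℝ². Then for every affine sublattice M of ℤ² with M_0 ⊊ M ⊆ ℤ², the number of points of M lying in the interior Δ° of Δ is strictly greater than the number of points of M_0 lying in Δ°: |Δ° ∩ M| > |Δ° ∩ M_0| ≥ 0. -/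
/-- A set contained in a "line" `{w | (w.1-x₀.1)*d.2 - (w.2-x₀.2)*d.1 = 0}` with `d ≠ 0`
has empty interior. -/
lemma line_interior_empty (x₀ d : ℝ × ℝ) (hd : d ≠ 0) (Δ : Set (ℝ × ℝ))
    (hsub : Δ ⊆ {w : ℝ × ℝ | (w.1 - x₀.1) * d.2 - (w.2 - x₀.2) * d.1 = 0}) :
    interior Δ = ∅ := by
  rw [Set.eq_empty_iff_forall_notMem]
  intro w hw
  have hwL := interior_mono hsub hw
  rw [mem_interior_iff_mem_nhds, Metric.mem_nhds_iff] at hwL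
  obtain ⟨ε, hε, hball⟩ := hwL
  set n : ℝ × ℝ := (-d.2, d.1) with hn
  have hN : (0:ℝ) ≤ ‖n‖ := norm_nonneg n
  set δ : ℝ := ε / (2 * (‖n‖ + 1)) with hδ
  have hδpos : 0 < δ := by positivity
  have hmem : w + δ • n ∈ Metric.ball w ε := by
    rw [Metric.mem_ball, dist_eq_norm, add_sub_cancel_left, norm_smul, Real.norm_eq_abs,
      abs_of_pos hδpos]
    rw [hδ]
    rw [div_mul_eq_mul_div, div_lt_iff₀ (by positivity)]
    nlinarith [hN, hε]
  have h1 : ((w + δ • n).1 - x₀.1) * d.2 - ((w + δ • n).2 - x₀.2) * d.1 = 0 := hball hmem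
  have h0 : (w.1 - x₀.1) * d.2 - (w.2 - x₀.2) * d.1 = 0 := hball (Metric.mem_ball_self hε)
  have hcomp1 : (w + δ • n).1 = w.1 + δ * (-d.2) := by simp [hn]
  have hcomp2 : (w + δ • n).2 = w.2 + δ * d.1 := by simp [hn]
  rw [hcomp1, hcomp2] at h1
  have hdd : δ * (d.1 ^ 2 + d.2 ^ 2) = 0 := by linear_combination h0 - h1
  have hsq : d.1 ^ 2 + d.2 ^ 2 = 0 := by
    rcases mul_eq_zero.mp hdd with h | h
    · exact absurd h (ne_of_gt hδpos)
    · exact h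
  have hd1 : d.1 = 0 := by nlinarith [sq_nonneg d.1, sq_nonneg d.2]
  have hd2 : d.2 = 0 := by nlinarith [sq_nonneg d.1, sq_nonneg d.2]
  exact hd (Prod.ext hd1 hd2)



/-- There exist three lattice points on the frontier whose integral determinant is nonzero. -/
lemma exists_indep_triple (S : Finset (ℤ × ℤ)) (Δ : Set (ℝ × ℝ))
    (hΔ : Δ = convexHull ℝ ((fun p : ℤ × ℤ => ((p.1 : ℝ), (p.2 : ℝ))) '' ↑S))
    (hint : (interior Δ).Nonempty) :
    ∃ x y z : ℤ × ℤ, ((x.1 : ℝ), (x.2 : ℝ)) ∈ frontier Δ ∧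
      ((y.1 : ℝ), (y.2 : ℝ)) ∈ frontier Δ ∧ ((z.1 : ℝ), (z.2 : ℝ)) ∈ frontier Δ ∧
      (y.1 - x.1) * (z.2 - x.2) - (y.2 - x.2) * (z.1 - x.1) ≠ 0 := by
  set f : ℤ × ℤ → ℝ × ℝ := fun p => ((p.1 : ℝ), (p.2 : ℝ)) with hf
  have hfin : ((f '' ↑S) : Set (ℝ × ℝ)).Finite := S.finite_toSet.image f
  have hΔconv : Convex ℝ Δ := hΔ ▸ convex_convexHull ℝ _
  have hΔcomp : IsCompact Δ := hΔ ▸ hfin.isCompact_convexHull ℝ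
  have hΔne : Δ.Nonempty := hint.mono interior_subset
  have hKM : closure (convexHull ℝ (Δ.extremePoints ℝ)) = Δ :=
    closure_convexHull_extremePoints hΔcomp hΔconv
  have hES : Δ.extremePoints ℝ ⊆ f '' ↑S := by
    rw [hΔ]; exact extremePoints_convexHull_subset
  -- extreme points are on the frontier
  have hEfr : ∀ e ∈ Δ.extremePoints ℝ, e ∈ frontier Δ := by
    intro e he
    refine ⟨subset_closure (extremePoints_subset he), ?_⟩
    intro hei
    rw [mem_interior_iff_mem_nhds, Metric.mem_nhds_iff] at hei
    obtain ⟨ε, hε, hball⟩ := hei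
    set v : ℝ × ℝ := (ε / 2, 0) with hv
    have hnv : ‖v‖ = ε / 2 := by
      rw [hv, Prod.norm_def]
      simp only [Real.norm_eq_abs]
      rw [abs_div, abs_of_pos hε]
      simp [max_eq_left (by positivity : (0:ℝ) ≤ ε/2)]
    have h₁ : e - v ∈ Δ := hball (by
      rw [Metric.mem_ball, dist_eq_norm, sub_sub_cancel_left, norm_neg, hnv]; linarith)
    have h₂ : e + v ∈ Δ := hball (by
      rw [Metric.mem_ball, dist_eq_norm, add_sub_cancel_left, hnv]; linarith)
    have hseg : e ∈ openSegment ℝ (e - v) (e + v) := by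
      refine ⟨1/2, 1/2, by norm_num, by norm_num, by norm_num, ?_⟩
      module
    have := he.2 h₁ h₂ hseg
    have hv0 : v = 0 := by
      have := congrArg (fun x => e - x) this.symm
      simpa using this.symm
    have : ε / 2 = 0 := congrArg Prod.fst hv0
    linarith
  -- each extreme point is the cast of a lattice frontier point
  have hEB : ∀ e ∈ Δ.extremePoints ℝ, ∃ p : ℤ × ℤ, f p = e ∧ f p ∈ frontier Δ := by
    intro e he
    obtain ⟨p, _, hpe⟩ := hES he
    exact ⟨p, hpe, hpe ▸ hEfr e he⟩
  obtain ⟨e₀, he₀⟩ := hΔcomp.extremePoints_nonempty hΔne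
  obtain ⟨p₀, hp₀e, hp₀fr⟩ := hEB e₀ he₀
  by_contra hcon
  push_neg at hcon
  -- all frontier lattice triples are collinear
  have key : ∀ x₀ : ℤ × ℤ, f x₀ ∈ frontier Δ → ∀ d : ℝ × ℝ, d ≠ 0 →
      (Δ.extremePoints ℝ ⊆ {w : ℝ × ℝ | (w.1 - (x₀.1:ℝ)) * d.2 - (w.2 - (x₀.2:ℝ)) * d.1 = 0}) →
      False := by
    intro x₀ hx₀ d hd hsubE
    have hLconv : Convex ℝ {w : ℝ × ℝ | (w.1 - (x₀.1:ℝ)) * d.2 - (w.2 - (x₀.2:ℝ)) * d.1 = 0} := by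
      intro u hu v hv a b ha hb hab
      simp only [Set.mem_setOf_eq] at hu hv ⊢
      have h1 : (a • u + b • v).1 = a * u.1 + b * v.1 := by simp
      have h2 : (a • u + b • v).2 = a * u.2 + b * v.2 := by simp
      rw [h1, h2]
      linear_combination a * hu + b * hv + ((x₀.1:ℝ) * d.2 - (x₀.2:ℝ) * d.1) * hab
    have hLclosed : IsClosed {w : ℝ × ℝ | (w.1 - (x₀.1:ℝ)) * d.2 - (w.2 - (x₀.2:ℝ)) * d.1 = 0} := by
      apply isClosed_eq _ continuous_const
      fun_prop
    have hΔL : Δ ⊆ {w : ℝ × ℝ | (w.1 - (x₀.1:ℝ)) * d.2 - (w.2 - (x₀.2:ℝ)) * d.1 = 0} := by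
      rw [← hKM]
      exact closure_minimal (convexHull_min hsubE hLconv) hLclosed
    have := line_interior_empty (f x₀) d hd Δ hΔL
    rw [this] at hint
    exact Set.not_nonempty_empty hint
  by_cases hB : ∃ p₁ : ℤ × ℤ, f p₁ ∈ frontier Δ ∧ p₁ ≠ p₀
  · obtain ⟨p₁, hp₁fr, hp₁ne⟩ := hB
    have hd : f p₁ - f p₀ ≠ 0 := by
      intro h
      apply hp₁ne
      have h1 : (p₁.1 : ℝ) = (p₀.1 : ℝ) := by
        have := congrArg Prod.fst h; simp [hf] at this; linarith
      have h2 : (p₁.2 : ℝ) = (p₀.2 : ℝ) := by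
        have := congrArg Prod.snd h; simp [hf] at this; linarith
      exact Prod.ext (by exact_mod_cast h1) (by exact_mod_cast h2)
    apply key p₀ hp₀fr (f p₁ - f p₀) hd
    intro e he
    obtain ⟨p, hpe, hpfr⟩ := hEB e he
    have hz := hcon p₀ p p₁ hp₀fr hpfr hp₁fr
    have hzr : ((p.1:ℝ) - p₀.1) * ((p₁.2:ℝ) - p₀.2) - ((p.2:ℝ) - p₀.2) * ((p₁.1:ℝ) - p₀.1)
        = 0 := by exact_mod_cast hz
    simp only [Set.mem_setOf_eq, ← hpe, hf, Prod.fst_sub, Prod.snd_sub]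
    linear_combination hzr
  · push_neg at hB
    apply key p₀ hp₀fr (1, 0) (by simp)
    intro e he
    obtain ⟨p, hpe, hpfr⟩ := hEB e he
    have : p = p₀ := hB p hpfr
    subst this
    simp only [Set.mem_setOf_eq, ← hpe, hf]
    ring


/-- If `D•(w-a) = p•(b-a) + r•(c-a)` with `0 ≤ p`, `0 ≤ r`, `p+r ≤ D`, then the cast of `w`
is in any convex set containing the casts of `a`, `b`, `c`. -/
lemma combo_mem_of_convex {Δ : Set (ℝ × ℝ)} (hconv : Convex ℝ Δ)
    {a b c : ℤ × ℤ} (haΔ : ((a.1 : ℝ), (a.2 : ℝ)) ∈ Δ) (hbΔ : ((b.1 : ℝ), (b.2 : ℝ)) ∈ Δ)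
    (hcΔ : ((c.1 : ℝ), (c.2 : ℝ)) ∈ Δ)
    {D p r : ℤ} (hD : 0 < D) (hp : 0 ≤ p) (hr : 0 ≤ r) (hpr : p + r ≤ D)
    {w : ℤ × ℤ} (h1 : D * (w.1 - a.1) = p * (b.1 - a.1) + r * (c.1 - a.1))
    (h2 : D * (w.2 - a.2) = p * (b.2 - a.2) + r * (c.2 - a.2)) :
    ((w.1 : ℝ), (w.2 : ℝ)) ∈ Δ := by
  have hD0 : (D : ℝ) ≠ 0 := by exact_mod_cast hD.ne'
  have hDpos : (0:ℝ) < (D:ℝ) := by exact_mod_cast hD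
  set α : ℝ := ((D : ℝ) - p - r) / D with hα
  set β : ℝ := (p : ℝ) / D with hβ
  set γ : ℝ := (r : ℝ) / D with hγ
  have hprR : (p : ℝ) + r ≤ D := by exact_mod_cast hpr
  have hpR : (0:ℝ) ≤ p := by exact_mod_cast hp
  have hrR : (0:ℝ) ≤ r := by exact_mod_cast hr
  have hmem := hconv.sum_mem (t := (Finset.univ : Finset (Fin 3)))
    (w := ![α, β, γ])
    (z := ![((a.1 : ℝ), (a.2 : ℝ)), ((b.1 : ℝ), (b.2 : ℝ)), ((c.1 : ℝ), (c.2 : ℝ))])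
    (by intro i _; fin_cases i <;> simp [hα, hβ, hγ] <;>
        · apply div_nonneg _ hDpos.le; linarith)
    (by rw [Fin.sum_univ_three]; simp only [Matrix.cons_val_zero, Matrix.cons_val_one,
        Matrix.head_cons, Matrix.cons_val_two, Matrix.tail_cons]
        rw [hα, hβ, hγ]; field_simp; ring)
    (by intro i _; fin_cases i <;> simpa using by first | exact haΔ | exact hbΔ | exact hcΔ)
  rw [Fin.sum_univ_three] at hmem
  simp only [Matrix.cons_val_zero, Matrix.cons_val_one, Matrix.head_cons,
    Matrix.cons_val_two, Matrix.tail_cons] at hmem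
  have hc1 : (D:ℝ) * ((w.1:ℝ) - a.1) = (p:ℝ) * ((b.1:ℝ) - a.1) + (r:ℝ) * ((c.1:ℝ) - a.1) := by
    exact_mod_cast h1
  have hc2 : (D:ℝ) * ((w.2:ℝ) - a.2) = (p:ℝ) * ((b.2:ℝ) - a.2) + (r:ℝ) * ((c.2:ℝ) - a.2) := by
    exact_mod_cast h2
  have heq : ((w.1 : ℝ), (w.2 : ℝ)) =
      α • ((a.1 : ℝ), (a.2 : ℝ)) + β • ((b.1 : ℝ), (b.2 : ℝ)) + γ • ((c.1 : ℝ), (c.2 : ℝ)) := by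
    have e1 : (α • ((a.1 : ℝ), (a.2 : ℝ)) + β • ((b.1 : ℝ), (b.2 : ℝ))
        + γ • ((c.1 : ℝ), (c.2 : ℝ))).1 = α * a.1 + β * b.1 + γ * c.1 := by simp
    have e2 : (α • ((a.1 : ℝ), (a.2 : ℝ)) + β • ((b.1 : ℝ), (b.2 : ℝ))
        + γ • ((c.1 : ℝ), (c.2 : ℝ))).2 = α * a.2 + β * b.2 + γ * c.2 := by simp
    refine Prod.ext ?_ ?_
    · rw [e1]; show (w.1:ℝ) = _; rw [hα, hβ, hγ]; field_simp; linear_combination hc1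
    · rw [e2]; show (w.2:ℝ) = _; rw [hα, hβ, hγ]; field_simp; linear_combination hc2
  rw [heq]
  exact hmem

/-- There is a point of `M`, not in `M₀`, lying in `Δ`. -/
lemma exists_good_point (S : Finset (ℤ × ℤ)) (Δ : Set (ℝ × ℝ))
    (hΔ : Δ = convexHull ℝ ((fun p : ℤ × ℤ => ((p.1 : ℝ), (p.2 : ℝ))) '' ↑S))
    (hint : (interior Δ).Nonempty)
    (M₀ : AffineSubspace ℤ (ℤ × ℤ))
    (hM₀ : M₀ = affineSpan ℤ {p : ℤ × ℤ | ((p.1 : ℝ), (p.2 : ℝ)) ∈ frontier Δ})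
    (M : AffineSubspace ℤ (ℤ × ℤ)) (hM : M₀ < M) :
    ∃ w : ℤ × ℤ, w ∈ M ∧ w ∉ M₀ ∧ ((w.1 : ℝ), (w.2 : ℝ)) ∈ Δ := by
  have hΔconv : Convex ℝ Δ := hΔ ▸ convex_convexHull ℝ _
  have hΔclosed : IsClosed Δ :=
    hΔ ▸ (S.finite_toSet.image _).isClosed_convexHull ℝ
  have hfr_sub : ∀ w : ℤ × ℤ, ((w.1 : ℝ), (w.2 : ℝ)) ∈ frontier Δ → w ∈ M₀ := by
    intro w hw
    rw [hM₀]
    exact subset_affineSpan ℤ _ hw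
  have hfrΔ : frontier Δ ⊆ Δ := hΔclosed.frontier_subset
  -- the predicate of lattice points of `M` inside `Δ`
  set F : ℤ × ℤ → Prop := fun p => p ∈ M ∧ ((p.1 : ℝ), (p.2 : ℝ)) ∈ Δ with hF
  obtain ⟨x, y, z, hxfr, hyfr, hzfr, hdet⟩ := exists_indep_triple S Δ hΔ hint
  have hxF : F x := ⟨hM.le (hfr_sub x hxfr), hfrΔ hxfr⟩
  have hyF : F y := ⟨hM.le (hfr_sub y hyfr), hfrΔ hyfr⟩
  have hzF : F z := ⟨hM.le (hfr_sub z hzfr), hfrΔ hzfr⟩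
  set K : Set ℕ := {n | 0 < n ∧ ∃ a b c : ℤ × ℤ, F a ∧ F b ∧ F c ∧
      ((b.1 - a.1) * (c.2 - a.2) - (b.2 - a.2) * (c.1 - a.1)).natAbs = n} with hK
  have hKne : K.Nonempty :=
    ⟨_, Int.natAbs_pos.mpr hdet, x, y, z, hxF, hyF, hzF, rfl⟩
  set n₀ : ℕ := sInf K with hn₀def
  obtain ⟨hn₀pos, a₀, b₀, c₀, ha₀, hb₀, hc₀, habs⟩ := Nat.sInf_mem hKne
  set D : ℤ := (n₀ : ℤ) with hDdef
  have hDpos : 0 < D := by rw [hDdef]; exact_mod_cast hn₀pos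
  have hmin : ∀ u v t : ℤ × ℤ, F u → F v → F t →
      ((v.1 - u.1) * (t.2 - u.2) - (v.2 - u.2) * (t.1 - u.1)) ≠ 0 →
      n₀ ≤ ((v.1 - u.1) * (t.2 - u.2) - (v.2 - u.2) * (t.1 - u.1)).natAbs := by
    intro u v t hu hv ht hne
    exact Nat.sInf_le ⟨Int.natAbs_pos.mpr hne, u, v, t, hu, hv, ht, rfl⟩
  obtain ⟨a, b, c, haF, hbF, hcF, hDdet⟩ : ∃ a b c : ℤ × ℤ, F a ∧ F b ∧ F c ∧
      (b.1 - a.1) * (c.2 - a.2) - (b.2 - a.2) * (c.1 - a.1) = D := by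
    rcases Int.natAbs_eq_iff.mp habs with h | h
    · exact ⟨a₀, b₀, c₀, ha₀, hb₀, hc₀, h⟩
    · exact ⟨a₀, c₀, b₀, ha₀, hc₀, hb₀, by linear_combination -h⟩
  -- key claim: every point of `M` is an integral affine combination of a, b, c
  have key : ∀ z ∈ M, ∃ s t : ℤ,
      z.1 - a.1 = s * (b.1 - a.1) + t * (c.1 - a.1) ∧
      z.2 - a.2 = s * (b.2 - a.2) + t * (c.2 - a.2) := by
    intro w hw
    set P : ℤ := (w.1 - a.1) * (c.2 - a.2) - (w.2 - a.2) * (c.1 - a.1) with hPdef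
    set Q : ℤ := (b.1 - a.1) * (w.2 - a.2) - (b.2 - a.2) * (w.1 - a.1) with hQdef
    have hC1 : D * (w.1 - a.1) = P * (b.1 - a.1) + Q * (c.1 - a.1) := by
      rw [hPdef, hQdef, ← hDdet]; ring
    have hC2 : D * (w.2 - a.2) = P * (b.2 - a.2) + Q * (c.2 - a.2) := by
      rw [hPdef, hQdef, ← hDdet]; ring
    set s : ℤ := P / D with hsdef
    set p : ℤ := P % D with hpdef
    set q : ℤ := Q / D with hqdef
    set r : ℤ := Q % D with hrdef
    have hPs : D * s + p = P := Int.mul_ediv_add_emod P D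
    have hQs : D * q + r = Q := Int.mul_ediv_add_emod Q D
    have hp0 : 0 ≤ p := Int.emod_nonneg P hDpos.ne'
    have hpD : p < D := Int.emod_lt_of_pos P hDpos
    have hr0 : 0 ≤ r := Int.emod_nonneg Q hDpos.ne'
    have hrD : r < D := Int.emod_lt_of_pos Q hDpos
    set z' : ℤ × ℤ := (w.1 - s * (b.1 - a.1) - q * (c.1 - a.1),
      w.2 - s * (b.2 - a.2) - q * (c.2 - a.2)) with hz'def
    have hz'M : z' ∈ M := by
      have hrw : z' = (-s) • (b -ᵥ a) +ᵥ ((-q) • (c -ᵥ a) +ᵥ w) := by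
        rw [hz'def]
        simp only [vsub_eq_sub, vadd_eq_add, Prod.ext_iff, Prod.fst_add, Prod.snd_add,
          Prod.fst_sub, Prod.snd_sub, Prod.smul_fst, Prod.smul_snd, smul_eq_mul]
        constructor <;> ring
      rw [hrw]
      exact M.smul_vsub_vadd_mem _ hbF.1 haF.1 (M.smul_vsub_vadd_mem _ hcF.1 haF.1 hw)
    have hz'1 : D * (z'.1 - a.1) = p * (b.1 - a.1) + r * (c.1 - a.1) := by
      rw [hz'def]
      linear_combination hC1 - (b.1 - a.1) * hPs - (c.1 - a.1) * hQs
    have hz'2 : D * (z'.2 - a.2) = p * (b.2 - a.2) + r * (c.2 - a.2) := by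
      rw [hz'def]
      linear_combination hC2 - (b.2 - a.2) * hPs - (c.2 - a.2) * hQs
    have hz'det1 : (z'.1 - a.1) * (c.2 - a.2) - (z'.2 - a.2) * (c.1 - a.1) = p := by
      apply mul_left_cancel₀ hDpos.ne'
      linear_combination (c.2 - a.2) * hz'1 - (c.1 - a.1) * hz'2 + p * hDdet
    have hz'det2 : (b.1 - a.1) * (z'.2 - a.2) - (b.2 - a.2) * (z'.1 - a.1) = r := by
      apply mul_left_cancel₀ hDpos.ne'
      linear_combination (b.1 - a.1) * hz'2 - (b.2 - a.2) * hz'1 + r * hDdet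
    by_cases hpr : p + r ≤ D
    · have hz'Δ : ((z'.1 : ℝ), (z'.2 : ℝ)) ∈ Δ :=
        combo_mem_of_convex hΔconv haF.2 hbF.2 hcF.2 hDpos hp0 hr0 hpr hz'1 hz'2
      have hz'F : F z' := ⟨hz'M, hz'Δ⟩
      by_cases hpz : p = 0
      · by_cases hrz : r = 0
        · refine ⟨s, q, ?_, ?_⟩
          · apply mul_left_cancel₀ hDpos.ne'
            linear_combination hC1 - (b.1 - a.1) * hPs - (c.1 - a.1) * hQs
              + (b.1 - a.1) * hpz + (c.1 - a.1) * hrz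
          · apply mul_left_cancel₀ hDpos.ne'
            linear_combination hC2 - (b.2 - a.2) * hPs - (c.2 - a.2) * hQs
              + (b.2 - a.2) * hpz + (c.2 - a.2) * hrz
        · exfalso
          have := hmin a b z' haF hbF hz'F (by rw [hz'det2]; exact hrz)
          rw [hz'det2] at this
          omega
      · exfalso
        have := hmin a z' c haF hz'F hcF (by rw [hz'det1]; exact hpz)
        rw [hz'det1] at this
        omega
    · exfalso
      push_neg at hpr
      set z'' : ℤ × ℤ := (b.1 + c.1 - z'.1, b.2 + c.2 - z'.2) with hz''def
      have hz''M : z'' ∈ M := by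
        have hrw : z'' = (1 : ℤ) • (b -ᵥ z') +ᵥ c := by
          rw [hz''def]
          simp only [vsub_eq_sub, vadd_eq_add, Prod.ext_iff, Prod.fst_add, Prod.snd_add,
            Prod.fst_sub, Prod.snd_sub, Prod.smul_fst, Prod.smul_snd, smul_eq_mul]
          constructor <;> ring
        rw [hrw]
        exact M.smul_vsub_vadd_mem _ hbF.1 hz'M hcF.1
      have hz''1 : D * (z''.1 - a.1) = (D - p) * (b.1 - a.1) + (D - r) * (c.1 - a.1) := by
        rw [hz''def]
        linear_combination -hz'1
      have hz''2 : D * (z''.2 - a.2) = (D - p) * (b.2 - a.2) + (D - r) * (c.2 - a.2) := by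
        rw [hz''def]
        linear_combination -hz'2
      have hz''Δ : ((z''.1 : ℝ), (z''.2 : ℝ)) ∈ Δ :=
        combo_mem_of_convex hΔconv haF.2 hbF.2 hcF.2 hDpos (by omega) (by omega) (by omega)
          hz''1 hz''2
      have hz''F : F z'' := ⟨hz''M, hz''Δ⟩
      have hz''det : (z''.1 - a.1) * (c.2 - a.2) - (z''.2 - a.2) * (c.1 - a.1) = D - p := by
        apply mul_left_cancel₀ hDpos.ne'
        linear_combination (c.2 - a.2) * hz''1 - (c.1 - a.1) * hz''2 + (D - p) * hDdet
      have hp1 : 0 < p := by omega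
      have := hmin a z'' c haF hz''F hcF (by rw [hz''det]; omega)
      rw [hz''det] at this
      omega
  -- conclude
  by_contra hno
  push_neg at hno
  have hFM₀ : ∀ w : ℤ × ℤ, F w → w ∈ M₀ := fun w hw =>
    by_contra fun h => hno w hw.1 h hw.2
  have haM₀ := hFM₀ a haF
  have hbM₀ := hFM₀ b hbF
  have hcM₀ := hFM₀ c hcF
  have hle : M ≤ M₀ := by
    intro u hu
    obtain ⟨s, t, e1, e2⟩ := key u hu
    have hrw : u = s • (b -ᵥ a) +ᵥ (t • (c -ᵥ a) +ᵥ a) := by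
      simp only [vsub_eq_sub, vadd_eq_add, Prod.ext_iff, Prod.fst_add, Prod.snd_add,
        Prod.fst_sub, Prod.snd_sub, Prod.smul_fst, Prod.smul_snd, smul_eq_mul]
      constructor <;> linarith
    rw [hrw]
    exact M₀.smul_vsub_vadd_mem _ hbM₀ haM₀ (M₀.smul_vsub_vadd_mem _ hcM₀ haM₀ haM₀)
  exact absurd hle hM.not_ge

/-- Let `Δ` be a convex lattice polygon with nonempty interior and `M₀` the affine
sublattice of `ℤ²` generated by the lattice points on the boundary of `Δ`. Then any
strictly larger affine sublattice `M₀ ⊊ M ⊆ ℤ²` has strictly more points in the interior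
of `Δ`: `|Δ° ∩ M| > |Δ° ∩ M₀| ≥ 0`. -/
theorem interior_points_strict_mono (S : Finset (ℤ × ℤ)) (Δ : Set (ℝ × ℝ))
    (hΔ : Δ = convexHull ℝ ((fun p : ℤ × ℤ => ((p.1 : ℝ), (p.2 : ℝ))) '' ↑S))
    (hint : (interior Δ).Nonempty)
    (M₀ : AffineSubspace ℤ (ℤ × ℤ))
    (hM₀ : M₀ = affineSpan ℤ {p : ℤ × ℤ | ((p.1 : ℝ), (p.2 : ℝ)) ∈ frontier Δ})
    (M : AffineSubspace ℤ (ℤ × ℤ)) (hM : M₀ < M) :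
    {p : ℤ × ℤ | p ∈ M ∧ ((p.1 : ℝ), (p.2 : ℝ)) ∈ interior Δ}.ncard >
      {p : ℤ × ℤ | p ∈ M₀ ∧ ((p.1 : ℝ), (p.2 : ℝ)) ∈ interior Δ}.ncard := by
  obtain ⟨w, hwM, hwM₀, hwΔ⟩ := exists_good_point S Δ hΔ hint M₀ hM₀ M hM
  have hΔclosed : IsClosed Δ := hΔ ▸ (S.finite_toSet.image _).isClosed_convexHull ℝ
  have hΔcomp : IsCompact Δ := hΔ ▸ (S.finite_toSet.image _).isCompact_convexHull ℝ
  -- the new point is in the interior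
  have hwint : ((w.1 : ℝ), (w.2 : ℝ)) ∈ interior Δ := by
    by_contra hni
    have hfr : ((w.1 : ℝ), (w.2 : ℝ)) ∈ frontier Δ := by
      rw [hΔclosed.frontier_eq]
      exact ⟨hwΔ, hni⟩
    exact hwM₀ (hM₀ ▸ subset_affineSpan ℤ _ hfr)
  -- lattice points in Δ form a finite set
  have hfinT : {p : ℤ × ℤ | ((p.1 : ℝ), (p.2 : ℝ)) ∈ Δ}.Finite := by
    obtain ⟨C, hC⟩ := hΔcomp.isBounded.exists_norm_le
    refine Set.Finite.subset (Set.finite_Icc ((-⌈C⌉, -⌈C⌉) : ℤ × ℤ) (⌈C⌉, ⌈C⌉)) ?_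
    intro p hp
    have hn := hC _ hp
    rw [Prod.norm_def] at hn
    have h1 : |(p.1 : ℝ)| ≤ C := le_trans (le_max_left _ _) (by simpa using hn)
    have h2 : |(p.2 : ℝ)| ≤ C := le_trans (le_max_right _ _) (by simpa using hn)
    rw [abs_le] at h1 h2
    have hceil := Int.le_ceil C
    rw [Set.mem_Icc]
    constructor
    · rw [Prod.mk_le_mk]
      constructor <;> [skip; skip] <;>
        · rw [show ∀ x : ℤ, -⌈C⌉ ≤ x ↔ ((-⌈C⌉ : ℤ) : ℝ) ≤ (x : ℝ) from fun x => by
            exact_mod_cast Iff.rfl] <;> push_cast <;> linarith [h1.1, h2.1]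
    · rw [Prod.mk_le_mk]
      constructor <;>
        · rw [show ∀ x : ℤ, x ≤ ⌈C⌉ ↔ (x : ℝ) ≤ ((⌈C⌉ : ℤ) : ℝ) from fun x => by
            exact_mod_cast Iff.rfl] <;> push_cast <;> linarith [h1.2, h2.2]
  have hfinA : {p : ℤ × ℤ | p ∈ M ∧ ((p.1 : ℝ), (p.2 : ℝ)) ∈ interior Δ}.Finite :=
    hfinT.subset fun p hp => Set.mem_setOf_eq ▸ interior_subset hp.2
  have hsub : {p : ℤ × ℤ | p ∈ M₀ ∧ ((p.1 : ℝ), (p.2 : ℝ)) ∈ interior Δ} ⊆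
      {p : ℤ × ℤ | p ∈ M ∧ ((p.1 : ℝ), (p.2 : ℝ)) ∈ interior Δ} :=
    fun p hp => ⟨hM.le hp.1, hp.2⟩
  have hssub : {p : ℤ × ℤ | p ∈ M₀ ∧ ((p.1 : ℝ), (p.2 : ℝ)) ∈ interior Δ} ⊂
      {p : ℤ × ℤ | p ∈ M ∧ ((p.1 : ℝ), (p.2 : ℝ)) ∈ interior Δ} :=
    (Set.ssubset_iff_of_subset hsub).mpr ⟨w, ⟨hwM, hwint⟩, fun hc => hwM₀ hc.1⟩
  exact Set.ncard_lt_ncard hssub hfinA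
end

section
/- Let v₀, v₁, v₂ ∈ ℤ² be three non-collinear points such that the only lattice points of the triangle T := convexHull_ℝ({v₀, v₁, v₂}) ⊂ ℝ² are its vertices, i.e. T ∩ ℤ² = {v₀, v₁, v₂}. Then |det(v₁ − v₀, v₂ − v₀)| = 1; equivalently, T has Euclidean area 1/2 and is affinely unimodularly equivalent to the standard triangle with vertices (0,0), (1,0), (0,1). -/
private lemma mem_hull3 {E : Type*} [AddCommGroup E] [Module ℝ E] {x y z : E} {w₀ w₁ w₂ : ℝ}
    (h₀ : 0 ≤ w₀) (h₁ : 0 ≤ w₁) (h₂ : 0 ≤ w₂) (hs : w₀ + w₁ + w₂ = 1) :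
    w₀ • x + w₁ • y + w₂ • z ∈ convexHull ℝ ({x, y, z} : Set E) := by
  have hx : x ∈ convexHull ℝ ({x, y, z} : Set E) := subset_convexHull _ _ (by simp)
  have hy : y ∈ convexHull ℝ ({x, y, z} : Set E) := subset_convexHull _ _ (by simp)
  have hz : z ∈ convexHull ℝ ({x, y, z} : Set E) := subset_convexHull _ _ (by simp)
  rcases eq_or_lt_of_le (add_nonneg h₁ h₂) with h | h
  · have hw₁ : w₁ = 0 := by linarith
    have hw₂ : w₂ = 0 := by linarith
    have hw₀ : w₀ = 1 := by linarith
    simp [hw₀, hw₁, hw₂, hx]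
  · have hm : (w₁ / (w₁ + w₂)) • y + (w₂ / (w₁ + w₂)) • z ∈ convexHull ℝ ({x, y, z} : Set E) :=
      convex_convexHull ℝ _ hy hz (div_nonneg h₁ h.le) (div_nonneg h₂ h.le) (by field_simp)
    have H := convex_convexHull ℝ ({x, y, z} : Set E) hx hm h₀ h.le (by linarith)
    have heq : w₀ • x + (w₁ + w₂) • ((w₁ / (w₁ + w₂)) • y + (w₂ / (w₁ + w₂)) • z)
        = w₀ • x + w₁ • y + w₂ • z := by
      rw [smul_add, smul_smul, smul_smul, mul_div_cancel₀ _ h.ne', mul_div_cancel₀ _ h.ne',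
        add_assoc]
    rwa [heq] at H

private lemma inner_contra (x0 y0 x1 y1 x2 y2 C1 C2 u1 u2 : ℤ)
    (hDpos : 0 < (x1 - x0) * (y2 - y0) - (y1 - y0) * (x2 - x0))
    (h1 : 0 ≤ C1) (h2 : 0 ≤ C2)
    (h3 : C1 + C2 ≤ (x1 - x0) * (y2 - y0) - (y1 - y0) * (x2 - x0))
    (h4 : C1 < (x1 - x0) * (y2 - y0) - (y1 - y0) * (x2 - x0))
    (h5 : C2 < (x1 - x0) * (y2 - y0) - (y1 - y0) * (x2 - x0))
    (h0 : ¬(C1 = 0 ∧ C2 = 0))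
    (hu1 : ((x1 - x0) * (y2 - y0) - (y1 - y0) * (x2 - x0)) * u1
        = C1 * (x1 - x0) + C2 * (x2 - x0))
    (hu2 : ((x1 - x0) * (y2 - y0) - (y1 - y0) * (x2 - x0)) * u2
        = C1 * (y1 - y0) + C2 * (y2 - y0))
    (hT : ∀ p : ℤ × ℤ,
      ((p.1 : ℝ), (p.2 : ℝ)) ∈ convexHull ℝ
          ({((x0 : ℝ), (y0 : ℝ)), ((x1 : ℝ), (y1 : ℝ)),
            ((x2 : ℝ), (y2 : ℝ))} : Set (ℝ × ℝ)) ↔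
        p = (x0, y0) ∨ p = (x1, y1) ∨ p = (x2, y2)) : False := by
  set D : ℤ := (x1 - x0) * (y2 - y0) - (y1 - y0) * (x2 - x0) with hD
  have hD0 : D ≠ 0 := hDpos.ne'
  have hDR : ((D : ℤ) : ℝ) ≠ 0 := Int.cast_ne_zero.mpr hD0
  have hDRpos : (0 : ℝ) < (D : ℝ) := by exact_mod_cast hDpos
  have hu1R : ((D : ℤ) : ℝ) * (u1 : ℝ) = (C1 : ℝ) * ((x1 : ℝ) - x0) + (C2 : ℝ) * ((x2 : ℝ) - x0) := by
    exact_mod_cast hu1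
  have hu2R : ((D : ℤ) : ℝ) * (u2 : ℝ) = (C1 : ℝ) * ((y1 : ℝ) - y0) + (C2 : ℝ) * ((y2 : ℝ) - y0) := by
    exact_mod_cast hu2
  have hmem : ((((x0 + u1 : ℤ) : ℝ)), ((y0 + u2 : ℤ) : ℝ)) ∈ convexHull ℝ
      ({((x0 : ℝ), (y0 : ℝ)), ((x1 : ℝ), (y1 : ℝ)), ((x2 : ℝ), (y2 : ℝ))} : Set (ℝ × ℝ)) := by
    have H := mem_hull3 (x := ((x0 : ℝ), (y0 : ℝ))) (y := ((x1 : ℝ), (y1 : ℝ)))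
      (z := ((x2 : ℝ), (y2 : ℝ)))
      (w₀ := ((D - C1 - C2 : ℤ) : ℝ) / (D : ℝ)) (w₁ := (C1 : ℝ) / (D : ℝ))
      (w₂ := (C2 : ℝ) / (D : ℝ))
      (div_nonneg (by exact_mod_cast (by omega : (0:ℤ) ≤ D - C1 - C2)) hDRpos.le)
      (div_nonneg (by exact_mod_cast h1) hDRpos.le)
      (div_nonneg (by exact_mod_cast h2) hDRpos.le)
      (by push_cast; field_simp; ring)
    have hpt : ((((x0 + u1 : ℤ) : ℝ)), ((y0 + u2 : ℤ) : ℝ))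
        = (((D - C1 - C2 : ℤ) : ℝ) / (D : ℝ)) • ((x0 : ℝ), (y0 : ℝ))
          + ((C1 : ℝ) / (D : ℝ)) • ((x1 : ℝ), (y1 : ℝ))
          + ((C2 : ℝ) / (D : ℝ)) • ((x2 : ℝ), (y2 : ℝ)) := by
      simp only [Prod.smul_mk, Prod.mk_add_mk, Prod.mk.injEq, smul_eq_mul]
      constructor
      · push_cast
        field_simp
        linear_combination hu1R
      · push_cast
        field_simp
        linear_combination hu2R
    rw [hpt]; exact H
  rcases (hT (x0 + u1, y0 + u2)).1 hmem with h | h | h <;>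
    rw [Prod.mk.injEq] at h <;> obtain ⟨e1, e2⟩ := h
  · have hu1' : u1 = 0 := by omega
    have hu2' : u2 = 0 := by omega
    rw [hu1', mul_zero] at hu1
    rw [hu2', mul_zero] at hu2
    have hc1 : C1 * D = 0 := by
      linear_combination (-(y2 - y0)) * hu1 + (x2 - x0) * hu2 + C1 * hD
    have hc2 : C2 * D = 0 := by
      linear_combination (y1 - y0) * hu1 - (x1 - x0) * hu2 + C2 * hD
    rcases mul_eq_zero.1 hc1 with hc | hc
    · rcases mul_eq_zero.1 hc2 with hc' | hc'
      · exact h0 ⟨hc, hc'⟩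
      · exact hD0 hc'
    · exact hD0 hc
  · have hu1' : u1 = x1 - x0 := by omega
    have hu2' : u2 = y1 - y0 := by omega
    rw [hu1'] at hu1; rw [hu2'] at hu2
    have hc1 : (C1 - D) * D = 0 := by
      linear_combination (-(y2 - y0)) * hu1 + (x2 - x0) * hu2 + (C1 - D) * hD
    rcases mul_eq_zero.1 hc1 with hc | hc
    · omega
    · exact hD0 hc
  · have hu1' : u1 = x2 - x0 := by omega
    have hu2' : u2 = y2 - y0 := by omega
    rw [hu1'] at hu1; rw [hu2'] at hu2
    have hc2 : (C2 - D) * D = 0 := by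
      linear_combination (y1 - y0) * hu1 - (x1 - x0) * hu2 + (C2 - D) * hD
    rcases mul_eq_zero.1 hc2 with hc | hc
    · omega
    · exact hD0 hc

private lemma key (v₀ v₁ v₂ : ℤ × ℤ)
    (hd : 2 ≤ (v₁.1 - v₀.1) * (v₂.2 - v₀.2) - (v₁.2 - v₀.2) * (v₂.1 - v₀.1))
    (hT : ∀ p : ℤ × ℤ,
      ((p.1 : ℝ), (p.2 : ℝ)) ∈ convexHull ℝ
          ({((v₀.1 : ℝ), (v₀.2 : ℝ)), ((v₁.1 : ℝ), (v₁.2 : ℝ)),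
            ((v₂.1 : ℝ), (v₂.2 : ℝ))} : Set (ℝ × ℝ)) ↔
        p = v₀ ∨ p = v₁ ∨ p = v₂) : False := by
  obtain ⟨x0, y0⟩ := v₀
  obtain ⟨x1, y1⟩ := v₁
  obtain ⟨x2, y2⟩ := v₂
  simp only at hd hT
  set D : ℤ := (x1 - x0) * (y2 - y0) - (y1 - y0) * (x2 - x0) with hD
  have hDpos : 0 < D := by omega
  have hD0 : D ≠ 0 := hDpos.ne'
  -- existence of a lattice vector not in the sublattice spanned by the edge vectors
  have hex : ∃ p1 p2 : ℤ, ¬(D ∣ (p1 * (y2 - y0) - p2 * (x2 - x0)) ∧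
      D ∣ ((x1 - x0) * p2 - (y1 - y0) * p1)) := by
    by_contra hcon
    push_neg at hcon
    obtain ⟨k4, hk4⟩ : D ∣ (y2 - y0) := by simpa using (hcon 1 0).1
    obtain ⟨k2, hk2⟩ : D ∣ (y1 - y0) := by
      have := (hcon 1 0).2; simp only [mul_zero, zero_sub, mul_one, dvd_neg] at this
      exact this
    obtain ⟨k3, hk3⟩ : D ∣ (x2 - x0) := by
      have := (hcon 0 1).1; simp only [zero_mul, zero_sub, one_mul, dvd_neg] at this
      exact this
    obtain ⟨k1, hk1⟩ : D ∣ (x1 - x0) := by simpa using (hcon 0 1).2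
    have e : D * 1 = D * (D * (k1 * k4 - k2 * k3)) := by
      linear_combination hD + (y2 - y0) * hk1 + (D * k1) * hk4
        + (-(x2 - x0)) * hk2 + (-(D * k2)) * hk3
    have one : (1 : ℤ) = D * (k1 * k4 - k2 * k3) := mul_left_cancel₀ hD0 e
    have : D ∣ 1 := ⟨k1 * k4 - k2 * k3, one⟩
    have := Int.le_of_dvd one_pos this
    omega
  obtain ⟨p1, p2, hp⟩ := hex
  set A : ℤ := p1 * (y2 - y0) - p2 * (x2 - x0) with hA
  set B : ℤ := (x1 - x0) * p2 - (y1 - y0) * p1 with hB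
  set A1 : ℤ := A % D with hA1
  set B1 : ℤ := B % D with hB1
  have hA1n : 0 ≤ A1 := Int.emod_nonneg A hD0
  have hA1lt : A1 < D := Int.emod_lt_of_pos A hDpos
  have hB1n : 0 ≤ B1 := Int.emod_nonneg B hD0
  have hB1lt : B1 < D := Int.emod_lt_of_pos B hDpos
  have hnot : ¬(A1 = 0 ∧ B1 = 0) := by
    rintro ⟨h1', h2'⟩
    exact hp ⟨Int.dvd_of_emod_eq_zero (hA1 ▸ h1'), Int.dvd_of_emod_eq_zero (hB1 ▸ h2')⟩
  have eA := Int.mul_ediv_add_emod A D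
  have eB := Int.mul_ediv_add_emod B D
  rw [← hA1] at eA
  rw [← hB1] at eB
  obtain ⟨q1, q2, hq1, hq2⟩ : ∃ q1 q2 : ℤ,
      D * q1 = A1 * (x1 - x0) + B1 * (x2 - x0) ∧
      D * q2 = A1 * (y1 - y0) + B1 * (y2 - y0) := by
    refine ⟨p1 - (A / D) * (x1 - x0) - (B / D) * (x2 - x0),
      p2 - (A / D) * (y1 - y0) - (B / D) * (y2 - y0), ?_, ?_⟩
    · linear_combination (-(x1 - x0)) * eA + (-(x2 - x0)) * eB
        + (-(x1 - x0)) * hA + (-(x2 - x0)) * hB + p1 * hD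
    · linear_combination (-(y1 - y0)) * eA + (-(y2 - y0)) * eB
        + (-(y1 - y0)) * hA + (-(y2 - y0)) * hB + p2 * hD
  rcases le_or_gt (A1 + B1) D with hle | hlt
  · exact inner_contra x0 y0 x1 y1 x2 y2 A1 B1 q1 q2 hDpos hA1n hB1n hle hA1lt hB1lt
      hnot hq1 hq2 hT
  · refine inner_contra x0 y0 x1 y1 x2 y2 (D - A1) (D - B1)
      ((x1 - x0) + (x2 - x0) - q1) ((y1 - y0) + (y2 - y0) - q2) hDpos
      (by omega) (by omega) (by omega) (by omega) (by omega) (by omega)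
      ?_ ?_ hT
    · linear_combination -hq1
    · linear_combination -hq2

private lemma collinear_of_det (x0 y0 x1 y1 x2 y2 : ℝ)
    (h : (x1 - x0) * (y2 - y0) - (y1 - y0) * (x2 - x0) = 0) :
    Collinear ℝ ({(x0, y0), (x1, y1), (x2, y2)} : Set (ℝ × ℝ)) := by
  rw [collinear_iff_of_mem (Set.mem_insert _ _)]
  by_cases hP : x1 = x0 ∧ y1 = y0
  · refine ⟨(x2 - x0, y2 - y0), ?_⟩
    intro p hp
    simp only [Set.mem_insert_iff, Set.mem_singleton_iff] at hp
    rcases hp with rfl | rfl | rfl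
    · refine ⟨0, ?_⟩
      simp only [vadd_eq_add, Prod.smul_mk, Prod.mk_add_mk, Prod.mk.injEq, smul_eq_mul]
      constructor <;> ring
    · refine ⟨0, ?_⟩
      simp only [vadd_eq_add, Prod.smul_mk, Prod.mk_add_mk, Prod.mk.injEq, smul_eq_mul]
      rw [hP.1, hP.2]
      constructor <;> ring
    · refine ⟨1, ?_⟩
      simp only [vadd_eq_add, Prod.smul_mk, Prod.mk_add_mk, Prod.mk.injEq, smul_eq_mul]
      constructor <;> ring
  · refine ⟨(x1 - x0, y1 - y0), ?_⟩
    intro p hp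
    simp only [Set.mem_insert_iff, Set.mem_singleton_iff] at hp
    rcases hp with rfl | rfl | rfl
    · refine ⟨0, ?_⟩
      simp only [vadd_eq_add, Prod.smul_mk, Prod.mk_add_mk, Prod.mk.injEq, smul_eq_mul]
      constructor <;> ring
    · refine ⟨1, ?_⟩
      simp only [vadd_eq_add, Prod.smul_mk, Prod.mk_add_mk, Prod.mk.injEq, smul_eq_mul]
      constructor <;> ring
    · rcases eq_or_ne x1 x0 with hx | hx
      · have hy : y1 ≠ y0 := fun hy => hP ⟨hx, hy⟩
        have hyne : y1 - y0 ≠ 0 := sub_ne_zero.mpr hy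
        have hx0 : x1 - x0 = 0 := by rw [hx]; ring
        have h2 : (y1 - y0) * (x2 - x0) = 0 := by
          linear_combination -h + (y2 - y0) * hx0
        have hx2 : x2 = x0 := by
          rcases mul_eq_zero.1 h2 with h3 | h3
          · exact absurd h3 hyne
          · linarith
        refine ⟨(y2 - y0) / (y1 - y0), ?_⟩
        simp only [vadd_eq_add, Prod.smul_mk, Prod.mk_add_mk, Prod.mk.injEq, smul_eq_mul]
        constructor
        · rw [hx0, hx2]; ring
        · field_simp
          ring
      · have hxne : x1 - x0 ≠ 0 := sub_ne_zero.mpr hx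
        refine ⟨(x2 - x0) / (x1 - x0), ?_⟩
        simp only [vadd_eq_add, Prod.smul_mk, Prod.mk_add_mk, Prod.mk.injEq, smul_eq_mul]
        constructor
        · field_simp
          ring
        · field_simp
          linear_combination h

/-- A primitive lattice triangle (one whose only lattice points are its three non-collinear
vertices) has `|det(v₁ − v₀, v₂ − v₀)| = 1`, i.e. it is affinely unimodularly equivalent to
the standard triangle. -/
theorem primitive_triangle_det (v₀ v₁ v₂ : ℤ × ℤ)
    (hnc : ¬ Collinear ℝ ({((v₀.1 : ℝ), (v₀.2 : ℝ)), ((v₁.1 : ℝ), (v₁.2 : ℝ)),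
      ((v₂.1 : ℝ), (v₂.2 : ℝ))} : Set (ℝ × ℝ)))
    (hT : ∀ p : ℤ × ℤ,
      ((p.1 : ℝ), (p.2 : ℝ)) ∈ convexHull ℝ
          ({((v₀.1 : ℝ), (v₀.2 : ℝ)), ((v₁.1 : ℝ), (v₁.2 : ℝ)),
            ((v₂.1 : ℝ), (v₂.2 : ℝ))} : Set (ℝ × ℝ)) ↔
        p = v₀ ∨ p = v₁ ∨ p = v₂) :
    |(v₁.1 - v₀.1) * (v₂.2 - v₀.2) - (v₁.2 - v₀.2) * (v₂.1 - v₀.1)| = 1 := by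
  have hD0 : (v₁.1 - v₀.1) * (v₂.2 - v₀.2) - (v₁.2 - v₀.2) * (v₂.1 - v₀.1) ≠ 0 := by
    intro h
    apply hnc
    have hR : ((v₁.1 : ℝ) - v₀.1) * ((v₂.2 : ℝ) - v₀.2)
        - ((v₁.2 : ℝ) - v₀.2) * ((v₂.1 : ℝ) - v₀.1) = 0 := by exact_mod_cast h
    exact collinear_of_det _ _ _ _ _ _ hR
  by_contra habs
  rcases abs_cases ((v₁.1 - v₀.1) * (v₂.2 - v₀.2) - (v₁.2 - v₀.2) * (v₂.1 - v₀.1)) with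
    ⟨he, hs⟩ | ⟨he, hs⟩
  · have hne1 : (v₁.1 - v₀.1) * (v₂.2 - v₀.2) - (v₁.2 - v₀.2) * (v₂.1 - v₀.1) ≠ 1 :=
      fun h => habs (he.trans h)
    exact key v₀ v₁ v₂ (by omega) hT
  · have hne1 : (v₁.1 - v₀.1) * (v₂.2 - v₀.2) - (v₁.2 - v₀.2) * (v₂.1 - v₀.1) ≠ -1 := by
      intro h
      rw [h] at he
      simp at he
      exact habs (by rw [h]; simp [he])
    have hd' : 2 ≤ (v₂.1 - v₀.1) * (v₁.2 - v₀.2) - (v₂.2 - v₀.2) * (v₁.1 - v₀.1) := by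
      have : (v₂.1 - v₀.1) * (v₁.2 - v₀.2) - (v₂.2 - v₀.2) * (v₁.1 - v₀.1)
          = -((v₁.1 - v₀.1) * (v₂.2 - v₀.2) - (v₁.2 - v₀.2) * (v₂.1 - v₀.1)) := by ring
      omega
    have hT' : ∀ p : ℤ × ℤ,
        ((p.1 : ℝ), (p.2 : ℝ)) ∈ convexHull ℝ
            ({((v₀.1 : ℝ), (v₀.2 : ℝ)), ((v₂.1 : ℝ), (v₂.2 : ℝ)),
              ((v₁.1 : ℝ), (v₁.2 : ℝ))} : Set (ℝ × ℝ)) ↔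
          p = v₀ ∨ p = v₂ ∨ p = v₁ := by
      intro p
      rw [show ({((v₀.1 : ℝ), (v₀.2 : ℝ)), ((v₂.1 : ℝ), (v₂.2 : ℝ)),
              ((v₁.1 : ℝ), (v₁.2 : ℝ))} : Set (ℝ × ℝ))
          = {((v₀.1 : ℝ), (v₀.2 : ℝ)), ((v₁.1 : ℝ), (v₁.2 : ℝ)),
              ((v₂.1 : ℝ), (v₂.2 : ℝ))} from by rw [Set.pair_comm]]
      rw [hT p]
      tauto
    exact key v₀ v₂ v₁ hd' hT'
end

section
/- Let d ≥ 1 be an integer and v₀, v₁, v₂ ∈ ℤ² non-collinear points spanning the lattice triangle Δ := convexHull_ℝ({v₀, v₁, v₂}) ⊂ ℝ². Suppose that every side of Δ has integral length d, i.e. there exist primitive vectors w₁, w₂, w₃ ∈ ℤ² with v₁ − v₀ = d·w₁, v₂ − v₁ = d·w₂ and v₀ − v₂ = d·w₃, and suppose that the affine span over ℤ of the set of lattice points on the boundary of Δ, { p ∈ ℤ² : p ∈ ∂Δ }, is all of ℤ². Then there exist U ∈ GL₂(ℤ) and t ∈ ℤ² such that the affine map x ↦ Ux + t sends {v₀, v₁,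 v₂} onto {(0,0), (d,0), (0,d)}; i.e. Δ is affinely unimodularly equivalent to d times a primitive triangle. -/
open Set

/-- If an integer vector has cross product zero with a primitive vector,
it is an integer multiple of it. -/
private lemma parallel_primitive (w x : ℤ × ℤ) (hw : Int.gcd w.1 w.2 = 1)
    (h : x.1 * w.2 = x.2 * w.1) : ∃ m : ℤ, x = m • w := by
  obtain ⟨u, v, huv⟩ := Int.isCoprime_iff_gcd_eq_one.mpr hw
  refine ⟨u * x.1 + v * x.2, ?_⟩
  have h1 : (u * x.1 + v * x.2) * w.1 = x.1 := by linear_combination x.1 * huv - v * h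
  have h2 : (u * x.1 + v * x.2) * w.2 = x.2 := by linear_combination x.2 * huv + u * h
  ext
  · simpa [mul_comm] using h1.symm
  · simpa [mul_comm] using h2.symm

private def mkLin (a b c d : ℤ) : (ℤ × ℤ) →ₗ[ℤ] (ℤ × ℤ) where
  toFun x := (a * x.1 + b * x.2, c * x.1 + d * x.2)
  map_add' x y := by ext <;> simp <;> ring
  map_smul' m x := by ext <;> simp <;> ring

private lemma mkLin_apply (a b c d : ℤ) (x : ℤ × ℤ) :
    mkLin a b c d x = (a * x.1 + b * x.2, c * x.1 + d * x.2) := rfl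

private lemma on_edge (d : ℕ) (hd : 1 ≤ d) (vj vk p w : ℤ × ℤ)
    (hw : Int.gcd w.1 w.2 = 1) (hs : vk - vj = (d : ℤ) • w)
    (t : ℝ)
    (h1 : (p.1 : ℝ) - vj.1 = t * ((vk.1 : ℝ) - vj.1))
    (h2 : (p.2 : ℝ) - vj.2 = t * ((vk.2 : ℝ) - vj.2)) :
    ∃ m : ℤ, p - vj = m • w := by
  have e1 : (vk.1 - vj.1 : ℤ) = d * w.1 := by
    have := congrArg Prod.fst hs; simpa using this
  have e2 : (vk.2 - vj.2 : ℤ) = d * w.2 := by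
    have := congrArg Prod.snd hs; simpa using this
  have hcrossR : ((p.1 - vj.1 : ℤ) : ℝ) * ((vk.2 - vj.2 : ℤ) : ℝ)
      = ((p.2 - vj.2 : ℤ) : ℝ) * ((vk.1 - vj.1 : ℤ) : ℝ) := by
    push_cast
    linear_combination ((vk.2 : ℝ) - vj.2) * h1 - ((vk.1 : ℝ) - vj.1) * h2
  have hcross : (p.1 - vj.1) * (vk.2 - vj.2) = (p.2 - vj.2) * (vk.1 - vj.1) := by
    exact_mod_cast hcrossR
  have hd0 : (d : ℤ) ≠ 0 := by positivity
  have hcross' : (p.1 - vj.1) * w.2 = (p.2 - vj.2) * w.1 := by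
    apply mul_left_cancel₀ hd0
    linear_combination hcross - (p.1 - vj.1) * e2 + (p.2 - vj.2) * e1
  obtain ⟨m, hm⟩ := parallel_primitive w (p - vj) hw (by simpa using hcross')
  exact ⟨m, hm⟩

/-- A lattice triangle all of whose sides have integral length `d` and whose boundary
lattice points affinely span `ℤ²` is affinely unimodularly equivalent to `d` times the
standard primitive triangle, i.e. to the triangle with vertices `(0,0)`, `(d,0)`, `(0,d)`. -/
theorem triangle_equilateral_is_dilated_standard (d : ℕ) (hd : 1 ≤ d) (v₀ v₁ v₂ : ℤ × ℤ)
    (hnc : ¬ Collinear ℝ ({((v₀.1 : ℝ), (v₀.2 : ℝ)), ((v₁.1 : ℝ), (v₁.2 : ℝ)),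
      ((v₂.1 : ℝ), (v₂.2 : ℝ))} : Set (ℝ × ℝ)))
    (w₁ w₂ w₃ : ℤ × ℤ)
    (hw₁ : Int.gcd w₁.1 w₁.2 = 1) (hw₂ : Int.gcd w₂.1 w₂.2 = 1)
    (hw₃ : Int.gcd w₃.1 w₃.2 = 1)
    (hs₁ : v₁ - v₀ = (d : ℤ) • w₁) (hs₂ : v₂ - v₁ = (d : ℤ) • w₂)
    (hs₃ : v₀ - v₂ = (d : ℤ) • w₃)
    (hspan : affineSpan ℤ {p : ℤ × ℤ |
        ((p.1 : ℝ), (p.2 : ℝ)) ∈ frontier (convexHull ℝ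
          ({((v₀.1 : ℝ), (v₀.2 : ℝ)), ((v₁.1 : ℝ), (v₁.2 : ℝ)),
            ((v₂.1 : ℝ), (v₂.2 : ℝ))} : Set (ℝ × ℝ)))} = ⊤) :
    ∃ (U : (ℤ × ℤ) ≃ₗ[ℤ] (ℤ × ℤ)) (t : ℤ × ℤ),
      (fun x : ℤ × ℤ => U x + t) '' {v₀, v₁, v₂} =
        {((0 : ℤ), (0 : ℤ)), ((d : ℤ), (0 : ℤ)), ((0 : ℤ), (d : ℤ))} := by
  have hd0 : (d : ℤ) ≠ 0 := by positivity
  set A : ℝ × ℝ := ((v₀.1 : ℝ), (v₀.2 : ℝ)) with hA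
  set B : ℝ × ℝ := ((v₁.1 : ℝ), (v₁.2 : ℝ)) with hB
  set C : ℝ × ℝ := ((v₂.1 : ℝ), (v₂.2 : ℝ)) with hC
  -- component equations for the sides
  have a1 : v₁.1 - v₀.1 = (d : ℤ) * w₁.1 := by
    have := congrArg Prod.fst hs₁; simpa using this
  have a2 : v₁.2 - v₀.2 = (d : ℤ) * w₁.2 := by
    have := congrArg Prod.snd hs₁; simpa using this
  have b1 : v₂.1 - v₁.1 = (d : ℤ) * w₂.1 := by
    have := congrArg Prod.fst hs₂; simpa using this
  have b2 : v₂.2 - v₁.2 = (d : ℤ) * w₂.2 := by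
    have := congrArg Prod.snd hs₂; simpa using this
  have c1 : v₀.1 - v₂.1 = (d : ℤ) * w₃.1 := by
    have := congrArg Prod.fst hs₃; simpa using this
  have c2 : v₀.2 - v₂.2 = (d : ℤ) * w₃.2 := by
    have := congrArg Prod.snd hs₃; simpa using this
  -- w₃ in terms of w₁ and w₂
  have hw3eq : w₃ = -w₁ - w₂ := by
    have h1 : w₁.1 + w₂.1 + w₃.1 = 0 := by
      have h : (d : ℤ) * (w₁.1 + w₂.1 + w₃.1) = 0 := by linear_combination -a1 - b1 - c1
      exact (mul_eq_zero.mp h).resolve_left hd0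
    have h2 : w₁.2 + w₂.2 + w₃.2 = 0 := by
      have h : (d : ℤ) * (w₁.2 + w₂.2 + w₃.2) = 0 := by linear_combination -a2 - b2 - c2
      exact (mul_eq_zero.mp h).resolve_left hd0
    ext
    · simp; linarith
    · simp; linarith
  -- the affine basis
  have hAI : AffineIndependent ℝ ![A, B, C] :=
    affineIndependent_iff_not_collinear_set.mpr hnc
  have hrange : Set.range ![A, B, C] = ({A, B, C} : Set (ℝ × ℝ)) := by
    rw [Matrix.range_cons, Matrix.range_cons, Matrix.range_cons_empty,
      Set.singleton_union, Set.singleton_union]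
  have htop : affineSpan ℝ (Set.range ![A, B, C]) = ⊤ := by
    rw [hAI.affineSpan_eq_top_iff_card_eq_finrank_add_one]
    simp [Module.finrank_prod]
  let b : AffineBasis (Fin 3) ℝ (ℝ × ℝ) := ⟨![A, B, C], hAI, htop⟩
  have hbcoe : ⇑b = ![A, B, C] := rfl
  -- Step B : every lattice point on the frontier is in v₀ + ℤw₁ + ℤw₂
  have keyB : ∀ p : ℤ × ℤ,
      ((p.1 : ℝ), (p.2 : ℝ)) ∈ frontier (convexHull ℝ ({A, B, C} : Set (ℝ × ℝ))) →
      ∃ m n : ℤ, p - v₀ = m • w₁ + n • w₂ := by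
    intro p hp
    set x : ℝ × ℝ := ((p.1 : ℝ), (p.2 : ℝ)) with hx
    have hclosed : IsClosed (convexHull ℝ ({A, B, C} : Set (ℝ × ℝ))) :=
      (Set.toFinite _).isClosed_convexHull ℝ
    have hhull : x ∈ convexHull ℝ ({A, B, C} : Set (ℝ × ℝ)) := by
      have := hp.1; rwa [hclosed.closure_eq] at this
    have hnotint : x ∉ interior (convexHull ℝ ({A, B, C} : Set (ℝ × ℝ))) := hp.2
    have hmem : x ∈ convexHull ℝ (Set.range ![A, B, C]) := by rwa [hrange]
    rw [convexHull_range_eq_exists_affineCombination] at hmem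
    obtain ⟨s, w, hw0, hwsum, hwx⟩ := hmem
    have hcoord_nonneg : ∀ i, 0 ≤ b.coord i x := by
      intro i
      by_cases hi : i ∈ s
      · rw [← hwx, show (![A, B, C] : Fin 3 → ℝ × ℝ) = ⇑b from rfl,
          b.coord_apply_combination_of_mem hi hwsum]
        exact hw0 i hi
      · rw [← hwx, show (![A, B, C] : Fin 3 → ℝ × ℝ) = ⇑b from rfl,
          b.coord_apply_combination_of_notMem hi hwsum]
    have hzero : ∃ i, b.coord i x = 0 := by
      by_contra hcon
      push_neg at hcon
      apply hnotint
      rw [← hrange, ← hbcoe, b.interior_convexHull]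
      intro i
      exact lt_of_le_of_ne (hcoord_nonneg i) (Ne.symm (hcon i))
    obtain ⟨i₀, hi₀⟩ := hzero
    have hsum1 : b.coord 0 x + b.coord 1 x + b.coord 2 x = 1 := by
      have := b.sum_coord_apply_eq_one x
      rwa [Fin.sum_univ_three] at this
    have hcomb : b.coord 0 x • A + b.coord 1 x • B + b.coord 2 x • C = x := by
      have := b.linear_combination_coord_eq_self x
      rwa [Fin.sum_univ_three, hbcoe] at this
    set c0 := b.coord 0 x with hc0def
    set c1' := b.coord 1 x with hc1def
    set c2' := b.coord 2 x with hc2def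
    have hf : c0 * (v₀.1 : ℝ) + c1' * v₁.1 + c2' * v₂.1 = (p.1 : ℝ) := by
      have := congrArg Prod.fst hcomb
      simpa [hA, hB, hC, hx] using this
    have hs' : c0 * (v₀.2 : ℝ) + c1' * v₁.2 + c2' * v₂.2 = (p.2 : ℝ) := by
      have := congrArg Prod.snd hcomb
      simpa [hA, hB, hC, hx] using this
    fin_cases i₀
    · -- c0 = 0 : p on edge v₁v₂, direction w₂
      have hc : c0 = 0 := hi₀
      obtain ⟨m, hm⟩ := on_edge d hd v₁ v₂ p w₂ hw₂ hs₂ c2'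
        (by push_cast; linear_combination -hf + (v₁.1 : ℝ) * hsum1 + ((v₀.1 : ℝ) - v₁.1) * hc)
        (by push_cast; linear_combination -hs' + (v₁.2 : ℝ) * hsum1 + ((v₀.2 : ℝ) - v₁.2) * hc)
      refine ⟨(d : ℤ), m, ?_⟩
      have hsplit : p - v₀ = (p - v₁) + (v₁ - v₀) := by ring
      rw [hsplit, hm, hs₁]; abel
    · -- c1 = 0 : p on edge v₂v₀, direction w₃
      have hc : c1' = 0 := hi₀
      obtain ⟨m, hm⟩ := on_edge d hd v₂ v₀ p w₃ hw₃ hs₃ c0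
        (by push_cast; linear_combination -hf + (v₂.1 : ℝ) * hsum1 + ((v₁.1 : ℝ) - v₂.1) * hc)
        (by push_cast; linear_combination -hs' + (v₂.2 : ℝ) * hsum1 + ((v₁.2 : ℝ) - v₂.2) * hc)
      refine ⟨(d : ℤ) - m, (d : ℤ) - m, ?_⟩
      have hsplit : p - v₀ = (p - v₂) - (v₀ - v₂) := by ring
      rw [hsplit, hm, hs₃, hw3eq]
      module
    · -- c2 = 0 : p on edge v₀v₁, direction w₁
      have hc : c2' = 0 := hi₀
      obtain ⟨m, hm⟩ := on_edge d hd v₀ v₁ p w₁ hw₁ hs₁ c1'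
        (by push_cast; linear_combination -hf + (v₀.1 : ℝ) * hsum1 + ((v₂.1 : ℝ) - v₀.1) * hc)
        (by push_cast; linear_combination -hs' + (v₀.2 : ℝ) * hsum1 + ((v₂.2 : ℝ) - v₀.2) * hc)
      exact ⟨m, 0, by rw [hm]; module⟩
  -- Step A : w₁, w₂ generate ℤ²
  have hall : ∀ q : ℤ × ℤ, q - v₀ ∈ Submodule.span ℤ ({w₁, w₂} : Set (ℤ × ℤ)) := by
    have hSle : affineSpan ℤ {p : ℤ × ℤ |
        ((p.1 : ℝ), (p.2 : ℝ)) ∈ frontier (convexHull ℝ ({A, B, C} : Set (ℝ × ℝ)))}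
        ≤ AffineSubspace.mk' v₀ (Submodule.span ℤ ({w₁, w₂} : Set (ℤ × ℤ))) := by
      apply affineSpan_le.mpr
      intro p hp
      obtain ⟨m, n, hmn⟩ := keyB p hp
      rw [SetLike.mem_coe, AffineSubspace.mem_mk']
      exact Submodule.mem_span_pair.mpr ⟨m, n, hmn.symm⟩
    rw [hspan] at hSle
    intro q
    have hq : q ∈ AffineSubspace.mk' v₀ (Submodule.span ℤ ({w₁, w₂} : Set (ℤ × ℤ))) :=
      hSle (AffineSubspace.mem_top ℤ _ q)
    rwa [AffineSubspace.mem_mk'] at hq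
  obtain ⟨a, bb, hab⟩ := Submodule.mem_span_pair.mp
    (by simpa using hall (v₀ + ((1 : ℤ), (0 : ℤ))))
  obtain ⟨c, e, hce⟩ := Submodule.mem_span_pair.mp
    (by simpa using hall (v₀ + ((0 : ℤ), (1 : ℤ))))
  set D : ℤ := w₁.1 * w₂.2 - w₁.2 * w₂.1 with hD
  have hab1 : a * w₁.1 + bb * w₂.1 = 1 := by
    have := congrArg Prod.fst hab; simpa using this
  have hab2 : a * w₁.2 + bb * w₂.2 = 0 := by
    have := congrArg Prod.snd hab; simpa using this
  have hce1 : c * w₁.1 + e * w₂.1 = 0 := by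
    have := congrArg Prod.fst hce; simpa using this
  have hce2 : c * w₁.2 + e * w₂.2 = 1 := by
    have := congrArg Prod.snd hce; simpa using this
  have hDunit : D * (a * e - bb * c) = 1 := by
    linear_combination (c * w₁.2 + e * w₂.2) * hab1 + hce2 - (c * w₁.1 + e * w₂.1) * hab2
  have hD2 : D * D = 1 := Int.isUnit_mul_self (IsUnit.of_mul_eq_one _ hDunit)
  -- the unimodular map
  set Ul : (ℤ × ℤ) →ₗ[ℤ] (ℤ × ℤ) :=
    mkLin (D * (w₂.2 + w₁.2)) (-(D * (w₂.1 + w₁.1))) (-(D * w₁.2)) (D * w₁.1) with hUl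
  set Vl : (ℤ × ℤ) →ₗ[ℤ] (ℤ × ℤ) :=
    mkLin w₁.1 (w₁.1 + w₂.1) w₁.2 (w₁.2 + w₂.2) with hVl
  have hcomp1 : Ul.comp Vl = LinearMap.id := by
    apply LinearMap.ext; intro x
    simp only [hUl, hVl, LinearMap.coe_comp, Function.comp_apply, mkLin_apply,
      LinearMap.id_apply, Prod.ext_iff]
    constructor
    · linear_combination x.1 * hD2
    · linear_combination x.2 * hD2
  have hcomp2 : Vl.comp Ul = LinearMap.id := by
    apply LinearMap.ext; intro x
    simp only [hUl, hVl, LinearMap.coe_comp, Function.comp_apply, mkLin_apply,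
      LinearMap.id_apply, Prod.ext_iff]
    constructor
    · linear_combination x.1 * hD2
    · linear_combination x.2 * hD2
  have hUw₁ : Ul w₁ = ((1 : ℤ), (0 : ℤ)) := by
    simp only [hUl, mkLin_apply, Prod.mk.injEq]
    constructor
    · linear_combination hD2
    · ring
  have hUw₂ : Ul w₂ = ((-1 : ℤ), (1 : ℤ)) := by
    simp only [hUl, mkLin_apply, Prod.mk.injEq]
    constructor
    · linear_combination -hD2
    · linear_combination hD2
  refine ⟨LinearEquiv.ofLinear Ul Vl hcomp1 hcomp2, -(Ul v₀), ?_⟩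
  have hF0 : Ul v₀ + -(Ul v₀) = ((0 : ℤ), (0 : ℤ)) := by
    rw [add_neg_cancel]; rfl
  have hF1 : Ul v₁ + -(Ul v₀) = ((d : ℤ), (0 : ℤ)) := by
    have h : Ul v₁ + -(Ul v₀) = Ul (v₁ - v₀) := by rw [map_sub, sub_eq_add_neg]
    rw [h, hs₁, map_smul, hUw₁]
    ext <;> simp
  have hF2 : Ul v₂ + -(Ul v₀) = ((0 : ℤ), (d : ℤ)) := by
    have h20 : v₂ - v₀ = (d : ℤ) • w₁ + (d : ℤ) • w₂ := by
      have hsplit : v₂ - v₀ = (v₂ - v₁) + (v₁ - v₀) := by ring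
      rw [hsplit, hs₂, hs₁]; abel
    have h : Ul v₂ + -(Ul v₀) = Ul (v₂ - v₀) := by rw [map_sub, sub_eq_add_neg]
    rw [h, h20, map_add, map_smul, map_smul, hUw₁, hUw₂]
    ext <;> simp
  simp only [Set.image_insert_eq, Set.image_singleton, LinearEquiv.ofLinear_apply]
  rw [hF0, hF1, hF2]
end

section
/- Let s, l be positive integers with l ≥ 2, let X ∈ M_{s×l}(ℤ) be a matrix all of whose rows sum to 0, and let X' ∈ M_{s×(l−1)}(ℤ) be the matrix obtained from X by deleting its first column. Then for every k ≥ 1, the greatest common divisor of all k×k minors of X equals the greatest common divisor of all k×k minors of X'. Consequently, X and X' have the same rank and the same invariant factors. -/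
open Matrix

/-- A matrix `A ∈ M_{s×l}(ℤ)` is in Smith normal form: it is diagonal, and there is `r`
such that the first `r` diagonal entries are positive, the remaining ones vanish, and
consecutive diagonal entries divide each other. -/
def IsSNF {s l : ℕ} (A : Matrix (Fin s) (Fin l) ℤ) : Prop :=
  (∀ (i : Fin s) (j : Fin l), (i : ℕ) ≠ (j : ℕ) → A i j = 0) ∧
  ∃ r : ℕ,
    (∀ (i : Fin s) (j : Fin l), (i : ℕ) = (j : ℕ) →
      ((i : ℕ) < r → 0 < A i j) ∧ (r ≤ (i : ℕ) → A i j = 0)) ∧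
    (∀ (i i' : Fin s) (j j' : Fin l), (i : ℕ) = (j : ℕ) → (i' : ℕ) = (j' : ℕ) →
      (i : ℕ) + 1 = (i' : ℕ) → A i j ∣ A i' j')

/-- The matrix obtained from `A` by erasing its first column. -/
def eraseFirstCol {s l : ℕ} (A : Matrix (Fin s) (Fin l) ℤ) :
    Matrix (Fin s) (Fin (l - 1)) ℤ :=
  Matrix.of fun i j => A i ⟨(j : ℕ) + 1, by have := j.isLt; omega⟩

/-- A matrix `A` with `A·𝟙 = 0` is in homogeneous Smith normal form if the matrix obtained
from `A` by erasing its first column is in Smith normal form. -/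
def IsHSNF {s l : ℕ} (A : Matrix (Fin s) (Fin l) ℤ) : Prop :=
  A *ᵥ 1 = 0 ∧ IsSNF (eraseFirstCol A)

/-- The (normalized, nonnegative) greatest common divisor of all `k×k` minors of an integer
matrix: the gcd of the determinants of all `k×k` submatrices obtained by choosing `k`
distinct rows and `k` distinct columns. -/
noncomputable def gcdMinors {s l : ℕ} (k : ℕ) (X : Matrix (Fin s) (Fin l) ℤ) : ℤ :=
  Finset.univ.gcd fun p : (Fin k ↪ Fin s) × (Fin k ↪ Fin l) =>
    (X.submatrix ⇑p.1 ⇑p.2).det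

lemma gcdMinors_nonneg {s l : ℕ} (k : ℕ) (X : Matrix (Fin s) (Fin l) ℤ) :
    0 ≤ gcdMinors k X := by
  have h := Finset.normalize_gcd (s := (Finset.univ : Finset ((Fin k ↪ Fin s) × (Fin k ↪ Fin l))))
    (f := fun p => (X.submatrix ⇑p.1 ⇑p.2).det)
  rw [gcdMinors, ← h, ← Int.abs_eq_normalize]
  exact abs_nonneg _

lemma gcdMinors_dvd_det {s l k : ℕ} (X : Matrix (Fin s) (Fin l) ℤ)
    (r : Fin k ↪ Fin s) (coef : Fin k → Fin l → ℤ) :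
    gcdMinors k X ∣ (Matrix.of fun i j : Fin k => ∑ c : Fin l, coef i c * X (r j) c).det := by
  have key : (Matrix.of fun i j : Fin k => ∑ c : Fin l, coef i c * X (r j) c).det
      = ∑ f : Fin k → Fin l, (∏ i, coef i (f i)) •
          (Matrix.detRowAlternating (fun i j : Fin k => X (r j) (f i))) := by
    have h1 : (Matrix.of fun i j : Fin k => ∑ c : Fin l, coef i c * X (r j) c)
        = fun i => ∑ c : Fin l, coef i c • fun j : Fin k => X (r j) c := by
      funext i j
      simp [Finset.sum_apply]
    show Matrix.detRowAlternating _ = _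
    rw [h1]
    exact (Matrix.detRowAlternating.toMultilinearMap.map_sum
      (g := fun i c => coef i c • fun j : Fin k => X (r j) c)).trans
      (Finset.sum_congr rfl fun f _ => Matrix.detRowAlternating.toMultilinearMap.map_smul_univ
        (fun i => coef i (f i)) (fun i j => X (r j) (f i)))
  rw [key]
  refine Finset.dvd_sum fun f _ => ?_
  by_cases hf : Function.Injective f
  · have h2 : Matrix.detRowAlternating (fun i j : Fin k => X (r j) (f i))
        = (X.submatrix ⇑r ⇑(⟨f, hf⟩ : Fin k ↪ Fin l)).det := by
      rw [← Matrix.det_transpose]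
      rfl
    rw [h2, smul_eq_mul]
    exact Dvd.dvd.mul_left (Finset.gcd_dvd (Finset.mem_univ (r, (⟨f, hf⟩ : Fin k ↪ Fin l)))) _
  · have : ∃ i j, f i = f j ∧ i ≠ j := by
      simpa [Function.Injective] using hf
    obtain ⟨i, j, hij, hne⟩ := this
    have h0 : Matrix.detRowAlternating (fun i j : Fin k => X (r j) (f i)) = 0 :=
      Matrix.detRowAlternating.map_eq_zero_of_eq _ (by rw [hij]) hne
    rw [h0, smul_zero]
    exact dvd_zero _

lemma gcdMinors_dvd_transpose {s l : ℕ} (k : ℕ) (X : Matrix (Fin s) (Fin l) ℤ) :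
    gcdMinors k X ∣ gcdMinors k Xᵀ := by
  refine Finset.dvd_gcd ?_
  rintro ⟨p1, p2⟩ -
  have h : (Xᵀ.submatrix ⇑p1 ⇑p2).det = (X.submatrix ⇑p2 ⇑p1).det := by
    rw [← Matrix.det_transpose (X.submatrix ⇑p2 ⇑p1)]
    rfl
  show gcdMinors k X ∣ (Xᵀ.submatrix ⇑p1 ⇑p2).det
  rw [h]
  exact Finset.gcd_dvd (Finset.mem_univ (p2, p1))

lemma gcdMinors_dvd_mul_right {s l l' : ℕ} (k : ℕ) (X : Matrix (Fin s) (Fin l) ℤ)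
    (R : Matrix (Fin l) (Fin l') ℤ) :
    gcdMinors k X ∣ gcdMinors k (X * R) := by
  refine Finset.dvd_gcd ?_
  rintro ⟨p1, p2⟩ -
  show gcdMinors k X ∣ ((X * R).submatrix ⇑p1 ⇑p2).det
  have h : (X * R).submatrix ⇑p1 ⇑p2
      = (Matrix.of fun i j : Fin k => ∑ c : Fin l, R c (p2 i) * X (p1 j) c)ᵀ := by
    ext i j
    simp [Matrix.mul_apply, mul_comm]
  rw [h, Matrix.det_transpose]
  exact gcdMinors_dvd_det X p1 (fun i c => R c (p2 i))

lemma gcdMinors_dvd_mul_left {s s' l : ℕ} (k : ℕ) (Q : Matrix (Fin s') (Fin s) ℤ)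
    (X : Matrix (Fin s) (Fin l) ℤ) :
    gcdMinors k X ∣ gcdMinors k (Q * X) := by
  calc gcdMinors k X ∣ gcdMinors k Xᵀ := gcdMinors_dvd_transpose k X
    _ ∣ gcdMinors k (Xᵀ * Qᵀ) := gcdMinors_dvd_mul_right k _ _
    _ ∣ gcdMinors k (Xᵀ * Qᵀ)ᵀ := gcdMinors_dvd_transpose k _
    _ = gcdMinors k (Q * X) := by rw [Matrix.transpose_mul, Matrix.transpose_transpose, Matrix.transpose_transpose]

lemma gcdMinors_units_eq {s l : ℕ} (k : ℕ) (Q : Matrix.GeneralLinearGroup (Fin s) ℤ)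
    (P : Matrix.GeneralLinearGroup (Fin l) ℤ) (X : Matrix (Fin s) (Fin l) ℤ) :
    gcdMinors k ((Q : Matrix (Fin s) (Fin s) ℤ) * X *
      ((P⁻¹ : Matrix.GeneralLinearGroup (Fin l) ℤ) : Matrix (Fin l) (Fin l) ℤ)) =
    gcdMinors k X := by
  refine Int.dvd_antisymm (gcdMinors_nonneg _ _) (gcdMinors_nonneg _ _) ?_ ?_
  · have e : ((Q⁻¹ : Matrix.GeneralLinearGroup (Fin s) ℤ) : Matrix (Fin s) (Fin s) ℤ) *
        ((Q : Matrix (Fin s) (Fin s) ℤ) * X *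
          ((P⁻¹ : Matrix.GeneralLinearGroup (Fin l) ℤ) : Matrix (Fin l) (Fin l) ℤ)) *
        (P : Matrix (Fin l) (Fin l) ℤ) = X := by
      calc ((Q⁻¹ : Matrix.GeneralLinearGroup (Fin s) ℤ) : Matrix (Fin s) (Fin s) ℤ) *
            ((Q : Matrix (Fin s) (Fin s) ℤ) * X *
              ((P⁻¹ : Matrix.GeneralLinearGroup (Fin l) ℤ) : Matrix (Fin l) (Fin l) ℤ)) *
            (P : Matrix (Fin l) (Fin l) ℤ)
          = (((Q⁻¹ : Matrix.GeneralLinearGroup (Fin s) ℤ) : Matrix (Fin s) (Fin s) ℤ) *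
              (Q : Matrix (Fin s) (Fin s) ℤ)) * X *
            (((P⁻¹ : Matrix.GeneralLinearGroup (Fin l) ℤ) : Matrix (Fin l) (Fin l) ℤ) *
              (P : Matrix (Fin l) (Fin l) ℤ)) := by
            simp only [Matrix.mul_assoc]
        _ = X := by rw [Units.inv_mul, Units.inv_mul, Matrix.one_mul, Matrix.mul_one]
    calc gcdMinors k ((Q : Matrix (Fin s) (Fin s) ℤ) * X *
          ((P⁻¹ : Matrix.GeneralLinearGroup (Fin l) ℤ) : Matrix (Fin l) (Fin l) ℤ))
        ∣ gcdMinors k (((Q⁻¹ : Matrix.GeneralLinearGroup (Fin s) ℤ) : Matrix (Fin s) (Fin s) ℤ) *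
            ((Q : Matrix (Fin s) (Fin s) ℤ) * X *
              ((P⁻¹ : Matrix.GeneralLinearGroup (Fin l) ℤ) : Matrix (Fin l) (Fin l) ℤ))) :=
          gcdMinors_dvd_mul_left k _ _
      _ ∣ gcdMinors k (((Q⁻¹ : Matrix.GeneralLinearGroup (Fin s) ℤ) : Matrix (Fin s) (Fin s) ℤ) *
            ((Q : Matrix (Fin s) (Fin s) ℤ) * X *
              ((P⁻¹ : Matrix.GeneralLinearGroup (Fin l) ℤ) : Matrix (Fin l) (Fin l) ℤ)) *
            (P : Matrix (Fin l) (Fin l) ℤ)) := gcdMinors_dvd_mul_right k _ _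
      _ = gcdMinors k X := by rw [e]
  · exact (gcdMinors_dvd_mul_left k _ _).trans (gcdMinors_dvd_mul_right k _ _)


lemma gcdMinors_dvd_erase {s m : ℕ} (k : ℕ) (X : Matrix (Fin s) (Fin (m + 1)) ℤ) :
    gcdMinors k X ∣ gcdMinors k (eraseFirstCol X) := by
  refine Finset.dvd_gcd ?_
  rintro ⟨p1, p2⟩ -
  show gcdMinors k X ∣ ((eraseFirstCol X).submatrix ⇑p1 ⇑p2).det
  have h : (eraseFirstCol X).submatrix ⇑p1 ⇑p2
      = X.submatrix ⇑p1 ⇑((p2 : Fin k ↪ Fin m).trans (Fin.succEmb m)) := by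
    ext i j
    rfl
  rw [h]
  exact Finset.gcd_dvd (Finset.mem_univ (p1, (p2 : Fin k ↪ Fin m).trans (Fin.succEmb m)))

lemma row_expand {s m : ℕ} (X : Matrix (Fin s) (Fin (m + 1)) ℤ) (hX : X *ᵥ 1 = 0)
    (p : Fin s) (jj : Fin (m + 1)) :
    X p jj = ∑ c : Fin m,
      (if (jj : ℕ) = 0 then -1 else if (c : ℕ) + 1 = (jj : ℕ) then 1 else 0) *
        eraseFirstCol X p c := by
  have hsum : X p 0 + ∑ c : Fin m, X p c.succ = 0 := by
    rw [← Fin.sum_univ_succ (fun j => X p j)]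
    have := congrFun hX p
    simpa [Matrix.mulVec, dotProduct] using this
  rcases Nat.eq_zero_or_pos (jj : ℕ) with h0 | hpos
  · have hj : jj = 0 := Fin.ext h0
    subst hj
    simp only [Fin.val_zero, if_true, eq_self_iff_true]
    have : ∑ c : Fin m, (-1 : ℤ) * eraseFirstCol X p c
        = -∑ c : Fin m, X p c.succ := by
      rw [← Finset.sum_neg_distrib]
      refine Finset.sum_congr rfl fun c _ => ?_
      have : eraseFirstCol X p c = X p c.succ := rfl
      rw [this]; ring
    rw [this]
    linarith [hsum]
  · obtain ⟨c0, hc0⟩ : ∃ c0 : Fin m, (c0 : ℕ) + 1 = (jj : ℕ) :=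
      ⟨⟨(jj : ℕ) - 1, by have := jj.isLt; omega⟩, by show (jj : ℕ) - 1 + 1 = (jj : ℕ); omega⟩
    have hj0 : ¬((jj : ℕ) = 0) := by omega
    rw [Finset.sum_eq_single c0]
    · rw [if_neg hj0, if_pos hc0, one_mul]
      have : eraseFirstCol X p c0 = X p ⟨(c0 : ℕ) + 1, by omega⟩ := rfl
      rw [this]
      congr 1
      exact Fin.ext hc0.symm
    · intro c _ hc
      rw [if_neg hj0, if_neg, zero_mul]
      intro h
      exact hc (Fin.ext (by omega))
    · intro h
      exact absurd (Finset.mem_univ c0) h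

lemma gcdMinors_erase_dvd {s m : ℕ} (k : ℕ) (X : Matrix (Fin s) (Fin (m + 1)) ℤ)
    (hX : X *ᵥ 1 = 0) :
    gcdMinors k (eraseFirstCol X) ∣ gcdMinors k X := by
  refine Finset.dvd_gcd ?_
  rintro ⟨p1, p2⟩ -
  show gcdMinors k (eraseFirstCol X) ∣ (X.submatrix ⇑p1 ⇑p2).det
  have h : X.submatrix ⇑p1 ⇑p2
      = (Matrix.of fun i j : Fin k => ∑ c : Fin m,
          (if ((p2 i : Fin (m+1)) : ℕ) = 0 then -1
            else if (c : ℕ) + 1 = ((p2 i : Fin (m+1)) : ℕ) then 1 else 0) *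
          eraseFirstCol X (p1 j) c)ᵀ := by
    ext i j
    exact row_expand X hX (p1 i) (p2 j)
  rw [h, Matrix.det_transpose]
  exact gcdMinors_dvd_det (eraseFirstCol X) p1 _

lemma gcdMinors_erase {s m : ℕ} (k : ℕ) (X : Matrix (Fin s) (Fin (m + 1)) ℤ)
    (hX : X *ᵥ 1 = 0) :
    gcdMinors k X = gcdMinors k (eraseFirstCol X) :=
  Int.dvd_antisymm (gcdMinors_nonneg _ _) (gcdMinors_nonneg _ _)
    (gcdMinors_dvd_erase k X) (gcdMinors_erase_dvd k X hX)


lemma fin_le_strictMono {k : ℕ} (f : Fin k → ℕ) (hf : StrictMono f) :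
    ∀ t : Fin k, (t : ℕ) ≤ f t := by
  intro t
  obtain ⟨n, hn⟩ := t
  induction n with
  | zero => exact Nat.zero_le _
  | succ n ih =>
    have h1 : n < k := by omega
    have h2 := hf (show (⟨n, h1⟩ : Fin k) < ⟨n + 1, hn⟩ from by simp [Fin.lt_def])
    have h3 := ih h1
    have e1 : ((⟨n, h1⟩ : Fin k) : ℕ) = n := rfl
    show n + 1 ≤ f ⟨n + 1, hn⟩
    omega

lemma gcdMinors_isSNF {s l : ℕ} (A : Matrix (Fin s) (Fin l) ℤ) (h : IsSNF A)
    (k : ℕ) (hks : k ≤ s) (hkl : k ≤ l) :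
    gcdMinors k A = ∏ t : Fin k, A (Fin.castLE hks t) (Fin.castLE hkl t) := by
  obtain ⟨hdiag, r, hpos, hdvd⟩ := h
  set D : ℕ → ℤ := fun n => if hn : n < s ∧ n < l then A ⟨n, hn.1⟩ ⟨n, hn.2⟩ else 0 with hD
  have hDchain : ∀ b, b < s → b < l → ∀ a, a ≤ b → D a ∣ D b := by
    intro b
    induction b with
    | zero =>
      intro _ _ a ha
      have : a = 0 := by omega
      subst this; exact dvd_refl _
    | succ b ih =>
      intro hbs hbl a ha
      rcases Nat.lt_or_ge a (b + 1) with h' | h'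
      · have ha' : a ≤ b := by omega
        refine (ih (by omega) (by omega) a ha').trans ?_
        have hdd := hdvd ⟨b, by omega⟩ ⟨b + 1, hbs⟩ ⟨b, by omega⟩ ⟨b + 1, hbl⟩ rfl rfl rfl
        have e1 : D b = A ⟨b, by omega⟩ ⟨b, by omega⟩ := dif_pos ⟨by omega, by omega⟩
        have e2 : D (b + 1) = A ⟨b + 1, hbs⟩ ⟨b + 1, hbl⟩ := dif_pos ⟨hbs, hbl⟩
        rw [e1, e2]; exact hdd
      · have : a = b + 1 := by omega
        subst this; exact dvd_refl _
  have hdnonneg : ∀ t : Fin k, 0 ≤ A (Fin.castLE hks t) (Fin.castLE hkl t) := by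
    intro t
    have hp := hpos (Fin.castLE hks t) (Fin.castLE hkl t) rfl
    rcases Nat.lt_or_ge ((Fin.castLE hks t : Fin s) : ℕ) r with hlt | hge
    · exact (hp.1 hlt).le
    · exact le_of_eq (hp.2 hge).symm
  refine Int.dvd_antisymm (gcdMinors_nonneg _ _) (Finset.prod_nonneg fun t _ => hdnonneg t) ?_ ?_
  · -- gcd divides the product, since the product is itself a minor
    have hsub : A.submatrix ⇑(Fin.castLEEmb hks) ⇑(Fin.castLEEmb hkl)
        = Matrix.diagonal (fun t : Fin k => A (Fin.castLE hks t) (Fin.castLE hkl t)) := by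
      ext i j
      by_cases hij : i = j
      · subst hij
        simp [Matrix.diagonal_apply_eq]
      · rw [Matrix.diagonal_apply_ne _ hij]
        exact hdiag _ _ (fun hh => hij (Fin.ext hh))
    have hg := Finset.gcd_dvd (f := fun p : (Fin k ↪ Fin s) × (Fin k ↪ Fin l) =>
        (A.submatrix ⇑p.1 ⇑p.2).det)
      (Finset.mem_univ ((Fin.castLEEmb hks), (Fin.castLEEmb hkl)))
    simp only at hg
    rw [hsub, Matrix.det_diagonal] at hg
    exact hg
  · -- the product divides every minor
    refine Finset.dvd_gcd ?_
    rintro ⟨p1, p2⟩ -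
    show _ ∣ (A.submatrix ⇑p1 ⇑p2).det
    rw [Matrix.det_apply]
    refine Finset.dvd_sum fun σ _ => ?_
    suffices hd : (∏ t : Fin k, A (Fin.castLE hks t) (Fin.castLE hkl t))
        ∣ ∏ i : Fin k, A.submatrix ⇑p1 ⇑p2 (σ i) i by
      rcases Int.units_eq_one_or (Equiv.Perm.sign σ) with hsgn | hsgn
      · rw [hsgn, one_smul]
        exact hd
      · rw [hsgn, Units.neg_smul, one_smul]
        exact dvd_neg.mpr hd
    by_cases hall : ∀ i : Fin k, ((p1 (σ i) : Fin s) : ℕ) = ((p2 i : Fin l) : ℕ)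
    · have hvs : ∀ i : Fin k, ((p2 i : Fin l) : ℕ) < s := fun i => (hall i) ▸ (p1 (σ i)).isLt
      have hprod : ∀ i : Fin k, A.submatrix ⇑p1 ⇑p2 (σ i) i = D ((p2 i : Fin l) : ℕ) := by
        intro i
        have e : D ((p2 i : Fin l) : ℕ)
            = A ⟨((p2 i : Fin l) : ℕ), hvs i⟩ ⟨((p2 i : Fin l) : ℕ), (p2 i).isLt⟩ :=
          dif_pos ⟨hvs i, (p2 i).isLt⟩
        have e1 : p1 (σ i) = (⟨((p2 i : Fin l) : ℕ), hvs i⟩ : Fin s) := Fin.ext (hall i)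
        have e2 : p2 i = (⟨((p2 i : Fin l) : ℕ), (p2 i).isLt⟩ : Fin l) := Fin.ext rfl
        rw [Matrix.submatrix_apply, e, ← e1, ← e2]
      set v : Fin k → ℕ := fun i => ((p2 i : Fin l) : ℕ) with hv
      have hvinj : Function.Injective v := fun a b hab => p2.injective (Fin.ext hab)
      set T := Finset.image v Finset.univ with hT
      have hcard : T.card = k := by
        rw [hT, Finset.card_image_of_injective _ hvinj, Finset.card_univ, Fintype.card_fin]
      set e := T.orderIsoOfFin hcard with he
      have hmemT : ∀ t : Fin k, ∃ i : Fin k, v i = ((e t : ℕ)) := by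
        intro t
        have h' : ((e t : ℕ)) ∈ Finset.image v Finset.univ := (e t).2
        obtain ⟨i, -, hi⟩ := Finset.mem_image.mp h'
        exact ⟨i, hi⟩
      have hsm : StrictMono (fun t : Fin k => ((e t : ℕ))) := by
        intro a b hab
        exact_mod_cast e.strictMono hab
      have hle : ∀ t : Fin k, (t : ℕ) ≤ ((e t : ℕ)) := fin_le_strictMono _ hsm
      calc (∏ t : Fin k, A (Fin.castLE hks t) (Fin.castLE hkl t))
          = ∏ t : Fin k, D ((t : ℕ)) := by
            refine Finset.prod_congr rfl fun t _ => ?_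
            have hcc : (t : ℕ) < s ∧ (t : ℕ) < l :=
              ⟨lt_of_lt_of_le t.isLt hks, lt_of_lt_of_le t.isLt hkl⟩
            have hrw : D ((t : ℕ)) = A ⟨(t : ℕ), hcc.1⟩ ⟨(t : ℕ), hcc.2⟩ := dif_pos hcc
            rw [hrw]
            rfl
        _ ∣ ∏ t : Fin k, D ((e t : ℕ)) := by
            refine Finset.prod_dvd_prod_of_dvd _ _ fun t _ => ?_
            obtain ⟨i, hi⟩ := hmemT t
            have hbs : ((e t : ℕ)) < s := hi ▸ hvs i
            have hbl : ((e t : ℕ)) < l := hi ▸ (p2 i).isLt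
            exact hDchain _ hbs hbl _ (hle t)
        _ = ∏ x : T, D (x : ℕ) := Equiv.prod_comp e.toEquiv (fun x : T => D (x : ℕ))
        _ = ∏ n ∈ T, D n := Finset.prod_coe_sort T D
        _ = ∏ i : Fin k, D (v i) := by
            rw [hT, Finset.prod_image (fun a _ b _ hab => hvinj hab)]
        _ = ∏ i : Fin k, A.submatrix ⇑p1 ⇑p2 (σ i) i := by
            exact Finset.prod_congr rfl fun i _ => (hprod i).symm
    · push_neg at hall
      obtain ⟨i, hi⟩ := hall
      have hz : A.submatrix ⇑p1 ⇑p2 (σ i) i = 0 := hdiag _ _ hi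
      have hz' : ∏ i : Fin k, A.submatrix ⇑p1 ⇑p2 (σ i) i = 0 :=
        Finset.prod_eq_zero (Finset.mem_univ i) hz
      rw [hz']
      exact dvd_zero _

lemma rank_erase {s m : ℕ} (X : Matrix (Fin s) (Fin (m + 1)) ℤ) (hX : X *ᵥ 1 = 0) :
    X.rank = (eraseFirstCol X).rank := by
  have hspan : Submodule.span ℤ (Set.range Xᵀ)
      = Submodule.span ℤ (Set.range (eraseFirstCol X)ᵀ) := by
    apply le_antisymm
    · rw [Submodule.span_le]
      rintro _ ⟨j, rfl⟩
      simp only [SetLike.mem_coe]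
      refine Fin.cases ?_ ?_ j
      · have hcol : Xᵀ 0 = -∑ c : Fin m, (eraseFirstCol X)ᵀ c := by
          funext p
          have hsum : X p 0 + ∑ c : Fin m, X p c.succ = 0 := by
            rw [← Fin.sum_univ_succ (fun j => X p j)]
            have := congrFun hX p
            simpa [Matrix.mulVec, dotProduct] using this
          have h2 : (-∑ c : Fin m, (eraseFirstCol X)ᵀ c) p
              = -∑ c : Fin m, X p c.succ := by
            simp only [Pi.neg_apply, Finset.sum_apply]
            congr 1
            exact Finset.sum_apply _ _ _
          rw [h2]
          show X p 0 = _
          linarith [hsum]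
        rw [hcol]
        exact Submodule.neg_mem _ (Submodule.sum_mem _ fun c _ =>
          Submodule.subset_span ⟨c, rfl⟩)
      · intro c
        exact Submodule.subset_span ⟨c, rfl⟩
    · rw [Submodule.span_le]
      rintro _ ⟨c, rfl⟩
      simp only [SetLike.mem_coe]
      exact Submodule.subset_span ⟨c.succ, rfl⟩
  rw [Matrix.rank_eq_finrank_span_cols, Matrix.rank_eq_finrank_span_cols]
  exact congrArg (fun S : Submodule ℤ (Fin s → ℤ) => Module.finrank ℤ S) hspan

/-- For a matrix `X` all of whose rows sum to zero, the gcd of the `k×k` minors of `X`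
equals the gcd of the `k×k` minors of the matrix `X'` obtained by deleting the first column
of `X`, for every `k ≥ 1`. Consequently `X` and `X'` have the same rank and the same
invariant factors (equal diagonals of their Smith normal forms). -/
theorem gcd_minors_eraseFirstCol (s l : ℕ) (hs : 0 < s) (hl : 2 ≤ l)
    (X : Matrix (Fin s) (Fin l) ℤ) (hX : X *ᵥ 1 = 0) :
    (∀ k : ℕ, 1 ≤ k → gcdMinors k X = gcdMinors k (eraseFirstCol X)) ∧
    X.rank = (eraseFirstCol X).rank ∧
    (∀ (Q₁ : Matrix.GeneralLinearGroup (Fin s) ℤ)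
        (P₁ : Matrix.GeneralLinearGroup (Fin l) ℤ)
        (Q₂ : Matrix.GeneralLinearGroup (Fin s) ℤ)
        (P₂ : Matrix.GeneralLinearGroup (Fin (l - 1)) ℤ),
      IsSNF ((Q₁ : Matrix (Fin s) (Fin s) ℤ) * X *
        ((P₁⁻¹ : Matrix.GeneralLinearGroup (Fin l) ℤ) : Matrix (Fin l) (Fin l) ℤ)) →
      IsSNF ((Q₂ : Matrix (Fin s) (Fin s) ℤ) * eraseFirstCol X *
        ((P₂⁻¹ : Matrix.GeneralLinearGroup (Fin (l - 1)) ℤ) :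
          Matrix (Fin (l - 1)) (Fin (l - 1)) ℤ)) →
      ∀ (i : ℕ) (his : i < s) (hil : i < l - 1),
        ((Q₁ : Matrix (Fin s) (Fin s) ℤ) * X *
            ((P₁⁻¹ : Matrix.GeneralLinearGroup (Fin l) ℤ) : Matrix (Fin l) (Fin l) ℤ))
            ⟨i, his⟩ ⟨i, by omega⟩ =
          ((Q₂ : Matrix (Fin s) (Fin s) ℤ) * eraseFirstCol X *
            ((P₂⁻¹ : Matrix.GeneralLinearGroup (Fin (l - 1)) ℤ) :
              Matrix (Fin (l - 1)) (Fin (l - 1)) ℤ)) ⟨i, his⟩ ⟨i, hil⟩) := by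
  obtain ⟨m, rfl⟩ : ∃ m, l = m + 1 := ⟨l - 1, by omega⟩
  refine ⟨fun k _ => gcdMinors_erase k X hX, rank_erase X hX, ?_⟩
  intro Q₁ P₁ Q₂ P₂ h1 h2 i his hil
  have him : i < m := hil
  set A₁ := (Q₁ : Matrix (Fin s) (Fin s) ℤ) * X *
    ((P₁⁻¹ : Matrix.GeneralLinearGroup (Fin (m + 1)) ℤ) :
      Matrix (Fin (m + 1)) (Fin (m + 1)) ℤ) with hA1
  set A₂ := (Q₂ : Matrix (Fin s) (Fin s) ℤ) * eraseFirstCol X *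
    ((P₂⁻¹ : Matrix.GeneralLinearGroup (Fin (m + 1 - 1)) ℤ) :
      Matrix (Fin (m + 1 - 1)) (Fin (m + 1 - 1)) ℤ) with hA2
  have hg : ∀ k : ℕ, gcdMinors k A₁ = gcdMinors k A₂ := by
    intro k
    rw [hA1, hA2, gcdMinors_units_eq k Q₁ P₁ X,
      gcdMinors_units_eq k Q₂ P₂ (eraseFirstCol X), ← gcdMinors_erase k X hX]
  have heqprod : ∀ k : ℕ, (hk1 : k ≤ s) → (hk2 : k ≤ m) →
      (∏ t : Fin k, A₁ (Fin.castLE hk1 t) (Fin.castLE (by omega : k ≤ m + 1) t))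
        = ∏ t : Fin k, A₂ (Fin.castLE hk1 t) (Fin.castLE (by omega : k ≤ m + 1 - 1) t) := by
    intro k hk1 hk2
    rw [← gcdMinors_isSNF A₁ h1 k hk1 (by omega),
      ← gcdMinors_isSNF A₂ h2 k hk1 (by omega), hg k]
  have Ei1 : (∏ t : Fin i, A₁ ⟨t.val, by omega⟩ ⟨t.val, by omega⟩) *
        A₁ ⟨i, his⟩ ⟨i, by omega⟩
      = (∏ t : Fin i, A₂ ⟨t.val, by omega⟩ ⟨t.val, by omega⟩) *
        A₂ ⟨i, his⟩ ⟨i, hil⟩ := by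
    have h := heqprod (i + 1) (by omega) (by omega)
    rw [Fin.prod_univ_castSucc, Fin.prod_univ_castSucc] at h
    exact h
  have Ei : (∏ t : Fin i, A₁ ⟨t.val, by omega⟩ ⟨t.val, by omega⟩)
      = ∏ t : Fin i, A₂ ⟨t.val, by omega⟩ ⟨t.val, by omega⟩ :=
    heqprod i (by omega) (by omega)
  by_cases hc : (∏ t : Fin i, A₁ (⟨t.val, by omega⟩ : Fin s) ⟨t.val, by omega⟩) = 0
  · obtain ⟨hdiag1, r₁, hpos1, hdvd1⟩ := h1
    obtain ⟨hdiag2, r₂, hpos2, hdvd2⟩ := h2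
    obtain ⟨t, -, hz1⟩ := Finset.prod_eq_zero_iff.mp hc
    have hr1 : r₁ ≤ (t : ℕ) := by
      by_contra hcon
      exact absurd hz1 (ne_of_gt ((hpos1 ⟨t.val, by omega⟩ ⟨t.val, by omega⟩ rfl).1
        (by show (t : ℕ) < r₁; omega)))
    have hz1' : A₁ ⟨i, his⟩ ⟨i, by omega⟩ = 0 :=
      (hpos1 ⟨i, his⟩ ⟨i, by omega⟩ rfl).2 (by show r₁ ≤ i; omega)
    have hc2 : (∏ t : Fin i, A₂ (⟨t.val, by omega⟩ : Fin s) ⟨t.val, by omega⟩) = 0 := by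
      rw [← Ei]; exact hc
    obtain ⟨u, -, hz2⟩ := Finset.prod_eq_zero_iff.mp hc2
    have hr2 : r₂ ≤ (u : ℕ) := by
      by_contra hcon
      exact absurd hz2 (ne_of_gt ((hpos2 ⟨u.val, by omega⟩ ⟨u.val, by omega⟩ rfl).1
        (by show (u : ℕ) < r₂; omega)))
    have hz2' : A₂ ⟨i, his⟩ ⟨i, hil⟩ = 0 :=
      (hpos2 ⟨i, his⟩ ⟨i, hil⟩ rfl).2 (by show r₂ ≤ i; omega)
    rw [hz1', hz2']
  · have Ei1' : (∏ t : Fin i, A₁ ⟨t.val, by omega⟩ ⟨t.val, by omega⟩) *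
          A₁ ⟨i, his⟩ ⟨i, by omega⟩
        = (∏ t : Fin i, A₁ ⟨t.val, by omega⟩ ⟨t.val, by omega⟩) *
          A₂ ⟨i, his⟩ ⟨i, hil⟩ := by
      rw [Ei1, ← Ei]
    exact mul_left_cancel₀ hc Ei1'
end
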